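/- arXiv:1811.04559 — 10 statements merged into one kernel-verified Lean document; each statement's English description precedes it below -/
import Mathlib

section
/- Let (L₁, ε₁, ∧_{ε₁}, ∨_{ε₁}) and (L₂, ε₂, ∧_{ε₂}, ∨_{ε₂}) be canonical ℰ-lattices and let f : L₁ → L₂ be a map. Then f is an ℰ-lattice isomorphism if and only if: (i) f maps Fix ε₁ into Fix ε₂ and its restriction f₀ : Fix ε₁ → Fix ε₂ is a lattice isomorphism (a bijection preserving the restricted operations ∧ and ∨); and (ii) for each a ∈ Fix ε₁, f maps the class [a] bijectively onto the class [f(a)]. -/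
/-- A canonical ℰ-lattice: a set `L` with a map `eps : L → L` and two associative,
commutative binary operations satisfying `a ∧ a = a ∨ a = ε a`,
the absorption laws `a ∧ (a ∨ b) = a ∨ (a ∧ b) = ε a`, and (canonicity)
all meets and joins are fixed points of `eps`. -/
structure CELattice (L : Type*) where
  eps : L → L
  meet : L → L → L
  join : L → L → L
  meet_assoc : ∀ a b c, meet a (meet b c) = meet (meet a b) c
  join_assoc : ∀ a b c, join a (join b c) = join (join a b) c
  meet_comm : ∀ a b, meet a b = meet b a
  join_comm : ∀ a b, join a b = join b a
  meet_self : ∀ a, meet a a = eps a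
  join_self : ∀ a, join a a = eps a
  meet_absorb : ∀ a b, meet a (join a b) = eps a
  join_absorb : ∀ a b, join a (meet a b) = eps a
  meet_canonical : ∀ a b, eps (meet a b) = meet a b
  join_canonical : ∀ a b, eps (join a b) = join a b

namespace CELattice

variable {L : Type*}

/-- The set of fixed points of `eps`. -/
def Fix (E : CELattice L) : Set L := {a | E.eps a = a}

/-- The class `[a] = {b | ε b = ε a}`. -/
def cls (E : CELattice L) (a : L) : Set L := {b | E.eps b = E.eps a}

/-- The fixed points of `eps`, as a type. -/
abbrev FixT (E : CELattice L) : Type _ := {a : L // E.eps a = a}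

/-- An ℰ-lattice isomorphism: a bijection commuting with `eps` and preserving
meets and joins. -/
def IsEIso {L₁ L₂ : Type*} (E₁ : CELattice L₁) (E₂ : CELattice L₂) (f : L₁ → L₂) : Prop :=
  Function.Bijective f ∧ (∀ a, f (E₁.eps a) = E₂.eps (f a)) ∧
    (∀ a b, f (E₁.meet a b) = E₂.meet (f a) (f b)) ∧
    (∀ a b, f (E₁.join a b) = E₂.join (f a) (f b))

end CELattice

namespace CELattice

variable {L : Type*} (E : CELattice L)

lemma eps_idem (a : L) : E.eps (E.eps a) = E.eps a := by
  rw [← E.meet_self a, E.meet_canonical]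

lemma eps_mem_fix (a : L) : E.eps a ∈ E.Fix := E.eps_idem a

lemma meet_eps (a b : L) : E.meet a b = E.meet (E.eps a) (E.eps b) := by
  rw [← E.meet_self a, ← E.meet_self b]
  conv_lhs => rw [← E.meet_canonical a b, ← E.meet_self (E.meet a b)]
  rw [← E.meet_assoc a b (E.meet a b), E.meet_assoc b a b, E.meet_comm b a,
    ← E.meet_assoc a b b, E.meet_assoc]

lemma join_eps (a b : L) : E.join a b = E.join (E.eps a) (E.eps b) := by
  rw [← E.join_self a, ← E.join_self b]
  conv_lhs => rw [← E.join_canonical a b, ← E.join_self (E.join a b)]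
  rw [← E.join_assoc a b (E.join a b), E.join_assoc b a b, E.join_comm b a,
    ← E.join_assoc a b b, E.join_assoc]

end CELattice

open CELattice in
/-- Proposition 1 (2.1): a map between canonical ℰ-lattices is an ℰ-lattice isomorphism
iff it restricts to a lattice isomorphism `Fix ε₁ → Fix ε₂` and maps each class `[a]`
(`a ∈ Fix ε₁`) bijectively onto `[f a]`. -/
theorem eiso_iff_restrictions {L₁ L₂ : Type*} [Nonempty L₁] [Nonempty L₂]
    (E₁ : CELattice L₁) (E₂ : CELattice L₂) (f : L₁ → L₂) :
    IsEIso E₁ E₂ f ↔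
      ((Set.MapsTo f E₁.Fix E₂.Fix ∧ Set.BijOn f E₁.Fix E₂.Fix ∧
        (∀ a ∈ E₁.Fix, ∀ b ∈ E₁.Fix, f (E₁.meet a b) = E₂.meet (f a) (f b)) ∧
        (∀ a ∈ E₁.Fix, ∀ b ∈ E₁.Fix, f (E₁.join a b) = E₂.join (f a) (f b))) ∧
       (∀ a ∈ E₁.Fix, Set.BijOn f (E₁.cls a) (E₂.cls (f a)))) := by

  constructor
  · rintro ⟨hbij, heps, hmeet, hjoin⟩
    have hmaps : Set.MapsTo f E₁.Fix E₂.Fix := by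
      intro a ha
      show E₂.eps (f a) = f a
      rw [← heps, ha]
    refine ⟨⟨hmaps, ⟨hmaps, hbij.injective.injOn, ?_⟩, fun a _ b _ => hmeet a b,
      fun a _ b _ => hjoin a b⟩, ?_⟩
    · intro b hb
      obtain ⟨a, rfl⟩ := hbij.surjective b
      exact ⟨E₁.eps a, E₁.eps_mem_fix a, by rw [heps, hb]⟩
    · intro a _
      refine ⟨?_, hbij.injective.injOn, ?_⟩
      · intro b hb
        show E₂.eps (f b) = E₂.eps (f a)
        rw [← heps, ← heps, hb]
      · intro c hc
        obtain ⟨b, rfl⟩ := hbij.surjective c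
        refine ⟨b, ?_, rfl⟩
        have : f (E₁.eps b) = f (E₁.eps a) := by rw [heps, heps]; exact hc
        exact hbij.injective this
  · rintro ⟨⟨hmaps, hbijFix, hmeet, hjoin⟩, hcls⟩
    have heps : ∀ a, f (E₁.eps a) = E₂.eps (f a) := by
      intro a
      have he : E₁.eps a ∈ E₁.Fix := E₁.eps_mem_fix a
      have h1 : a ∈ E₁.cls (E₁.eps a) := (E₁.eps_idem a).symm
      have h2 : E₂.eps (f a) = E₂.eps (f (E₁.eps a)) := (hcls _ he).mapsTo h1
      have h3 : E₂.eps (f (E₁.eps a)) = f (E₁.eps a) := hmaps he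
      rw [h2]; exact h3.symm
    have hinj : Function.Injective f := by
      intro a b hab
      have h1 : f (E₁.eps a) = f (E₁.eps b) := by rw [heps, heps, hab]
      have h2 : E₁.eps a = E₁.eps b :=
        hbijFix.injOn (E₁.eps_mem_fix a) (E₁.eps_mem_fix b) h1
      have ha : a ∈ E₁.cls (E₁.eps a) := (E₁.eps_idem a).symm
      have hb : b ∈ E₁.cls (E₁.eps a) := by
        show E₁.eps b = E₁.eps (E₁.eps a)
        rw [E₁.eps_idem, h2]
      exact (hcls _ (E₁.eps_mem_fix a)).injOn ha hb hab
    have hsurj : Function.Surjective f := by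
      intro c
      obtain ⟨e, he, hfe⟩ := hbijFix.surjOn (E₂.eps_mem_fix c)
      have hc : c ∈ E₂.cls (f e) := by
        show E₂.eps c = E₂.eps (f e)
        rw [hfe, E₂.eps_idem]
      obtain ⟨a, _, ha⟩ := (hcls e he).surjOn hc
      exact ⟨a, ha⟩
    refine ⟨⟨hinj, hsurj⟩, heps, ?_, ?_⟩
    · intro a b
      rw [E₁.meet_eps a b,
        hmeet _ (E₁.eps_mem_fix a) _ (E₁.eps_mem_fix b), heps, heps, ← E₂.meet_eps]
    · intro a b
      rw [E₁.join_eps a b,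
        hjoin _ (E₁.eps_mem_fix a) _ (E₁.eps_mem_fix b), heps, heps, ← E₂.join_eps]
end

section
/- Let (L, ε, ∧_ε, ∨_ε) be a canonical ℰ-lattice. Then the restriction map ψ : Aut_ℰ(L) → Aut(Fix ε), f ↦ f|_{Fix ε}, is a group homomorphism whose kernel is Aut⁰_ℰ(L) = {f ∈ Aut_ℰ(L) : f(a) = a for all a ∈ Fix ε}; in particular Aut⁰_ℰ(L) is a normal subgroup of Aut_ℰ(L), and Aut⁰_ℰ(L) is isomorphic, as a group, to the direct product ∏_{a ∈ Fix ε} S'([a]), where S'([a]) is the subgroup of the symmetric group on the class [a] consisting of the permutations of [a] fixing a. -/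
namespace CELattice

variable {L : Type*}

/-- The group `Aut_ℰ(L)` of ℰ-lattice automorphisms of a canonical ℰ-lattice,
as a subgroup of the symmetric group on `L`. -/
def EAut (E : CELattice L) : Subgroup (Equiv.Perm L) where
  carrier := {f : Equiv.Perm L | (∀ a, f (E.eps a) = E.eps (f a)) ∧
    (∀ a b, f (E.meet a b) = E.meet (f a) (f b)) ∧
    (∀ a b, f (E.join a b) = E.join (f a) (f b))}
  one_mem' := by simp
  mul_mem' := by
    rintro f g ⟨hf1, hf2, hf3⟩ ⟨hg1, hg2, hg3⟩
    refine ⟨fun a => ?_, fun a b => ?_, fun a b => ?_⟩ <;>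
      simp [Equiv.Perm.mul_apply, hg1, hg2, hg3, hf1, hf2, hf3]
  inv_mem' := by
    rintro f ⟨hf1, hf2, hf3⟩
    refine ⟨fun a => ?_, fun a b => ?_, fun a b => ?_⟩ <;>
      (apply f.injective;
       simp [hf1, hf2, hf3, Equiv.apply_symm_apply])

/-- The meet of two fixed points, as a fixed point (the lattice operation on `Fix ε`). -/
def fixMeet (E : CELattice L) (a b : E.FixT) : E.FixT :=
  ⟨E.meet a.1 b.1, E.meet_canonical _ _⟩

/-- The join of two fixed points, as a fixed point (the lattice operation on `Fix ε`). -/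
def fixJoin (E : CELattice L) (a b : E.FixT) : E.FixT :=
  ⟨E.join a.1 b.1, E.join_canonical _ _⟩

/-- The group `Aut(Fix ε)` of lattice automorphisms of the lattice of fixed points. -/
def AutFix (E : CELattice L) : Subgroup (Equiv.Perm E.FixT) where
  carrier := {σ : Equiv.Perm E.FixT | (∀ a b, σ (E.fixMeet a b) = E.fixMeet (σ a) (σ b)) ∧
    (∀ a b, σ (E.fixJoin a b) = E.fixJoin (σ a) (σ b))}
  one_mem' := by simp
  mul_mem' := by
    rintro f g ⟨hf1, hf2⟩ ⟨hg1, hg2⟩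
    refine ⟨fun a b => ?_, fun a b => ?_⟩ <;>
      simp [Equiv.Perm.mul_apply, hg1, hg2, hf1, hf2]
  inv_mem' := by
    rintro f ⟨hf1, hf2⟩
    refine ⟨fun a b => ?_, fun a b => ?_⟩ <;>
      (apply f.injective; simp [hf1, hf2, Equiv.apply_symm_apply])

/-- `S'([a])`: the subgroup of the symmetric group on the class `[a]`
consisting of the permutations fixing `a`. -/
def Sprime (E : CELattice L) (a : L) : Subgroup (Equiv.Perm {b : L // E.eps b = E.eps a}) where
  carrier := {σ | σ ⟨a, rfl⟩ = ⟨a, rfl⟩}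
  one_mem' := by simp
  mul_mem' := by
    intro f g hf hg
    simp only [Set.mem_setOf_eq] at *
    simp [Equiv.Perm.mul_apply, hg, hf]
  inv_mem' := by
    intro f hf
    simp only [Set.mem_setOf_eq] at *
    rw [Equiv.Perm.inv_eq_iff_eq, hf]

end CELattice

namespace CELattice

variable {L : Type*} (E : CELattice L)

lemma meet_congr {a a' b b' : L} (h1 : E.eps a = E.eps a') (h2 : E.eps b = E.eps b') :
    E.meet a b = E.meet a' b' := by
  rw [E.meet_eps a b, h1, h2, ← E.meet_eps]

lemma join_congr {a a' b b' : L} (h1 : E.eps a = E.eps a') (h2 : E.eps b = E.eps b') :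
    E.join a b = E.join a' b' := by
  rw [E.join_eps a b, h1, h2, ← E.join_eps]

lemma fixIff (f : E.EAut) : ∀ x : L,
    E.eps x = x ↔ E.eps ((f : Equiv.Perm L) x) = (f : Equiv.Perm L) x := by
  intro x
  constructor
  · intro h; rw [← f.2.1, h]
  · intro h; apply (f : Equiv.Perm L).injective; rw [f.2.1, h]

/-- The restriction homomorphism. -/
def psi : E.EAut →* E.AutFix where
  toFun f := ⟨Equiv.Perm.subtypePerm (f : Equiv.Perm L) (fun x => (E.fixIff f x).symm), by
    constructor <;> intro a b <;> apply Subtype.ext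
    · exact f.2.2.1 a.1 b.1
    · exact f.2.2.2 a.1 b.1⟩
  map_one' := by apply Subtype.ext; ext a; rfl
  map_mul' f g := by apply Subtype.ext; ext a; rfl

lemma psi_apply (f : E.EAut) (a : E.FixT) :
    ((E.psi f : Equiv.Perm E.FixT) a : L) = (f : Equiv.Perm L) (a : L) := rfl

lemma mem_ker_iff (f : E.EAut) :
    f ∈ (E.psi).ker ↔ ∀ a : L, E.eps a = a → (f : Equiv.Perm L) a = a := by
  simp only [MonoidHom.mem_ker]
  constructor
  · intro h a ha
    have := congrArg (fun σ : E.AutFix => ((σ : Equiv.Perm E.FixT) ⟨a, ha⟩ : L)) h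
    simpa [psi_apply] using this
  · intro h
    apply Subtype.ext; ext a
    exact h a.1 a.2

variable {E}

/-- The action of a family of class permutations on `L`. -/
def gmap (σ : ∀ a : E.FixT, E.Sprime (a : L)) (b : L) : L :=
  ((σ ⟨E.eps b, E.eps_idem b⟩).val ⟨b, (E.eps_idem b).symm⟩).val

lemma eps_gmap (σ : ∀ a : E.FixT, E.Sprime (a : L)) (b : L) :
    E.eps (gmap σ b) = E.eps b := by
  have h := ((σ ⟨E.eps b, E.eps_idem b⟩).val ⟨b, (E.eps_idem b).symm⟩).2
  exact h.trans (E.eps_idem b)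

lemma gmap_eq (σ : ∀ a : E.FixT, E.Sprime (a : L)) (x : E.FixT) (b : L)
    (hb : E.eps b = x.1) :
    gmap σ b = ((σ x).val ⟨b, by rw [hb]; exact x.2.symm⟩).val := by
  obtain ⟨x, hx⟩ := x
  dsimp at hb
  subst hb
  rfl

lemma gmap_fix (σ : ∀ a : E.FixT, E.Sprime (a : L)) (b : L) (hb : E.eps b = b) :
    gmap σ b = b := by
  rw [gmap_eq σ ⟨b, hb⟩ b hb]
  have hσ := (σ ⟨b, hb⟩).2
  exact congrArg Subtype.val hσ

lemma gmap_mul (σ τ : ∀ a : E.FixT, E.Sprime (a : L)) (b : L) :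
    gmap σ (gmap τ b) = gmap (σ * τ) b := by
  rw [gmap_eq σ ⟨E.eps b, E.eps_idem b⟩ (gmap τ b) (eps_gmap τ b)]
  rfl

lemma gmap_one (b : L) : gmap (1 : ∀ a : E.FixT, E.Sprime (a : L)) b = b := rfl

/-- The permutation of `L` induced by a family of class permutations. -/
def gperm (σ : ∀ a : E.FixT, E.Sprime (a : L)) : Equiv.Perm L where
  toFun := gmap σ
  invFun := gmap σ⁻¹
  left_inv b := by rw [gmap_mul, inv_mul_cancel, gmap_one]
  right_inv b := by rw [gmap_mul, mul_inv_cancel, gmap_one]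

lemma gperm_mem (σ : ∀ a : E.FixT, E.Sprime (a : L)) : gperm σ ∈ E.EAut := by
  refine ⟨fun a => ?_, fun a b => ?_, fun a b => ?_⟩
  · show gmap σ (E.eps a) = E.eps (gmap σ a)
    rw [gmap_fix σ _ (E.eps_idem a), eps_gmap]
  · show gmap σ (E.meet a b) = E.meet (gmap σ a) (gmap σ b)
    rw [gmap_fix σ _ (E.meet_canonical a b)]
    exact (E.meet_congr (eps_gmap σ a) (eps_gmap σ b)).symm
  · show gmap σ (E.join a b) = E.join (gmap σ a) (gmap σ b)
    rw [gmap_fix σ _ (E.join_canonical a b)]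
    exact (E.join_congr (eps_gmap σ a) (eps_gmap σ b)).symm

variable (E)

lemma classIff (f : (E.psi).ker) (a : E.FixT) : ∀ x : L,
    E.eps x = E.eps (a : L) ↔
      E.eps (((f : E.EAut) : Equiv.Perm L) x) = E.eps (a : L) := by
  intro x
  have hker := (E.mem_ker_iff (f : E.EAut)).1 f.2
  have heps := (f : E.EAut).2.1
  constructor
  · intro h
    rw [← heps x, h, a.2]
    exact hker _ a.2
  · intro h
    have : ((f : E.EAut) : Equiv.Perm L) (E.eps x) = ((f : E.EAut) : Equiv.Perm L) (a : L) := by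
      rw [heps, h, a.2, hker _ a.2]
    have := ((f : E.EAut) : Equiv.Perm L).injective this
    rw [this, a.2]

/-- The kernel of the restriction homomorphism is isomorphic to the product of the
groups `S'([a])`. -/
def kerEquiv : (E.psi).ker ≃* ∀ a : E.FixT, E.Sprime (a : L) where
  toFun f a := ⟨Equiv.Perm.subtypePerm (((f : E.EAut) : Equiv.Perm L)) (fun x => (E.classIff f a x).symm), by
    apply Subtype.ext
    exact (E.mem_ker_iff (f : E.EAut)).1 f.2 (a : L) a.2⟩
  invFun σ := ⟨⟨gperm σ, gperm_mem σ⟩, by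
    rw [E.mem_ker_iff]
    exact fun a ha => gmap_fix σ a ha⟩
  left_inv f := by
    apply Subtype.ext; apply Subtype.ext; ext b; rfl
  right_inv σ := by
    funext a
    apply Subtype.ext; ext c
    show gmap σ c.1 = ((σ a).val c).val
    rw [gmap_eq σ a c.1 (c.2.trans a.2)]
  map_mul' f g := by
    funext a
    apply Subtype.ext; ext c; rfl

end CELattice


open CELattice in
/-- Proposition 2 (2.1), kernel part: for a canonical ℰ-lattice `L`, the restriction map
`ψ : Aut_ℰ(L) → Aut(Fix ε)` is a group homomorphism whose kernel is
`Aut⁰_ℰ(L) = {f | f fixes Fix ε pointwise}`; this kernel is a normal subgroup of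
`Aut_ℰ(L)` and is isomorphic to the direct product `∏_{a ∈ Fix ε} S'([a])`. -/
theorem restriction_hom_ker {L : Type*} [Nonempty L] (E : CELattice L) :
    ∃ ψ : EAut E →* AutFix E,
      (∀ (f : EAut E) (a : E.FixT),
        (((ψ f : Equiv.Perm E.FixT) a : L)) = (f : Equiv.Perm L) (a : L)) ∧
      (∀ f : EAut E,
        f ∈ ψ.ker ↔ ∀ a : L, E.eps a = a → (f : Equiv.Perm L) a = a) ∧
      ψ.ker.Normal ∧
      Nonempty (ψ.ker ≃* ∀ a : E.FixT, Sprime E (a : L)) := by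
  refine ⟨E.psi, fun f a => rfl, fun f => E.mem_ker_iff f, inferInstance, ⟨E.kerEquiv⟩⟩
end

section
/- Let G₁ and G₂ be groups and f : L(G₁) → L(G₂) an ℰL-isomorphism. Then f maps normal subgroups of G₁ to normal subgroups of G₂ and its restriction to N(G₁) is a lattice isomorphism from the lattice N(G₁) of normal subgroups of G₁ onto the lattice N(G₂) of normal subgroups of G₂. -/
/-- An ℰL-isomorphism from a group `G₁` to a group `G₂`: a bijection between the subgroup
lattices which commutes with taking normal cores and preserves the ℰ-lattice meet
`H ∧ K = H_G ∩ K_G` and join `H ∨ K = H_G K_G` (the join of the two normal cores). -/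
def IsELIso {G₁ G₂ : Type*} [Group G₁] [Group G₂] (f : Subgroup G₁ → Subgroup G₂) : Prop :=
  Function.Bijective f ∧
    (∀ H : Subgroup G₁, f H.normalCore = (f H).normalCore) ∧
    (∀ H K : Subgroup G₁,
      f (H.normalCore ⊓ K.normalCore) = (f H).normalCore ⊓ (f K).normalCore) ∧
    (∀ H K : Subgroup G₁,
      f (H.normalCore ⊔ K.normalCore) = (f H).normalCore ⊔ (f K).normalCore)

/-- An ℰL-isomorphism maps normal subgroups to normal subgroups and restricts to a
lattice isomorphism `N(G₁) → N(G₂)` between the lattices of normal subgroups. -/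
theorem eliso_normal_restriction {G₁ G₂ : Type*} [Group G₁] [Group G₂]
    (f : Subgroup G₁ → Subgroup G₂) (hf : IsELIso f) :
    (∀ H : Subgroup G₁, H.Normal → (f H).Normal) ∧
    Set.BijOn f {H : Subgroup G₁ | H.Normal} {H : Subgroup G₂ | H.Normal} ∧
    (∀ H K : Subgroup G₁, H.Normal → K.Normal → f (H ⊓ K) = f H ⊓ f K) ∧
    (∀ H K : Subgroup G₁, H.Normal → K.Normal → f (H ⊔ K) = f H ⊔ f K) := by
  obtain ⟨hbij, hcore, hinf, hsup⟩ := hf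
  have hnorm : ∀ H : Subgroup G₁, H.Normal → (f H).Normal := by
    intro H hH
    have : f H = (f H).normalCore := by
      rw [← hcore]
      congr 1
      exact (@Subgroup.normalCore_eq_self _ _ H hH).symm
    rw [this]
    exact Subgroup.normalCore_normal _
  refine ⟨hnorm, ⟨fun H hH => hnorm H hH, fun H hH K hK hHK => hbij.1 hHK,
    fun K hK => ?_⟩, ?_, ?_⟩
  · obtain ⟨H, rfl⟩ := hbij.2 K
    refine ⟨H, ?_, rfl⟩
    have : f H.normalCore = f H := by
      rw [hcore, @Subgroup.normalCore_eq_self _ _ _ (hK)]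
    have := hbij.1 this
    show H.Normal
    rw [← this]
    exact Subgroup.normalCore_normal _
  · intro H K hH hK
    have := hinf H K
    rwa [@Subgroup.normalCore_eq_self _ _ _ (hH), @Subgroup.normalCore_eq_self _ _ _ (hK),
      @Subgroup.normalCore_eq_self _ _ _ (hnorm H hH),
      @Subgroup.normalCore_eq_self _ _ _ (hnorm K hK)] at this
  · intro H K hH hK
    have := hsup H K
    rwa [@Subgroup.normalCore_eq_self _ _ _ (hH), @Subgroup.normalCore_eq_self _ _ _ (hK),
      @Subgroup.normalCore_eq_self _ _ _ (hnorm H hH),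
      @Subgroup.normalCore_eq_self _ _ _ (hnorm K hK)] at this
end

section
/- Let G₁ and G₂ be groups and suppose there exists an ℰL-isomorphism f : L(G₁) → L(G₂). If G₁ is a simple group, then G₂ is a simple group. -/
/-- Proposition 1 (2.2), simple case: if `G₁` and `G₂` are ℰL-isomorphic and `G₁` is
simple, then `G₂` is simple. -/
theorem simple_of_eliso {G₁ G₂ : Type*} [Group G₁] [Group G₂]
    (hf : ∃ f : Subgroup G₁ → Subgroup G₂, IsELIso f)
    (h : IsSimpleGroup G₁) : IsSimpleGroup G₂ := by
  obtain ⟨f, hbij, hcore, -, -⟩ := hf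
  -- every normal subgroup of G₂ is f ⊥ or f ⊤
  have key : ∀ N : Subgroup G₂, N.Normal → N = f ⊥ ∨ N = f ⊤ := by
    intro N hN
    obtain ⟨H, rfl⟩ := hbij.2 N
    have h1 : f H.normalCore = f H := by
      rw [hcore]
      exact @Subgroup.normalCore_eq_self _ _ (f H) hN
    have h2 : H.normalCore = H := hbij.1 h1
    rcases h.eq_bot_or_eq_top_of_normal H
        (h2 ▸ Subgroup.normalCore_normal H) with hb | ht
    · exact Or.inl (by rw [hb])
    · exact Or.inr (by rw [ht])
  have hne : f (⊥ : Subgroup G₁) ≠ f ⊤ := fun e =>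
    (bot_ne_top : (⊥ : Subgroup G₁) ≠ ⊤) (hbij.1 e)
  have hnt : Nontrivial G₂ := by
    by_contra hc
    have : Subsingleton G₂ := not_nontrivial_iff_subsingleton.mp hc
    exact hne (Subsingleton.elim _ _)
  refine ⟨fun N hN => ?_⟩
  rcases key ⊥ (by infer_instance) with hb | hb <;>
    rcases key ⊤ (by infer_instance) with ht | ht <;>
    rcases key N hN with hn | hn
  · exact absurd (hb.trans ht.symm) bot_ne_top
  · exact absurd (hb.trans ht.symm) bot_ne_top
  · exact Or.inl (hn.trans hb.symm)
  · exact Or.inr (hn.trans ht.symm)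
  · exact Or.inr (hn.trans ht.symm)
  · exact Or.inl (hn.trans hb.symm)
  · exact absurd (ht.trans hb.symm) top_ne_bot
  · exact absurd (ht.trans hb.symm) top_ne_bot
end

section
/- Let G₁ and G₂ be groups and suppose there exists an ℰL-isomorphism f : L(G₁) → L(G₂). If G₁ is a Dedekind group, then G₂ is a Dedekind group. In particular, if G₁ is abelian then G₂ is Dedekind. -/
/-- Proposition 1 (2.2), Dedekind case: if `G₁` and `G₂` are ℰL-isomorphic and `G₁` is a
Dedekind group (i.e. all its subgroups are normal), then `G₂` is Dedekind; in particular,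
if `G₁` is abelian then `G₂` is Dedekind. -/
theorem dedekind_of_eliso {G₁ G₂ : Type*} [Group G₁] [Group G₂]
    (hf : ∃ f : Subgroup G₁ → Subgroup G₂, IsELIso f) :
    ((∀ H : Subgroup G₁, H.Normal) → ∀ H : Subgroup G₂, H.Normal) ∧
    ((∀ a b : G₁, a * b = b * a) → ∀ H : Subgroup G₂, H.Normal) := by
  obtain ⟨f, hbij, hcore, -, -⟩ := hf
  have key : (∀ H : Subgroup G₁, H.Normal) → ∀ H : Subgroup G₂, H.Normal := by
    intro hded K
    obtain ⟨H, rfl⟩ := hbij.2 K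
    have : H.normalCore = H := @Subgroup.normalCore_eq_self _ _ H (hded H)
    have h2 : (f H).normalCore = f H := by rw [← hcore, this]
    rw [← h2]
    exact Subgroup.normalCore_normal _
  refine ⟨key, fun hcomm => key fun H => ⟨fun n hn g => ?_⟩⟩
  rw [hcomm g n, mul_assoc, mul_inv_cancel, mul_one]
  exact hn
end

section
/- Let G₁ and G₂ be finite groups, Φ(G₁) and Φ(G₂) their Frattini subgroups, and f : L(G₁) → L(G₂) an ℰL-isomorphism. If G₁ is nilpotent, then f(Φ(G₁)) ⊇ Φ(G₂). -/
/-- Proposition 2 (2.2): if `G₁, G₂` are finite groups, `G₁` is nilpotent and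
`f : L(G₁) → L(G₂)` is an ℰL-isomorphism, then `f(Φ(G₁)) ⊇ Φ(G₂)`. -/
theorem frattini_le_eliso_frattini {G₁ G₂ : Type*} [Group G₁] [Group G₂]
    [Finite G₁] [Finite G₂] [Group.IsNilpotent G₁]
    (f : Subgroup G₁ → Subgroup G₂) (hf : IsELIso f) :
    frattini G₂ ≤ f (frattini G₁) := by
  obtain ⟨⟨finj, fsurj⟩, hcore, hinf, hsup⟩ := hf
  -- f maps normal subgroups to normal subgroups
  have fnormal : ∀ H : Subgroup G₁, H.Normal → (f H).Normal := by
    intro H hH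
    have : f H.normalCore = (f H).normalCore := hcore H
    rw [H.normalCore_eq_self] at this
    rw [this]
    exact Subgroup.normalCore_normal _
  -- f preserves meets of normal subgroups
  have fmeet : ∀ H K : Subgroup G₁, H.Normal → K.Normal → f (H ⊓ K) = f H ⊓ f K := by
    intro H K hH hK
    have := hinf H K
    rw [H.normalCore_eq_self, K.normalCore_eq_self] at this
    rw [this]
    have hfH : (f H).Normal := fnormal H hH
    have hfK : (f K).Normal := fnormal K hK
    rw [(f H).normalCore_eq_self, (f K).normalCore_eq_self]
  -- f is order-preserving and order-reflecting on normal subgroups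
  have fle : ∀ H K : Subgroup G₁, H.Normal → K.Normal → (H ≤ K ↔ f H ≤ f K) := by
    intro H K hH hK
    constructor
    · intro h
      have : f (H ⊓ K) = f H ⊓ f K := fmeet H K hH hK
      rw [inf_eq_left.mpr h] at this
      rw [this]
      exact inf_le_right
    · intro h
      have : f (H ⊓ K) = f H ⊓ f K := fmeet H K hH hK
      rw [inf_eq_left.mpr h] at this
      have := finj this
      rw [← inf_eq_left]
      exact this
  -- preimages of normal subgroups are normal
  have gnormal : ∀ H : Subgroup G₁, (f H).Normal → H.Normal := by
    intro H hH
    have : f H.normalCore = (f H).normalCore := hcore H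
    rw [(f H).normalCore_eq_self] at this
    have := finj this
    rw [← this]
    exact Subgroup.normalCore_normal _
  -- f ⊤ = ⊤
  have ftop : f ⊤ = ⊤ := by
    obtain ⟨H, hH⟩ := fsurj ⊤
    have htn : (⊤ : Subgroup G₂).Normal := inferInstance
    have hHn : H.Normal := gnormal H (hH ▸ htn)
    have htn1 : (⊤ : Subgroup G₁).Normal := inferInstance
    have : f H ≤ f ⊤ := (fle H ⊤ hHn htn1).mp le_top
    rw [hH] at this
    exact le_antisymm le_top this
  -- every maximal subgroup of G₁ is normal, since G₁ is nilpotent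
  have hmaxnormal : ∀ M : Subgroup G₁, IsCoatom M → M.Normal :=
    ((isNilpotent_of_finite_tfae (G := G₁)).out 0 2).mp (inferInstance : Group.IsNilpotent G₁)
  -- the preimage of frattini G₂
  obtain ⟨P, hP⟩ := fsurj (frattini G₂)
  have hfrat₂ : (frattini G₂).Normal := Subgroup.normal_of_characteristic _
  have hPn : P.Normal := gnormal P (hP ▸ hfrat₂)
  have hfrat₁ : (frattini G₁).Normal := Subgroup.normal_of_characteristic _
  -- it suffices to show P ≤ frattini G₁
  suffices h : P ≤ frattini G₁ by
    calc frattini G₂ = f P := hP.symm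
    _ ≤ f (frattini G₁) := (fle P (frattini G₁) hPn hfrat₁).mp h
  -- show P ≤ M for every coatom M
  show P ≤ Order.radical (Subgroup G₁)
  rw [Order.radical]
  refine le_iInf fun M => le_iInf fun hM => ?_
  have hMn : M.Normal := hmaxnormal M hM
  have hfMn : (f M).Normal := fnormal M hMn
  -- f M is a proper subgroup of G₂
  have hfMne : f M ≠ ⊤ := by
    intro h
    rw [← ftop] at h
    exact hM.1 (finj h)
  -- find a coatom M' of G₂ above f M
  obtain ⟨M', hM', hle⟩ := (Finite.to_isCoatomic (α := Subgroup G₂)).eq_top_or_exists_le_coatom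
    (f M) |>.resolve_left hfMne
  -- f M is a maximal normal subgroup: any proper normal subgroup above it equals f M
  have hmax : ∀ K : Subgroup G₂, K.Normal → f M ≤ K → K ≠ ⊤ → K = f M := by
    intro K hKn hK hKt
    obtain ⟨L, hL⟩ := fsurj K
    have hLn : L.Normal := gnormal L (hL ▸ hKn)
    have hML : M ≤ L := (fle M L hMn hLn).mpr (hL ▸ hK)
    rcases lt_or_eq_of_le hML with h | h
    · rw [hM.2 L h, ftop] at hL
      exact absurd hL.symm hKt
    · rw [← hL, ← h]
  -- the normal core of M' equals f M
  have hcoreM' : M'.normalCore = f M := by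
    apply hmax
    · exact Subgroup.normalCore_normal _
    · exact Subgroup.normal_le_normalCore.mpr hle
    · intro h
      have : M' = ⊤ := top_le_iff.mp (h ▸ M'.normalCore_le)
      exact hM'.1 this
  -- frattini G₂ ≤ f M
  have hfratle : frattini G₂ ≤ f M := by
    rw [← hcoreM']
    exact Subgroup.normal_le_normalCore.mpr (frattini_le_coatom hM')
  -- conclude P ≤ M
  exact (fle P M hPn hMn).mpr (hP ▸ hfratle)
end

section
/- Let G be a finite nilpotent group, Φ(G) its Frattini subgroup, and f : L(G) → L(G) an ℰL-automorphism of G. Then f(Φ(G)) = Φ(G). -/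
/-- Corollary (2.2): if `G` is a finite nilpotent group and `f` is an ℰL-automorphism of
`G`, then the Frattini subgroup `Φ(G)` is a fixed point of `f`. -/
theorem eliso_fixes_frattini {G : Type*} [Group G] [Finite G] [Group.IsNilpotent G]
    (f : Subgroup G → Subgroup G) (hf : IsELIso f) :
    f (frattini G) = frattini G := by
  obtain ⟨⟨finj, fsurj⟩, hcore, hinf, hsup⟩ := hf
  have hmaxn : ∀ H : Subgroup G, IsCoatom H → H.Normal := by
    have h := (isNilpotent_of_finite_tfae (G := G)).out 0 2
    exact h.mp inferInstance
  have hnc : ∀ H : Subgroup G, H.Normal → H.normalCore = H := fun H h => by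
    letI := h; exact H.normalCore_eq_self
  -- f preserves normality
  have hN : ∀ H : Subgroup G, H.Normal → (f H).Normal := by
    intro H h
    have := hcore H
    rw [hnc H h] at this
    rw [this]
    exact Subgroup.normalCore_normal _
  -- f preserves binary infima of normal subgroups
  have hinf' : ∀ H K : Subgroup G, H.Normal → K.Normal → f (H ⊓ K) = f H ⊓ f K := by
    intro H K hH hK
    have := hinf H K
    rwa [hnc H hH, hnc K hK, hnc _ (hN H hH), hnc _ (hN K hK)] at this
  -- order iso on normal subgroups
  have hmono : ∀ H K : Subgroup G, H.Normal → K.Normal → (H ≤ K ↔ f H ≤ f K) := by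
    intro H K hH hK
    constructor
    · intro hle
      have : f (H ⊓ K) = f H ⊓ f K := hinf' H K hH hK
      rw [inf_eq_left.mpr hle] at this
      exact this.le.trans inf_le_right
    · intro hle
      have : f (H ⊓ K) = f H ⊓ f K := hinf' H K hH hK
      rw [inf_eq_left.mpr hle] at this
      have := finj this
      exact inf_eq_left.mp this
  -- f ⊤ = ⊤
  have htop : f ⊤ = ⊤ := by
    obtain ⟨H, hH⟩ := fsurj ⊤
    have h1 : f H.normalCore = ⊤ := by
      rw [hcore H, hH, Subgroup.normalCore_eq_self]
    have h2 : f H.normalCore ≤ f ⊤ :=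
      (hmono H.normalCore ⊤ (Subgroup.normalCore_normal H) inferInstance).mp le_top
    rw [h1] at h2
    exact le_antisymm le_top h2
  -- surjectivity onto normal subgroups
  have hsurjN : ∀ M : Subgroup G, M.Normal → ∃ N : Subgroup G, N.Normal ∧ f N = M := by
    intro M hM
    obtain ⟨H, hH⟩ := fsurj M
    refine ⟨H.normalCore, Subgroup.normalCore_normal H, ?_⟩
    rw [hcore H, hH, hnc M hM]
  -- forward coatom preservation
  have hcoat : ∀ M : Subgroup G, IsCoatom M → IsCoatom (f M) := by
    intro M hMc
    have hM : M.Normal := hmaxn M hMc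
    constructor
    · intro h
      rw [← htop] at h
      exact hMc.1 (finj h)
    · intro y hy
      rcases eq_top_or_exists_le_coatom y with h | ⟨c, hc, hyc⟩
      · exact h
      · exfalso
        have hcN : c.Normal := hmaxn c hc
        obtain ⟨N, hNn, hfN⟩ := hsurjN c hcN
        have hMN : M ≤ N := (hmono M N hM hNn).mpr (hfN ▸ (le_of_lt hy).trans hyc)
        have hNne : N ≠ ⊤ := fun h => hc.1 (by rw [← hfN, h, htop])
        rcases lt_or_eq_of_le hMN with h | h
        · exact hNne (hMc.2 N h)
        · subst h
          exact absurd (hfN ▸ hyc) (not_le_of_gt hy)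
  -- coatom reflection
  have hcoat' : ∀ M : Subgroup G, M.Normal → IsCoatom (f M) → IsCoatom M := by
    intro M hM hfMc
    constructor
    · intro h
      rw [h, htop] at hfMc
      exact hfMc.1 rfl
    · intro b hb
      rcases eq_top_or_exists_le_coatom b with h | ⟨c, hc, hbc⟩
      · exact h
      · exfalso
        have hcN : c.Normal := hmaxn c hc
        have hMc : M ≤ c := (le_of_lt hb).trans hbc
        have h1 : f M ≤ f c := (hmono M c hM hcN).mp hMc
        have h2 : f c ≠ ⊤ := fun h => hc.1 (finj (h.trans htop.symm))
        rcases lt_or_eq_of_le h1 with h | h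
        · exact h2 (hfMc.2 _ h)
        · have : M = c := finj h
          subst this
          exact not_le_of_gt hb hbc
  -- frattini is normal
  have hfrat : (frattini G).Normal := inferInstance
  have hle_frat : ∀ P : Subgroup G, (∀ M : Subgroup G, IsCoatom M → P ≤ M) → P ≤ frattini G := by
    intro P hP
    simp only [frattini, Order.radical]
    exact le_iInf₂ fun M hM => hP M hM
  apply le_antisymm
  · refine hle_frat _ fun M hMc => ?_
    obtain ⟨N, hNn, hfN⟩ := hsurjN M (hmaxn M hMc)
    have hNc : IsCoatom N := hcoat' N hNn (hfN ▸ hMc)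
    exact hfN ▸ (hmono _ N hfrat hNn).mp (frattini_le_coatom hNc)
  · obtain ⟨P, hPn, hfP⟩ := hsurjN (frattini G) hfrat
    have hPle : P ≤ frattini G := by
      refine hle_frat _ fun M hMc => ?_
      have : frattini G ≤ f M := frattini_le_coatom (hcoat M hMc)
      exact (hmono P M hPn (hmaxn M hMc)).mpr (hfP ▸ this)
    calc frattini G = f P := hfP.symm
      _ ≤ f (frattini G) := (hmono P _ hPn hfrat).mp hPle
end

section
/- Let G₁ and G₂ be groups, f : L(G₁) → L(G₂) an ℰL-isomorphism, and H₁ a normal subgroup of G₁. Then f(H₁) is a normal subgroup of G₂, f maps each subgroup of G₁ containing H₁ to a subgroup of G₂ containing f(H₁), and the induced map f̄ : L(G₁/H₁) → L(G₂/f(H₁)), defined by f̄(K₁/H₁) = f(K₁)/f(H₁) for every subgroup K₁ of G₁ containing H₁, is an ℰL-isomorphism from G₁/H₁ to G₂/f(H₁). -/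
private lemma comap_normalCore' {G : Type*} [Group G] (N : Subgroup G) [N.Normal]
    (Q : Subgroup (G ⧸ N)) :
    (Q.comap (QuotientGroup.mk' N)).normalCore = Q.normalCore.comap (QuotientGroup.mk' N) := by
  have hs : Function.Surjective (QuotientGroup.mk' N) := QuotientGroup.mk'_surjective (N := N)
  apply le_antisymm
  · haveI h1 : ((Q.comap (QuotientGroup.mk' N)).normalCore.map (QuotientGroup.mk' N)).Normal :=
      Subgroup.Normal.map inferInstance _ hs
    have h2 : (Q.comap (QuotientGroup.mk' N)).normalCore.map (QuotientGroup.mk' N) ≤ Q := by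
      refine le_trans (Subgroup.map_mono (Subgroup.normalCore_le _)) ?_
      rw [Subgroup.map_comap_eq_self_of_surjective hs]
    have h3 : (Q.comap (QuotientGroup.mk' N)).normalCore.map (QuotientGroup.mk' N)
        ≤ Q.normalCore := Subgroup.normal_le_normalCore.mpr h2
    calc (Q.comap (QuotientGroup.mk' N)).normalCore
        ≤ ((Q.comap (QuotientGroup.mk' N)).normalCore.map
            (QuotientGroup.mk' N)).comap (QuotientGroup.mk' N) := by
          rw [Subgroup.comap_map_eq]; exact le_sup_left
      _ ≤ Q.normalCore.comap (QuotientGroup.mk' N) := Subgroup.comap_mono h3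
  · haveI : (Q.normalCore.comap (QuotientGroup.mk' N)).Normal :=
      Subgroup.Normal.comap inferInstance _
    exact Subgroup.normal_le_normalCore.mpr (Subgroup.comap_mono Q.normalCore_le)

private lemma map_normalCore' {G : Type*} [Group G] (N : Subgroup G) [N.Normal]
    {K : Subgroup G} (hNK : N ≤ K) :
    (K.map (QuotientGroup.mk' N)).normalCore = K.normalCore.map (QuotientGroup.mk' N) := by
  have hs : Function.Surjective (QuotientGroup.mk' N) := QuotientGroup.mk'_surjective (N := N)
  have h := comap_normalCore' N (K.map (QuotientGroup.mk' N))
  rw [Subgroup.comap_map_eq, QuotientGroup.ker_mk', sup_eq_left.mpr hNK] at h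
  rw [h, Subgroup.map_comap_eq_self_of_surjective hs]

private lemma ker_le_comap' {G : Type*} [Group G] (N : Subgroup G) [N.Normal]
    (Q : Subgroup (G ⧸ N)) : N ≤ Q.comap (QuotientGroup.mk' N) := by
  intro x hx
  have h1 : (QuotientGroup.mk' N) x = 1 := by
    rwa [← MonoidHom.mem_ker, QuotientGroup.ker_mk']
  show (QuotientGroup.mk' N) x ∈ Q
  rw [h1]; exact Q.one_mem

private lemma map_inf' {G : Type*} [Group G] (N : Subgroup G) [N.Normal]
    {A B : Subgroup G} (hA : N ≤ A) (hB : N ≤ B) :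
    (A ⊓ B).map (QuotientGroup.mk' N)
      = A.map (QuotientGroup.mk' N) ⊓ B.map (QuotientGroup.mk' N) := by
  apply Subgroup.comap_injective (QuotientGroup.mk'_surjective (N := N))
  rw [Subgroup.comap_inf, Subgroup.comap_map_eq, Subgroup.comap_map_eq, Subgroup.comap_map_eq,
    QuotientGroup.ker_mk', sup_eq_left.mpr hA, sup_eq_left.mpr hB,
    sup_eq_left.mpr (le_inf hA hB)]

/-- Lemma (2.2): if `f : L(G₁) → L(G₂)` is an ℰL-isomorphism and `H₁ ⊴ G₁`, then `f H₁`
is normal in `G₂`, `f` maps subgroups containing `H₁` to subgroups containing `f H₁`, and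
the induced map `f̄ : L(G₁/H₁) → L(G₂/f H₁)`, `f̄(K₁/H₁) = f(K₁)/f(H₁)`, is an
ℰL-isomorphism. -/
theorem eliso_quotient {G₁ G₂ : Type*} [Group G₁] [Group G₂]
    (f : Subgroup G₁ → Subgroup G₂) (hf : IsELIso f)
    (H₁ : Subgroup G₁) [hH₁ : H₁.Normal] :
    ∃ hn : (f H₁).Normal,
      (∀ K : Subgroup G₁, H₁ ≤ K → f H₁ ≤ f K) ∧
      letI : (f H₁).Normal := hn
      ∃ fbar : Subgroup (G₁ ⧸ H₁) → Subgroup (G₂ ⧸ f H₁),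
        (∀ K₁ : Subgroup G₁, H₁ ≤ K₁ →
          fbar (K₁.map (QuotientGroup.mk' H₁)) = (f K₁).map (QuotientGroup.mk' (f H₁))) ∧
        IsELIso fbar := by
  obtain ⟨hbij, hcore, hinf, hsup⟩ := hf
  have hfH : f H₁ = (f H₁).normalCore := by
    rw [← hcore H₁, H₁.normalCore_eq_self]
  have hn : (f H₁).Normal := hfH ▸ Subgroup.normalCore_normal (f H₁)
  haveI := hn
  -- order preservation at H₁
  have hle : ∀ K : Subgroup G₁, H₁ ≤ K → f H₁ ≤ f K := by
    intro K hK
    have h1 : H₁.normalCore ⊓ K.normalCore = H₁ := by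
      rw [H₁.normalCore_eq_self, inf_eq_left]
      exact Subgroup.normal_le_normalCore.mpr hK
    have h2 := hinf H₁ K
    rw [h1, (f H₁).normalCore_eq_self] at h2
    calc f H₁ = f H₁ ⊓ (f K).normalCore := h2
      _ ≤ (f K).normalCore := inf_le_right
      _ ≤ f K := Subgroup.normalCore_le _
  -- order reflection at H₁
  have hge : ∀ K : Subgroup G₁, f H₁ ≤ f K → H₁ ≤ K := by
    intro K hK
    have h2 := hinf H₁ K
    rw [H₁.normalCore_eq_self, (f H₁).normalCore_eq_self,
      inf_eq_left.mpr (Subgroup.normal_le_normalCore.mpr hK)] at h2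
    have h3 : H₁ ⊓ K.normalCore = H₁ := hbij.injective h2
    exact le_trans (inf_eq_left.mp h3) (Subgroup.normalCore_le K)
  refine ⟨hn, hle, ?_⟩
  have hs1 : Function.Surjective (QuotientGroup.mk' H₁) := QuotientGroup.mk'_surjective (N := H₁)
  have hs2 : Function.Surjective (QuotientGroup.mk' (f H₁)) :=
    QuotientGroup.mk'_surjective (N := f H₁)
  have hcomap_map : ∀ K : Subgroup G₁, H₁ ≤ K →
      (K.map (QuotientGroup.mk' H₁)).comap (QuotientGroup.mk' H₁) = K := by
    intro K hK
    rw [Subgroup.comap_map_eq, QuotientGroup.ker_mk', sup_eq_left.mpr hK]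
  have hH_le : ∀ Q : Subgroup (G₁ ⧸ H₁), H₁ ≤ Q.comap (QuotientGroup.mk' H₁) :=
    fun Q => ker_le_comap' H₁ Q
  have hM_le : ∀ Q : Subgroup (G₁ ⧸ H₁),
      f H₁ ≤ f (Q.comap (QuotientGroup.mk' H₁)) := fun Q => hle _ (hH_le Q)
  have hM_le_core : ∀ Q : Subgroup (G₁ ⧸ H₁),
      f H₁ ≤ (f (Q.comap (QuotientGroup.mk' H₁))).normalCore := fun Q =>
    Subgroup.normal_le_normalCore.mpr (hM_le Q)
  refine ⟨fun Q => (f (Q.comap (QuotientGroup.mk' H₁))).map (QuotientGroup.mk' (f H₁)),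
    ?_, ?_, ?_, ?_, ?_⟩
  · intro K₁ hK₁
    beta_reduce
    rw [hcomap_map K₁ hK₁]
  · constructor
    · intro Q R h
      have h' := congrArg (Subgroup.comap (QuotientGroup.mk' (f H₁))) h
      rw [Subgroup.comap_map_eq, Subgroup.comap_map_eq, QuotientGroup.ker_mk',
        sup_eq_left.mpr (hM_le Q), sup_eq_left.mpr (hM_le R)] at h'
      exact Subgroup.comap_injective hs1 (hbij.injective h')
    · intro R
      obtain ⟨K, hK⟩ := hbij.surjective (R.comap (QuotientGroup.mk' (f H₁)))
      have hHK : H₁ ≤ K := by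
        apply hge
        rw [hK]
        exact ker_le_comap' (f H₁) R
      refine ⟨K.map (QuotientGroup.mk' H₁), ?_⟩
      beta_reduce
      rw [hcomap_map K hHK, hK, Subgroup.map_comap_eq_self_of_surjective hs2]
  · intro Q
    beta_reduce
    rw [← comap_normalCore' H₁ Q, hcore, ← map_normalCore' (f H₁) (hM_le Q)]
  · intro Q R
    beta_reduce
    rw [Subgroup.comap_inf, ← comap_normalCore' H₁ Q, ← comap_normalCore' H₁ R, hinf,
      map_inf' (f H₁) (hM_le_core Q) (hM_le_core R),
      ← map_normalCore' (f H₁) (hM_le Q), ← map_normalCore' (f H₁) (hM_le R)]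
  · intro Q R
    beta_reduce
    rw [← Subgroup.comap_sup_eq (f := QuotientGroup.mk' H₁) Q.normalCore R.normalCore hs1, ← comap_normalCore' H₁ Q, ← comap_normalCore' H₁ R, hsup,
      Subgroup.map_sup,
      ← map_normalCore' (f H₁) (hM_le Q), ← map_normalCore' (f H₁) (hM_le R)]
end

section
/- Let G₁ and G₂ be groups, D(G₁) and D(G₂) their derived (commutator) subgroups, and f : L(G₁) → L(G₂) an ℰL-isomorphism. Assume that G₂ satisfies the condition (*): for every normal subgroup N of G₂, if the quotient G₂/N is hamiltonian, then G₂/N is a p-group for some prime p. Then f(D(G₁)) ⊇ D(G₂). -/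
section CentralComm

variable {G : Type*} [Group G]

/-- If `y*x = x*y*z` with `z` commuting with `x` and `y`, then `y^n * x = x * y^n * z^n`. -/
lemma aux_semicomm_pow (x y z : G) (h : y * x = x * y * z)
    (hzx : Commute x z) (hzy : Commute y z) :
    ∀ n : ℕ, y ^ n * x = x * y ^ n * z ^ n := by
  intro n
  induction n with
  | zero => simp
  | succ n ih =>
    have : y ^ (n+1) * x = y * (y ^ n * x) := by rw [pow_succ']; group
    rw [this, ih, pow_succ', pow_succ']
    have h1 : y * (x * y ^ n * z ^ n) = (y * x) * y ^ n * z ^ n := by group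
    rw [h1, h]
    have h2 : z * y ^ n = y ^ n * z := ((hzy.symm).pow_right n).eq
    calc x * y * z * y ^ n * z ^ n = x * y * (z * y ^ n) * z ^ n := by group
      _ = x * y * (y ^ n * z) * z ^ n := by rw [h2]
      _ = x * (y * y ^ n) * (z * z ^ n) := by group

lemma aux_mul_pow (x y z : G) (h : y * x = x * y * z)
    (hzx : Commute x z) (hzy : Commute y z) :
    ∀ n : ℕ, (x * y) ^ n = x ^ n * y ^ n * z ^ (n.choose 2) := by
  intro n
  induction n with
  | zero => simp
  | succ n ih =>
    rw [pow_succ, ih]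
    have h1 : y ^ n * x = x * y ^ n * z ^ n := aux_semicomm_pow x y z h hzx hzy n
    have hzxy : Commute (x*y) z := hzx.mul_left hzy
    have h2 : Commute (z ^ n.choose 2) (x * y) := (hzxy.symm.pow_left _)
    calc x ^ n * y ^ n * z ^ (n.choose 2) * (x * y)
        = x ^ n * y ^ n * (z ^ (n.choose 2) * (x*y)) := by group
      _ = x ^ n * y ^ n * ((x*y) * z ^ (n.choose 2)) := by rw [h2.eq]
      _ = x ^ n * (y ^ n * x) * y * z ^ (n.choose 2) := by group
      _ = x ^ n * (x * y ^ n * z ^ n) * y * z ^ (n.choose 2) := by rw [h1]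
      _ = x ^ (n+1) * y ^ n * (z ^ n * y) * z ^ (n.choose 2) := by group
      _ = x ^ (n+1) * y ^ n * (y * z ^ n) * z ^ (n.choose 2) := by
            rw [(hzy.symm.pow_left n).eq]
      _ = x ^ (n+1) * y ^ (n+1) * (z ^ n * z ^ (n.choose 2)) := by group
      _ = x ^ (n+1) * y ^ (n+1) * z ^ ((n+1).choose 2) := by
            rw [← pow_add, Nat.choose_succ_succ, Nat.choose_one_right, Nat.add_comm]

end CentralComm

section Bezout

variable {G : Type*} [Group G]

/-- If `w` has prime order `p` and `c` is a nontrivial element of `⟨w⟩`, then `w ∈ ⟨c⟩`. -/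
lemma aux_mem_zpowers_symm {p : ℕ} (hp : p.Prime) {w c : G}
    (hw : orderOf w = p) (hc : c ∈ Subgroup.zpowers w) (hc1 : c ≠ 1) :
    w ∈ Subgroup.zpowers c := by
  obtain ⟨k, hk⟩ := Subgroup.mem_zpowers_iff.mp hc
  have hwp : w ^ (p : ℤ) = 1 := by
    rw [zpow_natCast, ← hw, pow_orderOf_eq_one]
  have hpk : ¬ ((p : ℤ) ∣ k) := by
    rintro ⟨m, rfl⟩
    apply hc1
    rw [← hk, zpow_mul, hwp, one_zpow]
  have hco : IsCoprime (p : ℤ) k :=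
    (Prime.coprime_iff_not_dvd (Nat.prime_iff_prime_int.mp hp)).mpr hpk
  obtain ⟨u, v, huv⟩ := hco
  refine Subgroup.mem_zpowers_iff.mpr ⟨v, ?_⟩
  have : w = w ^ (u * (p:ℤ) + v * k) := by rw [huv, zpow_one]
  rw [this, zpow_add, mul_comm u, zpow_mul, hwp, one_zpow, one_mul, mul_comm v,
    zpow_mul, hk]

end Bezout

section Abelian

variable {G : Type*} [Group G]

lemma aux_orderOf_dvd_of_mem_zpowers {x y : G} (h : x ∈ Subgroup.zpowers y) :
    orderOf x ∣ orderOf y := by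
  obtain ⟨k, hk⟩ := Subgroup.mem_zpowers_iff.mp h
  apply orderOf_dvd_of_pow_eq_one
  have : (y ^ k) ^ (orderOf y : ℤ) = 1 := by
    rw [← zpow_mul, mul_comm, zpow_mul, zpow_natCast, pow_orderOf_eq_one, one_zpow]
  rw [← hk, ← zpow_natCast, this]

/-- In a "commutative" group, if some fixed nontrivial `z ∈ S` lies in every nontrivial
cyclic subgroup of elements of `S`, then any two elements of `S` generate comparable
cyclic subgroups. -/
lemma aux_abelian_comparable (hcomm : ∀ u v : G, u * v = v * u)
    (S : Subgroup G) {z : G} (hzS : z ∈ S) (hz1 : z ≠ 1)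
    (hz : ∀ w ∈ S, w ≠ 1 → z ∈ Subgroup.zpowers w) :
    ∀ x ∈ S, ∀ y ∈ S, x ∈ Subgroup.zpowers y ∨ y ∈ Subgroup.zpowers x := by
  -- Step 0 : every nontrivial element of S has finite order
  have hfin : ∀ w ∈ S, w ≠ 1 → IsOfFinOrder w := by
    intro w hwS hw1
    by_contra hinf
    have hinj : Function.Injective fun n : ℤ => w ^ n :=
      injective_zpow_iff_not_isOfFinOrder.mpr hinf
    obtain ⟨e, he⟩ := Subgroup.mem_zpowers_iff.mp (hz w hwS hw1)
    have he0 : e ≠ 0 := by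
      rintro rfl; exact hz1 (by simpa using he.symm)
    have h2e : w ^ (e + e) ≠ 1 := by
      intro h
      have : e + e = 0 := hinj (by simpa using h)
      omega
    obtain ⟨m, hm⟩ := Subgroup.mem_zpowers_iff.mp
      (hz (w ^ (e + e)) (Subgroup.zpow_mem S hwS _) h2e)
    rw [← zpow_mul, ← he] at hm
    have : (e + e) * m = e := hinj hm
    have : e * (2 * m - 1) = 0 := by ring_nf; linarith [this]
    have := mul_eq_zero.mp this
    omega
  -- Step 1 : replace z by an element of prime order p
  have hzfin : IsOfFinOrder z := hfin z hzS hz1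
  set m := orderOf z with hm
  have hm1 : 1 < m := by
    rcases Nat.lt_or_ge m 2 with h | h
    · interval_cases m
      · exact absurd hm.symm (by simpa using hzfin.orderOf_pos.ne')
      · exact absurd (orderOf_eq_one_iff.mp hm.symm) hz1
    · omega
  set p := m.minFac with hpdef
  have hp : p.Prime := Nat.minFac_prime (by omega)
  set z₀ := z ^ (m / p) with hz₀def
  have hpm : p ∣ m := Nat.minFac_dvd m
  have hz₀p : z₀ ^ p = 1 := by
    rw [← pow_mul, Nat.div_mul_cancel hpm, hm, pow_orderOf_eq_one]
  have hz₀1 : z₀ ≠ 1 := by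
    intro h
    have : m ∣ m / p := orderOf_dvd_of_pow_eq_one (by rw [← hz₀def, h])
    have h1 : m / p < m := Nat.div_lt_self (by omega) hp.one_lt
    have h2 : 0 < m / p := Nat.div_pos (Nat.le_of_dvd (by omega) hpm) hp.pos
    exact absurd (Nat.le_of_dvd h2 this) (by omega)
  have hz₀ord : orderOf z₀ = p := by
    rcases (Nat.Prime.eq_one_or_self_of_dvd hp _ (orderOf_dvd_of_pow_eq_one hz₀p)) with h | h
    · exact absurd (orderOf_eq_one_iff.mp h) hz₀1
    · exact h
  have hz₀S : z₀ ∈ S := Subgroup.pow_mem S hzS _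
  have hz₀ : ∀ w ∈ S, w ≠ 1 → z₀ ∈ Subgroup.zpowers w := by
    intro w hwS hw1
    exact Subgroup.pow_mem _ (hz w hwS hw1) _
  clear hz hz1 hzS hzfin hm1 hpm hz₀p
  -- Step 2 : every nontrivial element of S has p-power order
  have hord : ∀ w ∈ S, w ≠ 1 → ∃ k : ℕ, orderOf w = p ^ k := by
    intro w hwS hw1
    have hn0 : orderOf w ≠ 0 := (hfin w hwS hw1).orderOf_pos.ne'
    refine ⟨(orderOf w).factorization p, ?_⟩
    have hself : p ^ (orderOf w).factorization p *
        (orderOf w / p ^ (orderOf w).factorization p) = orderOf w :=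
      Nat.ordProj_mul_ordCompl_eq_self _ p
    have hppos : 0 < p ^ (orderOf w).factorization p := pow_pos hp.pos _
    rcases Nat.lt_or_ge (orderOf w / p ^ (orderOf w).factorization p) 2 with h1 | h1
    · have hu0 : orderOf w / p ^ (orderOf w).factorization p ≠ 0 := by
        intro h; rw [h, Nat.mul_zero] at hself; exact hn0 hself.symm
      rcases Nat.le_one_iff_eq_zero_or_eq_one.mp (Nat.lt_succ_iff.mp h1) with h | h
      · exact absurd h hu0
      rw [h, Nat.mul_one] at hself; exact hself.symm
    · exfalso
      have hw'u : (w ^ p ^ (orderOf w).factorization p) ^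
          (orderOf w / p ^ (orderOf w).factorization p) = 1 := by
        rw [← pow_mul, hself, pow_orderOf_eq_one]
      have hw'1 : (w ^ p ^ (orderOf w).factorization p) ≠ 1 := by
        intro h
        have hdvd : orderOf w ∣ p ^ (orderOf w).factorization p :=
          orderOf_dvd_of_pow_eq_one h
        have h2 := Nat.le_of_dvd hppos hdvd
        nlinarith [Nat.pos_of_ne_zero hn0]
      have hzw' := hz₀ _ (Subgroup.pow_mem S hwS _) hw'1
      have hdp := aux_orderOf_dvd_of_mem_zpowers hzw'
      rw [hz₀ord] at hdp
      have : p ∣ orderOf w / p ^ (orderOf w).factorization p :=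
        hdp.trans (orderOf_dvd_of_pow_eq_one hw'u)
      exact Nat.not_dvd_ordCompl hp hn0 this
  -- Step 3 : main induction
  have hind : ∀ α : ℕ, ∀ x ∈ S, ∀ y ∈ S, x ≠ 1 → y ≠ 1 → ∀ a b : ℕ,
      orderOf x = p ^ a → orderOf y = p ^ b → a ≤ α → a ≤ b →
      x ∈ Subgroup.zpowers y := by
    intro α
    induction α with
    | zero =>
      intro x hxS y hyS hx1 hy1 a b hxa hyb haα hab
      exfalso
      rw [Nat.le_zero.mp haα, pow_zero] at hxa
      exact hx1 (orderOf_eq_one_iff.mp hxa)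
    | succ α ih =>
      intro x hxS y hyS hx1 hy1 a b hxa hyb haα hab
      rcases Nat.lt_or_ge a (α+1) with hlt | hge
      · exact ih x hxS y hyS hx1 hy1 a b hxa hyb (Nat.lt_succ_iff.mp hlt) hab
      have hz₀y : z₀ ∈ Subgroup.zpowers y := hz₀ y hyS hy1
      have ha1 : 1 ≤ a := by
        by_contra h
        push_neg at h
        rw [Nat.lt_one_iff.mp h, pow_zero] at hxa
        exact hx1 (orderOf_eq_one_iff.mp hxa)
      rcases Nat.lt_or_ge a 2 with ha2 | ha2
      · -- a = 1 : x has order p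
        have hxp : orderOf x = p := by
          have : a = 1 := by omega
          rw [this, pow_one] at hxa; exact hxa
        exact Subgroup.zpowers_le.mpr hz₀y
          (aux_mem_zpowers_symm hp hxp (hz₀ x hxS hx1) hz₀1)
      · -- a ≥ 2
        have hpa1 : p ^ 1 < p ^ a := Nat.pow_lt_pow_right hp.one_lt (by omega)
        rw [pow_one] at hpa1
        have hxp1 : x ^ p ≠ 1 := by
          intro h
          have hd : orderOf x ∣ p := orderOf_dvd_of_pow_eq_one h
          rw [hxa] at hd
          have := Nat.le_of_dvd hp.pos hd
          omega
        have hgcd : Nat.gcd (p ^ a) p = p := by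
          rw [Nat.gcd_comm]
          exact Nat.gcd_eq_left (dvd_pow_self p (by omega : a ≠ 0))
        have hxpord : orderOf (x ^ p) = p ^ (a - 1) := by
          rw [(hfin x hxS hx1).orderOf_pow, hxa, hgcd]
          have : p ^ a = p ^ (a-1) * p := by
            rw [← pow_succ]
            congr 1
            omega
          rw [this, Nat.mul_div_cancel _ hp.pos]
        have hIH : x ^ p ∈ Subgroup.zpowers y :=
          ih (x^p) (Subgroup.pow_mem S hxS p) y hyS hxp1 hy1 (a-1) b hxpord hyb
            (by omega) (by omega)
        obtain ⟨mm, hmm⟩ := Subgroup.mem_zpowers_iff.mp hIH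
        -- y ^ (mm * p^(a-1)) = 1
        have hzpow : y ^ (mm * (p:ℤ)^(a-1)) = 1 := by
          rw [zpow_mul, hmm]
          have : ((p:ℤ)^(a-1)) = ((p^(a-1) : ℕ) : ℤ) := by push_cast; ring
          rw [this, zpow_natCast, ← pow_mul, ← pow_succ']
          have : p ^ (a - 1 + 1) = p ^ a := by congr 1; omega
          rw [this, ← hxa, pow_orderOf_eq_one]
        have hdvd : ((p:ℤ)^b) ∣ mm * (p:ℤ)^(a-1) := by
          have := orderOf_dvd_iff_zpow_eq_one.mpr hzpow
          rw [hyb] at this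
          exact_mod_cast this
        have hsplit : (p:ℤ)^b = (p:ℤ)^(b-a+1) * (p:ℤ)^(a-1) := by
          rw [← pow_add]
          congr 1
          omega
        have hm' : ((p:ℤ)^(b-a+1)) ∣ mm := by
          rw [hsplit] at hdvd
          exact (mul_dvd_mul_iff_right (pow_ne_zero _ (by exact_mod_cast hp.pos.ne' : (p:ℤ) ≠ 0))).mp hdvd
        obtain ⟨m', hm'⟩ := hm'
        set s : ℤ := (p:ℤ)^(b-a) * m' with hs
        have hcom : Commute x (y ^ (-s)) := hcomm x _
        have hwp : (x * y ^ (-s)) ^ p = 1 := by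
          rw [hcom.mul_pow]
          have h1 : (y ^ (-s)) ^ p = y ^ (-mm) := by
            rw [← zpow_natCast (y ^ (-s)), ← zpow_mul]
            congr 1
            rw [hs, hm']
            ring
          rw [h1, zpow_neg, hmm]
          group
        by_cases hw1 : x * y ^ (-s) = 1
        · have hxeq : x = y ^ s := by
            rw [zpow_neg] at hw1
            exact mul_inv_eq_one.mp hw1
          exact hxeq ▸ Subgroup.zpow_mem _ (Subgroup.mem_zpowers y) s
        · have hwS : x * y ^ (-s) ∈ S := S.mul_mem hxS (S.zpow_mem hyS _)
          have hword : orderOf (x * y ^ (-s)) = p := by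
            rcases (Nat.Prime.eq_one_or_self_of_dvd hp _
              (orderOf_dvd_of_pow_eq_one hwp)) with h | h
            · exact absurd (orderOf_eq_one_iff.mp h) hw1
            · exact h
          have hwz : x * y ^ (-s) ∈ Subgroup.zpowers z₀ :=
            aux_mem_zpowers_symm hp hword (hz₀ _ hwS hw1) hz₀1
          have hwy : x * y ^ (-s) ∈ Subgroup.zpowers y :=
            Subgroup.zpowers_le.mpr hz₀y hwz
          have : x = (x * y ^ (-s)) * y ^ s := by group
          rw [this]
          exact Subgroup.mul_mem _ hwy (Subgroup.zpow_mem _ (Subgroup.mem_zpowers y) s)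
  -- conclusion
  intro x hxS y hyS
  by_cases hx1 : x = 1
  · subst hx1; exact Or.inl (Subgroup.one_mem _)
  by_cases hy1 : y = 1
  · subst hy1; exact Or.inr (Subgroup.one_mem _)
  obtain ⟨a, hxa⟩ := hord x hxS hx1
  obtain ⟨b, hyb⟩ := hord y hyS hy1
  rcases le_total a b with hab | hab
  · exact Or.inl (hind a x hxS y hyS hx1 hy1 a b hxa hyb le_rfl hab)
  · exact Or.inr (hind b y hyS x hxS hy1 hx1 b a hyb hxa le_rfl hab)

end Abelian

section Dedekind
set_option maxHeartbeats 1600000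

variable {Q : Type*} [Group Q]

/-- In a Dedekind `p`-group with a pair of non-commuting elements, there is a
"quaternion-like" configuration. -/
lemma aux_dedekind_config (hded : ∀ S : Subgroup Q, S.Normal) {p : ℕ} (hp : p.Prime)
    (hQ : IsPGroup p Q) {a₀ b₀ : Q} (h0 : a₀ * b₀ ≠ b₀ * a₀) :
    ∃ a b z : Q, a * b ≠ b * a ∧ z ≠ 1 ∧ z ∈ Subgroup.closure {a, b} ∧
      (∀ w ∈ Subgroup.closure {a, b}, w ≠ 1 → z ∈ Subgroup.zpowers w) := by
  classical
  haveI : Fact p.Prime := ⟨hp⟩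
  -- choose a noncommuting pair with minimal sum of orders
  have hex : ∃ n : ℕ, ∃ a b : Q, a * b ≠ b * a ∧ orderOf a + orderOf b = n :=
    ⟨_, a₀, b₀, h0, rfl⟩
  obtain ⟨a, b, hab, hn⟩ := Nat.find_spec hex
  have hmin : ∀ a' b' : Q, a' * b' ≠ b' * a' →
      orderOf a + orderOf b ≤ orderOf a' + orderOf b' := by
    intro a' b' h'
    rw [hn]
    exact Nat.find_min' hex ⟨a', b', h', rfl⟩
  clear hn h0
  set c := a⁻¹ * b⁻¹ * a * b with hc
  have hc1 : c ≠ 1 := by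
    intro h
    apply hab
    have : a * b * 1 = a * b := mul_one _
    rw [← h] at this
    calc a * b = (b * a) * (a⁻¹ * b⁻¹ * a * b) := by group
    _ = b * a := by rw [← hc, h, mul_one]
  have hca : c ∈ Subgroup.zpowers a := by
    have h1 : b⁻¹ * a * b ∈ Subgroup.zpowers a := by
      have := (hded (Subgroup.zpowers a)).conj_mem a (Subgroup.mem_zpowers a) b⁻¹
      simpa using this
    have := Subgroup.mul_mem _ (Subgroup.inv_mem _ (Subgroup.mem_zpowers a)) h1
    simpa [hc, mul_assoc] using this
  have hcb : c ∈ Subgroup.zpowers b := by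
    have h1 : a⁻¹ * b⁻¹ * a ∈ Subgroup.zpowers b := by
      have := (hded (Subgroup.zpowers b)).conj_mem b⁻¹
        (Subgroup.inv_mem _ (Subgroup.mem_zpowers b)) a⁻¹
      simpa [mul_assoc] using this
    have := Subgroup.mul_mem _ h1 (Subgroup.mem_zpowers b)
    simpa [hc, mul_assoc] using this
  have hcomm_ac : Commute a c := by
    obtain ⟨k, hk⟩ := Subgroup.mem_zpowers_iff.mp hca
    rw [← hk]; exact Commute.zpow_right (Commute.refl a) k
  have hcomm_bc : Commute b c := by
    obtain ⟨k, hk⟩ := Subgroup.mem_zpowers_iff.mp hcb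
    rw [← hk]; exact Commute.zpow_right (Commute.refl b) k
  have hconj : b⁻¹ * a * b = a * c := by rw [hc]; group
  have hrel : a * b = b * a * c := by rw [hc]; group
  have hba : b * a = a * b * c⁻¹ := by rw [hc]; group
  have hconj' : a⁻¹ * b * a = b * c⁻¹ := by rw [hc]; group
  -- orders
  obtain ⟨α, hα⟩ := (IsPGroup.iff_orderOf.mp hQ) a
  obtain ⟨β, hβ⟩ := (IsPGroup.iff_orderOf.mp hQ) b
  have ha1 : a ≠ 1 := by rintro rfl; apply hab; group
  have hb1 : b ≠ 1 := by rintro rfl; apply hab; group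
  have hα1 : 1 ≤ α := by
    by_contra h
    have h0 : α = 0 := by omega
    rw [h0, pow_zero] at hα
    exact ha1 (orderOf_eq_one_iff.mp hα)
  have hβ1 : 1 ≤ β := by
    by_contra h
    have h0 : β = 0 := by omega
    rw [h0, pow_zero] at hβ
    exact hb1 (orderOf_eq_one_iff.mp hβ)
  have hfina : IsOfFinOrder a := by
    rw [← orderOf_pos_iff, hα]; exact pow_pos hp.pos α
  have hfinb : IsOfFinOrder b := by
    rw [← orderOf_pos_iff, hβ]; exact pow_pos hp.pos β
  -- order of a^p
  have hordap : orderOf (a ^ p) = p ^ (α - 1) := by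
    rw [hfina.orderOf_pow, hα, Nat.gcd_comm,
      Nat.gcd_eq_left (dvd_pow_self p (by omega : α ≠ 0))]
    rw [show p ^ α = p ^ (α - 1) * p by rw [← pow_succ]; congr 1; omega,
      Nat.mul_div_cancel _ hp.pos]
  have hordbp : orderOf (b ^ p) = p ^ (β - 1) := by
    rw [hfinb.orderOf_pow, hβ, Nat.gcd_comm,
      Nat.gcd_eq_left (dvd_pow_self p (by omega : β ≠ 0))]
    rw [show p ^ β = p ^ (β - 1) * p by rw [← pow_succ]; congr 1; omega,
      Nat.mul_div_cancel _ hp.pos]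
  -- c has order p
  have hcp : c ^ p = 1 := by
    by_contra hcp
    have hconjp : b⁻¹ * a ^ p * b = a ^ p * c ^ p := by
      have h1 : b⁻¹ * a ^ p * b = (b⁻¹ * a * b) ^ p := by
        rw [show b⁻¹ * a * b = (MulAut.conj b⁻¹) a by simp [MulAut.conj_apply], ← map_pow]
        simp [MulAut.conj_apply]
      rw [h1, hconj, hcomm_ac.mul_pow]
    have hnc : a ^ p * b ≠ b * a ^ p := by
      intro heq
      apply hcp
      have : b⁻¹ * a ^ p * b = a ^ p := by
        calc b⁻¹ * a ^ p * b = b⁻¹ * (a ^ p * b) := by group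
        _ = b⁻¹ * (b * a ^ p) := by rw [heq]
        _ = a ^ p := by group
      rw [hconjp] at this
      exact mul_left_cancel (by rw [this, mul_one])
    have := hmin (a ^ p) b hnc
    rw [hordap] at this
    have h3 : p ^ (α - 1) < p ^ α := Nat.pow_lt_pow_right hp.one_lt (by omega)
    omega
  have hordc : orderOf c = p := by
    rcases hp.eq_one_or_self_of_dvd _ (orderOf_dvd_of_pow_eq_one hcp) with h | h
    · exact absurd (orderOf_eq_one_iff.mp h) hc1
    · exact h
  -- α, β ≥ 2
  have hα2 : 2 ≤ α := by
    by_contra h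
    have hordA : orderOf a = p := by
      rw [show α = 1 by omega, pow_one] at hα; exact hα
    have ha_in : a ∈ Subgroup.zpowers c := aux_mem_zpowers_symm hp hordA hca hc1
    have : a ∈ Subgroup.zpowers b := Subgroup.zpowers_le.mpr hcb ha_in
    obtain ⟨k, hk⟩ := Subgroup.mem_zpowers_iff.mp this
    apply hab
    rw [← hk]
    exact ((Commute.refl b).zpow_left k).eq
  have hβ2 : 2 ≤ β := by
    by_contra h
    have hordB : orderOf b = p := by
      rw [show β = 1 by omega, pow_one] at hβ; exact hβ
    have hb_in : b ∈ Subgroup.zpowers c := aux_mem_zpowers_symm hp hordB hcb hc1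
    have : b ∈ Subgroup.zpowers a := Subgroup.zpowers_le.mpr hca hb_in
    obtain ⟨k, hk⟩ := Subgroup.mem_zpowers_iff.mp this
    apply hab
    rw [← hk]
    exact ((Commute.refl a).zpow_left k).symm.eq
  -- the elements w_a = a^(p^(α-1)), w_b = b^(p^(β-1)) of order p, and c in terms of them
  have hordwa : orderOf (a ^ (p ^ (α - 1))) = p := by
    rw [hfina.orderOf_pow, hα, Nat.gcd_comm,
      Nat.gcd_eq_left (pow_dvd_pow p (by omega : α - 1 ≤ α))]
    rw [show p ^ α = p ^ (α - 1) * p by rw [← pow_succ]; congr 1; omega,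
      Nat.mul_div_cancel_left _ (pow_pos hp.pos _)]
  have hordwb : orderOf (b ^ (p ^ (β - 1))) = p := by
    rw [hfinb.orderOf_pow, hβ, Nat.gcd_comm,
      Nat.gcd_eq_left (pow_dvd_pow p (by omega : β - 1 ≤ β))]
    rw [show p ^ β = p ^ (β - 1) * p by rw [← pow_succ]; congr 1; omega,
      Nat.mul_div_cancel_left _ (pow_pos hp.pos _)]
  have hzp_ord : ∀ (x : Q) (E : ℤ), ((orderOf x : ℤ)) ∣ E → x ^ E = 1 := by
    intro x E hE
    exact orderOf_dvd_iff_zpow_eq_one.mp hE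
  have hcz : ∀ E : ℤ, ((p:ℤ)) ∣ E → c ^ E = 1 := by
    intro E hE
    exact hzp_ord c E (by rw [hordc]; exact hE)
  have hmem_pow_p : ∀ (x : Q) (γ : ℕ), orderOf x = p ^ γ → 1 ≤ γ →
      c ∈ Subgroup.zpowers x → c ∈ Subgroup.zpowers (x ^ (p ^ (γ - 1))) := by
    intro x γ hx hγ hcx
    obtain ⟨k, hk⟩ := Subgroup.mem_zpowers_iff.mp hcx
    have hkp : x ^ (k * (p:ℤ)) = 1 := by
      rw [zpow_mul, hk]
      rw [zpow_natCast, hcp]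
    have hdvd : ((p:ℤ) ^ γ) ∣ k * (p:ℤ) := by
      have := orderOf_dvd_iff_zpow_eq_one.mpr hkp
      rw [hx] at this
      exact_mod_cast this
    have hsplit : ((p:ℤ)) ^ γ = (p:ℤ) ^ (γ - 1) * (p:ℤ) := by
      rw [← pow_succ]; congr 1; omega
    have hdvd2 : ((p:ℤ) ^ (γ - 1)) ∣ k := by
      rw [hsplit] at hdvd
      exact (mul_dvd_mul_iff_right
        (by exact_mod_cast hp.pos.ne' : ((p:ℤ)) ≠ 0)).mp hdvd
    obtain ⟨k', hk'⟩ := hdvd2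
    refine Subgroup.mem_zpowers_iff.mpr ⟨k', ?_⟩
    rw [← zpow_natCast x, ← zpow_mul]
    rw [← hk, hk']
    congr 1
  have hcwa : c ∈ Subgroup.zpowers (a ^ (p ^ (α - 1))) := hmem_pow_p a α hα (by omega) hca
  have hcwb : c ∈ Subgroup.zpowers (b ^ (p ^ (β - 1))) := hmem_pow_p b β hβ (by omega) hcb
  obtain ⟨s₁, hs₁⟩ := Subgroup.mem_zpowers_iff.mp
    (aux_mem_zpowers_symm hp hordwa hcwa hc1)
  obtain ⟨t₁, ht₁⟩ := Subgroup.mem_zpowers_iff.mp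
    (aux_mem_zpowers_symm hp hordwb hcwb hc1)
  -- hs₁ : c ^ s₁ = a ^ (p ^ (α-1)),  ht₁ : c ^ t₁ = b ^ (p ^ (β-1))
  have hps₁ : ¬ ((p:ℤ) ∣ s₁) := by
    intro hd
    have : (a ^ (p ^ (α - 1))) = 1 := by rw [← hs₁]; exact hcz s₁ hd
    rw [← orderOf_eq_one_iff] at this
    rw [hordwa] at this
    exact hp.one_lt.ne' this
  have hpt₁ : ¬ ((p:ℤ) ∣ t₁) := by
    intro hd
    have : (b ^ (p ^ (β - 1))) = 1 := by rw [← ht₁]; exact hcz t₁ hd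
    rw [← orderOf_eq_one_iff] at this
    rw [hordwb] at this
    exact hp.one_lt.ne' this
  -- solving linear congruences mod p
  have hsolve : ∀ s t : ℤ, ¬((p:ℤ) ∣ s) → ∃ r : ℤ, ((p:ℤ)) ∣ (t + r * s) := by
    intro s t hs
    obtain ⟨u, v, huv⟩ :=
      (Prime.coprime_iff_not_dvd (Nat.prime_iff_prime_int.mp hp)).mpr hs
    exact ⟨-t * v, ⟨t * u, by linear_combination (-t) * huv⟩⟩
  -- reduction lemmas contradicting minimality
  have hred : ∀ r : ℤ, (a * b ^ r) ^ (p ^ (α - 1)) ≠ 1 := by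
    intro r hr
    have hcomm_brc : Commute (b ^ r) c := (hcomm_bc.symm.zpow_right r).symm
    have hnc : (a * b ^ r) * b ≠ b * (a * b ^ r) := by
      intro heq
      apply hc1
      have h1 : b * (a * b ^ r) = (a * b ^ (r+1)) * c⁻¹ := by
        calc b * (a * b ^ r) = (b * a) * b ^ r := by group
        _ = (a * b * c⁻¹) * b ^ r := by rw [← hba]
        _ = a * b * (c⁻¹ * b ^ r) := by group
        _ = a * b * (b ^ r * c⁻¹) := by rw [(hcomm_brc.inv_right.symm).eq]
        _ = (a * (b * b ^ r)) * c⁻¹ := by group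
        _ = (a * b ^ (r+1)) * c⁻¹ := by rw [← zpow_one_add b r, add_comm]
      have h2 : (a * b ^ r) * b = a * b ^ (r+1) := by
        rw [mul_assoc, ← zpow_add_one b r]
      rw [h2, h1] at heq
      have h3 : (a * b ^ (r+1)) * 1 = (a * b ^ (r+1)) * c⁻¹ := by
        rw [mul_one]; exact heq
      have h4 : (1:Q) = c⁻¹ := mul_left_cancel h3
      simpa using h4.symm
    have hle := hmin (a * b ^ r) b hnc
    have h1 : orderOf (a * b ^ r) ∣ p ^ (α - 1) := orderOf_dvd_of_pow_eq_one hr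
    have h2 : orderOf (a * b ^ r) ≤ p ^ (α - 1) := Nat.le_of_dvd (pow_pos hp.pos _) h1
    have h3 : p ^ (α - 1) < p ^ α := Nat.pow_lt_pow_right hp.one_lt (by omega)
    rw [hα] at hle
    omega
  have hred' : ∀ r : ℤ, (b * a ^ r) ^ (p ^ (β - 1)) ≠ 1 := by
    intro r hr
    have hcomm_arc : Commute (a ^ r) c := (hcomm_ac.symm.zpow_right r).symm
    have hnc : (b * a ^ r) * a ≠ a * (b * a ^ r) := by
      intro heq
      apply hc1
      have h1 : a * (b * a ^ r) = (b * a ^ (r+1)) * c := by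
        calc a * (b * a ^ r) = (a * b) * a ^ r := by group
        _ = (b * a * c) * a ^ r := by rw [← hrel]
        _ = b * a * (c * a ^ r) := by group
        _ = b * a * (a ^ r * c) := by rw [hcomm_arc.symm.eq]
        _ = (b * (a * a ^ r)) * c := by group
        _ = (b * a ^ (r+1)) * c := by rw [← zpow_one_add a r, add_comm]
      have h2 : (b * a ^ r) * a = b * a ^ (r+1) := by
        rw [mul_assoc, ← zpow_add_one a r]
      rw [h2, h1] at heq
      have h3 : (b * a ^ (r+1)) * 1 = (b * a ^ (r+1)) * c := by
        rw [mul_one]; exact heq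
      exact (mul_left_cancel h3).symm
    have hle := hmin (b * a ^ r) a hnc
    have h1 : orderOf (b * a ^ r) ∣ p ^ (β - 1) := orderOf_dvd_of_pow_eq_one hr
    have h2 : orderOf (b * a ^ r) ≤ p ^ (β - 1) := Nat.le_of_dvd (pow_pos hp.pos _) h1
    have h3 : p ^ (β - 1) < p ^ β := Nat.pow_lt_pow_right hp.one_lt (by omega)
    rw [hβ] at hle
    omega
  -- conjugation of zpowers
  have hconj_bj : ∀ j : ℤ, a⁻¹ * b ^ j * a = b ^ j * c ^ (-j) := by
    intro j
    have h1 : a⁻¹ * b ^ j * a = (a⁻¹ * b * a) ^ j := by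
      rw [show a⁻¹ * b * a = (MulAut.conj a⁻¹) b by simp [MulAut.conj_apply], ← map_zpow]
      simp [MulAut.conj_apply]
    rw [h1, hconj', (hcomm_bc.inv_right.mul_zpow j), zpow_neg, inv_zpow]
  have hconj_aj : ∀ i : ℤ, b⁻¹ * a ^ i * b = a ^ i * c ^ i := by
    intro i
    have h1 : b⁻¹ * a ^ i * b = (b⁻¹ * a * b) ^ i := by
      rw [show b⁻¹ * a * b = (MulAut.conj b⁻¹) a by simp [MulAut.conj_apply], ← map_zpow]
      simp [MulAut.conj_apply]
    rw [h1, hconj, hcomm_ac.mul_zpow i]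
  -- expansion of (a * b^r)^n and (b * a^r)^n
  have hexp : ∀ (r : ℤ) (n : ℕ),
      (a * b ^ r) ^ n = a ^ n * b ^ (r * n) * c ^ (-(r * (n.choose 2 : ℤ))) := by
    intro r n
    have hyx : (b ^ r) * a = a * (b ^ r) * c ^ (-r) := by
      have := hconj_bj r
      calc (b ^ r) * a = a * (a⁻¹ * b ^ r * a) := by group
      _ = a * (b ^ r * c ^ (-r)) := by rw [this]
      _ = a * (b ^ r) * c ^ (-r) := by group
    have hzx : Commute a (c ^ (-r)) := hcomm_ac.zpow_right _
    have hzy : Commute (b ^ r) (c ^ (-r)) := ((hcomm_bc.symm.zpow_right r).symm).zpow_right _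
    have := aux_mul_pow a (b ^ r) (c ^ (-r)) hyx hzx hzy n
    rw [this]
    congr 1
    · congr 1
      rw [← zpow_natCast (b ^ r), ← zpow_mul]
    · rw [← zpow_natCast (c ^ (-r)), ← zpow_mul]
      congr 1
      ring
  have hexp' : ∀ (r : ℤ) (n : ℕ),
      (b * a ^ r) ^ n = b ^ n * a ^ (r * n) * c ^ (r * (n.choose 2 : ℤ)) := by
    intro r n
    have hyx : (a ^ r) * b = b * (a ^ r) * c ^ r := by
      have := hconj_aj r
      calc (a ^ r) * b = b * (b⁻¹ * a ^ r * b) := by group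
      _ = b * (a ^ r * c ^ r) := by rw [this]
      _ = b * (a ^ r) * c ^ r := by group
    have hzx : Commute b (c ^ r) := hcomm_bc.zpow_right _
    have hzy : Commute (a ^ r) (c ^ r) := ((hcomm_ac.symm.zpow_right r).symm).zpow_right _
    have := aux_mul_pow b (a ^ r) (c ^ r) hyx hzx hzy n
    rw [this]
    congr 1
    · congr 1
      rw [← zpow_natCast (a ^ r), ← zpow_mul]
    · rw [← zpow_natCast (c ^ r), ← zpow_mul]
  -- exclude case α < β
  have hcase1 : ¬ (α < β) := by
    intro hlt
    obtain ⟨r₀, hr₀⟩ := hsolve t₁ s₁ hpt₁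
    apply hred ((p:ℤ) ^ (β - α) * r₀)
    rw [hexp ((p:ℤ) ^ (β - α) * r₀) (p ^ (α - 1)), ← hs₁]
    have hexpo : ((p:ℤ) ^ (β - α) * r₀) * ((p ^ (α - 1) : ℕ) : ℤ)
        = ((p ^ (β - 1) : ℕ) : ℤ) * r₀ := by
      push_cast
      rw [show ((p:ℤ) ^ (β - α) * r₀) * (p:ℤ) ^ (α - 1)
        = (p:ℤ) ^ ((β - α) + (α - 1)) * r₀ by rw [pow_add]; ring]
      rw [show (β - α) + (α - 1) = β - 1 by omega]
    have hb' : b ^ (((p:ℤ) ^ (β - α) * r₀) * ((p ^ (α - 1) : ℕ) : ℤ))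
        = c ^ (t₁ * r₀) := by
      rw [hexpo, zpow_mul, zpow_natCast, ← ht₁, ← zpow_mul]
    rw [hb', ← zpow_add, ← zpow_add]
    apply hcz
    have hd1 : (p:ℤ) ∣ s₁ + t₁ * r₀ := by rw [mul_comm t₁ r₀]; exact hr₀
    have hd2 : (p:ℤ) ∣ ((p:ℤ) ^ (β - α) * r₀) * (((p ^ (α - 1)).choose 2 : ℕ) : ℤ) := by
      exact Dvd.dvd.mul_right
        (Dvd.dvd.mul_right (dvd_pow_self (p:ℤ) (by omega : β - α ≠ 0)) r₀) _
    exact dvd_add hd1 (dvd_neg.mpr hd2)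
  -- exclude case β < α
  have hcase2 : ¬ (β < α) := by
    intro hlt
    obtain ⟨r₀, hr₀⟩ := hsolve s₁ t₁ hps₁
    apply hred' ((p:ℤ) ^ (α - β) * r₀)
    rw [hexp' ((p:ℤ) ^ (α - β) * r₀) (p ^ (β - 1)), ← ht₁]
    have hexpo : ((p:ℤ) ^ (α - β) * r₀) * ((p ^ (β - 1) : ℕ) : ℤ)
        = ((p ^ (α - 1) : ℕ) : ℤ) * r₀ := by
      push_cast
      rw [show ((p:ℤ) ^ (α - β) * r₀) * (p:ℤ) ^ (β - 1)
        = (p:ℤ) ^ ((α - β) + (β - 1)) * r₀ by rw [pow_add]; ring]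
      rw [show (α - β) + (β - 1) = α - 1 by omega]
    have ha' : a ^ (((p:ℤ) ^ (α - β) * r₀) * ((p ^ (β - 1) : ℕ) : ℤ))
        = c ^ (s₁ * r₀) := by
      rw [hexpo, zpow_mul, zpow_natCast, ← hs₁, ← zpow_mul]
    rw [ha', ← zpow_add, ← zpow_add]
    apply hcz
    have hd1 : (p:ℤ) ∣ t₁ + s₁ * r₀ := by rw [mul_comm s₁ r₀]; exact hr₀
    have hd2 : (p:ℤ) ∣ ((p:ℤ) ^ (α - β) * r₀) * (((p ^ (β - 1)).choose 2 : ℕ) : ℤ) := by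
      exact Dvd.dvd.mul_right
        (Dvd.dvd.mul_right (dvd_pow_self (p:ℤ) (by omega : α - β ≠ 0)) r₀) _
    exact dvd_add hd1 hd2
  have hαβ : α = β := by omega
  subst hαβ
  clear hcase1 hcase2 hred' hexp' hcwa hcwb hordap hordbp
  -- now show p = 2 and α = 2
  have h2C : 2 * ((p ^ (α - 1)).choose 2) = p ^ (α - 1) * (p ^ (α - 1) - 1) := by
    rw [Nat.choose_two_right]
    apply Nat.mul_div_cancel'
    rcases Nat.even_or_odd (p ^ (α - 1)) with he | ho
    · exact Dvd.dvd.mul_right he.two_dvd _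
    · have h1 : 1 ≤ p ^ (α - 1) := Nat.one_le_iff_ne_zero.mpr (pow_ne_zero _ hp.pos.ne')
      have : Even (p ^ (α - 1) - 1) := Nat.Odd.sub_odd ho odd_one
      exact Dvd.dvd.mul_left this.two_dvd _
  have hterm : p = 2 ∧ α = 2 := by
    by_contra hPC
    have hdC : p ∣ (p ^ (α - 1)).choose 2 := by
      rcases eq_or_ne p 2 with hp2 | hp2
      · -- p = 2, so α ≥ 3
        have hα3 : 3 ≤ α := by
          rcases Nat.lt_or_ge α 3 with h | h
          · exfalso; exact hPC ⟨hp2, by omega⟩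
          · exact h
        subst hp2
        have hn2 : (2:ℕ) ^ (α - 1) = 2 ^ (α - 2) * 2 := by
          rw [← pow_succ]; congr 1; omega
        have h2C' : 2 * ((2 ^ (α - 1)).choose 2)
            = 2 * (2 ^ (α - 2) * (2 ^ (α - 1) - 1)) := by
          rw [h2C]
          calc 2 ^ (α - 1) * (2 ^ (α - 1) - 1)
              = (2 ^ (α - 2) * 2) * (2 ^ (α - 1) - 1) := by rw [← hn2]
            _ = 2 * (2 ^ (α - 2) * (2 ^ (α - 1) - 1)) := by ring
        have hCeq := Nat.eq_of_mul_eq_mul_left (by norm_num) h2C'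
        rw [hCeq]
        exact Dvd.dvd.mul_right (dvd_pow_self 2 (by omega : α - 2 ≠ 0)) _
      · -- p odd
        have hpn : p ∣ p ^ (α - 1) := dvd_pow_self p (by omega : α - 1 ≠ 0)
        have : p ∣ 2 * ((p ^ (α - 1)).choose 2) := by
          rw [h2C]; exact Dvd.dvd.mul_right hpn _
        rcases (Nat.Prime.dvd_mul hp).mp this with h | h
        · exact absurd ((Nat.prime_dvd_prime_iff_eq hp Nat.prime_two).mp h) hp2
        · exact h
    -- run the reduction with r₀
    have hptC : ¬ ((p:ℤ) ∣ (t₁ - (((p ^ (α - 1)).choose 2 : ℕ) : ℤ))) := by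
      intro hd
      apply hpt₁
      have : t₁ = (t₁ - (((p ^ (α - 1)).choose 2 : ℕ) : ℤ))
          + (((p ^ (α - 1)).choose 2 : ℕ) : ℤ) := by ring
      rw [this]
      exact dvd_add hd (Int.natCast_dvd_natCast.mpr hdC)
    obtain ⟨r₀, hr₀⟩ := hsolve _ s₁ hptC
    apply hred r₀
    rw [hexp r₀ (p ^ (α - 1)), ← hs₁]
    have hb' : b ^ (r₀ * ((p ^ (α - 1) : ℕ) : ℤ)) = c ^ (t₁ * r₀) := by
      rw [mul_comm, zpow_mul, zpow_natCast, ← ht₁, ← zpow_mul]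
    rw [hb', ← zpow_add, ← zpow_add]
    apply hcz
    have : s₁ + t₁ * r₀ + -(r₀ * (((p ^ (α - 1)).choose 2 : ℕ) : ℤ))
        = s₁ + r₀ * (t₁ - (((p ^ (α - 1)).choose 2 : ℕ) : ℤ)) := by ring
    rw [this]
    exact hr₀
  obtain ⟨hp2, hα2'⟩ := hterm
  subst hp2
  subst hα2'
  -- now orderOf a = orderOf b = 4, c = a² = b², c² = 1
  have h21 : (2:ℕ) ^ (2 - 1) = 2 := by norm_num
  rw [h21] at hs₁ ht₁ hordwa hordwb
  have hcz2 : c ^ (2:ℤ) = 1 := by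
    rw [zpow_two, ← pow_two]
    rw [← hordc, pow_orderOf_eq_one]
  have hceq : ∀ x : Q, orderOf x = 2 → c ∈ Subgroup.zpowers x → c = x := by
    intro x hx hcx
    obtain ⟨k, hk⟩ := Subgroup.mem_zpowers_iff.mp hcx
    have hx2 : x ^ (2:ℤ) = 1 := by
      rw [zpow_two, ← pow_two, ← hx, pow_orderOf_eq_one]
    rcases Int.even_or_odd k with ⟨m, hm⟩ | ⟨m, hm⟩
    · exfalso
      apply hc1
      rw [← hk, hm, show m + m = 2 * m by ring, zpow_mul, hx2, one_zpow]
    · rw [← hk, hm, zpow_add, zpow_mul, hx2, one_zpow, one_mul, zpow_one]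
  have hca2 : c = a ^ (2:ℕ) := by
    apply hceq _ hordwa
    obtain ⟨k, hk⟩ := Subgroup.mem_zpowers_iff.mp hca
    -- c = a^k with k = 2k' (since c² = 1 and orderOf a = 4)
    have hkp : a ^ (k * 2) = 1 := by
      rw [zpow_mul, hk, hcz2]
    have hdvd : ((4:ℤ)) ∣ k * 2 := by
      have := orderOf_dvd_iff_zpow_eq_one.mpr hkp
      rw [hα] at this
      exact_mod_cast this
    have hdvd2 : (2:ℤ) ∣ k := by omega
    obtain ⟨k', hk'⟩ := hdvd2
    refine Subgroup.mem_zpowers_iff.mpr ⟨k', ?_⟩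
    rw [← zpow_natCast a, ← zpow_mul, ← hk, hk']
    norm_num
  have hcb2 : c = b ^ (2:ℕ) := by
    apply hceq _ hordwb
    obtain ⟨k, hk⟩ := Subgroup.mem_zpowers_iff.mp hcb
    have hkp : b ^ (k * 2) = 1 := by
      rw [zpow_mul, hk, hcz2]
    have hdvd : ((4:ℤ)) ∣ k * 2 := by
      have := orderOf_dvd_iff_zpow_eq_one.mpr hkp
      rw [hβ] at this
      exact_mod_cast this
    have hdvd2 : (2:ℤ) ∣ k := by omega
    obtain ⟨k', hk'⟩ := hdvd2
    refine Subgroup.mem_zpowers_iff.mpr ⟨k', ?_⟩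
    rw [← zpow_natCast b, ← zpow_mul, ← hk, hk']
    norm_num
  have hcodd : ∀ e : ℤ, Odd e → c ^ e = c := by
    rintro e ⟨m, hm⟩
    rw [hm, zpow_add, zpow_mul, hcz2, one_zpow, one_mul, zpow_one]
  -- conjugation helpers
  have hconjc : ∀ (g : Q) (e : ℤ), Commute g c → g⁻¹ * c ^ e * g = c ^ e := by
    intro g e hg
    have h := (hg.zpow_right e).eq
    calc g⁻¹ * c ^ e * g = g⁻¹ * (c ^ e * g) := by group
      _ = g⁻¹ * (g * c ^ e) := by rw [← h]
      _ = c ^ e := by group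
  have hconjc' : ∀ (g : Q) (e : ℤ), Commute g c → g * c ^ e * g⁻¹ = c ^ e := by
    intro g e hg
    have h := (hg.zpow_right e).eq
    calc g * c ^ e * g⁻¹ = (g * c ^ e) * g⁻¹ := by group
      _ = (c ^ e * g) * g⁻¹ := by rw [h]
      _ = c ^ e := by group
  have hconj_bj' : ∀ j : ℤ, a * b ^ j * a⁻¹ = b ^ j * c ^ j := by
    intro j
    have h2 : a * (a⁻¹ * b ^ j * a) * a⁻¹ = b ^ j := by group
    rw [hconj_bj j] at h2
    have h3 : a * (b ^ j * c ^ (-j)) * a⁻¹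
        = (a * b ^ j * a⁻¹) * (a * c ^ (-j) * a⁻¹) := by group
    rw [h3, hconjc' a (-j) hcomm_ac] at h2
    calc a * b ^ j * a⁻¹ = ((a * b ^ j * a⁻¹) * c ^ (-j)) * c ^ j := by
          rw [mul_assoc (a * b ^ j * a⁻¹), ← zpow_add, show -j + j = 0 by ring,
            zpow_zero, mul_one]
      _ = b ^ j * c ^ j := by rw [h2]
  have key : ∀ (i j : ℤ), a ^ (-i) * b ^ j * a ^ i = b ^ j * c ^ (-(j * i)) := by
    intro i
    induction i using Int.induction_on with
    | zero => intro j; simp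
    | succ n ih =>
      intro j
      calc a ^ (-((n:ℤ) + 1)) * b ^ j * a ^ ((n:ℤ) + 1)
          = a ^ (-(n:ℤ)) * (a⁻¹ * b ^ j * a) * a ^ (n:ℤ) := by group
        _ = a ^ (-(n:ℤ)) * (b ^ j * c ^ (-j)) * a ^ (n:ℤ) := by rw [hconj_bj j]
        _ = (a ^ (-(n:ℤ)) * b ^ j * a ^ (n:ℤ))
            * ((a ^ (n:ℤ))⁻¹ * c ^ (-j) * a ^ (n:ℤ)) := by group
        _ = (b ^ j * c ^ (-(j * (n:ℤ)))) * c ^ (-j) := by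
            rw [ih j, hconjc (a ^ (n:ℤ)) (-j) (hcomm_ac.zpow_left n)]
        _ = b ^ j * c ^ (-(j * ((n:ℤ) + 1))) := by
            rw [mul_assoc, ← zpow_add]
            congr 1
            ring
    | pred n ih =>
      intro j
      calc a ^ (-(-(n:ℤ) - 1)) * b ^ j * a ^ (-(n:ℤ) - 1)
          = a ^ (n:ℤ) * (a * b ^ j * a⁻¹) * a ^ (-(n:ℤ)) := by group
        _ = a ^ (n:ℤ) * (b ^ j * c ^ j) * a ^ (-(n:ℤ)) := by rw [hconj_bj' j]
        _ = (a ^ (-(-(n:ℤ))) * b ^ j * a ^ (-(n:ℤ)))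
            * ((a ^ (-(n:ℤ)))⁻¹ * c ^ j * a ^ (-(n:ℤ))) := by group
        _ = (b ^ j * c ^ (-(j * (-(n:ℤ))))) * c ^ j := by
            rw [ih j, hconjc (a ^ (-(n:ℤ))) j (hcomm_ac.zpow_left (-(n:ℤ)))]
        _ = b ^ j * c ^ (-(j * (-(n:ℤ) - 1))) := by
            rw [mul_assoc, ← zpow_add]
            congr 1
            ring
  have hswap : ∀ i j : ℤ, b ^ j * a ^ i = a ^ i * b ^ j * c ^ (-(j * i)) := by
    intro i j
    calc b ^ j * a ^ i = a ^ i * (a ^ (-i) * b ^ j * a ^ i) := by group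
      _ = a ^ i * (b ^ j * c ^ (-(j * i))) := by rw [key i j]
      _ = a ^ i * b ^ j * c ^ (-(j * i)) := by group
  have hcomm_abij : ∀ i j : ℤ, Commute (a ^ i * b ^ j) c :=
    fun i j => (hcomm_ac.zpow_left i).mul_left (hcomm_bc.zpow_left j)
  -- representation of elements of the closure
  have hrep : ∀ w ∈ Subgroup.closure ({a, b} : Set Q), ∃ i j k : ℤ,
      w = a ^ i * b ^ j * c ^ k := by
    intro w hw
    induction hw using Subgroup.closure_induction with
    | mem x hx =>
      rcases hx with hx | hx
      · exact ⟨1, 0, 0, by simp [hx]⟩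
      · exact ⟨0, 1, 0, by simp [show x = b from hx]⟩
    | one => exact ⟨0, 0, 0, by simp⟩
    | mul x y hxc hyc ihx ihy =>
      obtain ⟨i, j, k, rfl⟩ := ihx
      obtain ⟨i', j', k', rfl⟩ := ihy
      refine ⟨i + i', j + j', -(j * i') + (k + k'), ?_⟩
      have step1 : c ^ k * (a ^ i' * b ^ j') = (a ^ i' * b ^ j') * c ^ k :=
        ((hcomm_abij i' j').zpow_right k).symm.eq
      have step2 : c ^ (-(j * i')) * b ^ j' = b ^ j' * c ^ (-(j * i')) :=
        ((hcomm_bc.zpow_left j').zpow_right (-(j * i'))).symm.eq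
      calc (a ^ i * b ^ j * c ^ k) * (a ^ i' * b ^ j' * c ^ k')
          = a ^ i * b ^ j * (c ^ k * (a ^ i' * b ^ j')) * c ^ k' := by group
        _ = a ^ i * b ^ j * ((a ^ i' * b ^ j') * c ^ k) * c ^ k' := by rw [step1]
        _ = a ^ i * (b ^ j * a ^ i') * b ^ j' * (c ^ k * c ^ k') := by group
        _ = a ^ i * (a ^ i' * b ^ j * c ^ (-(j * i'))) * b ^ j' * (c ^ k * c ^ k') := by
            rw [hswap i' j]
        _ = (a ^ i * a ^ i') * b ^ j * (c ^ (-(j * i')) * b ^ j') * (c ^ k * c ^ k') := by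
            group
        _ = (a ^ i * a ^ i') * b ^ j * (b ^ j' * c ^ (-(j * i'))) * (c ^ k * c ^ k') := by
            rw [step2]
        _ = (a ^ i * a ^ i') * (b ^ j * b ^ j') * (c ^ (-(j * i')) * (c ^ k * c ^ k')) := by
            group
        _ = a ^ (i + i') * b ^ (j + j') * c ^ (-(j * i') + (k + k')) := by
            rw [← zpow_add, ← zpow_add, ← zpow_add, ← zpow_add]
    | inv x hxc ihx =>
      obtain ⟨i, j, k, rfl⟩ := ihx
      refine ⟨-i, -j, -(-j * -i) + -k, ?_⟩
      have step1 : c ^ (-k) * (b ^ (-j) * a ^ (-i)) = (b ^ (-j) * a ^ (-i)) * c ^ (-k) :=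
        (((hcomm_bc.zpow_left (-j)).mul_left (hcomm_ac.zpow_left (-i))).zpow_right
          (-k)).symm.eq
      calc (a ^ i * b ^ j * c ^ k)⁻¹ = c ^ (-k) * (b ^ (-j) * a ^ (-i)) := by group
        _ = (b ^ (-j) * a ^ (-i)) * c ^ (-k) := by rw [step1]
        _ = (a ^ (-i) * b ^ (-j) * c ^ (-(-j * -i))) * c ^ (-k) := by rw [hswap (-i) (-j)]
        _ = a ^ (-i) * b ^ (-j) * c ^ (-(-j * -i) + -k) := by group
  -- the key property
  have haz : a ^ ((2:ℤ)) = c := by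
    rw [show (2:ℤ) = ((2:ℕ):ℤ) by norm_num, zpow_natCast, ← hca2]
  have hbz : b ^ ((2:ℤ)) = c := by
    rw [show (2:ℤ) = ((2:ℕ):ℤ) by norm_num, zpow_natCast, ← hcb2]
  have hkey : ∀ w ∈ Subgroup.closure ({a, b} : Set Q), w ≠ 1 →
      c ∈ Subgroup.zpowers w := by
    intro w hw hw1
    obtain ⟨i, j, k, rfl⟩ := hrep w hw
    rcases Int.even_or_odd j with hj | hj
    · rcases Int.even_or_odd i with hi | hi
      · -- both even: w is a power of c
        obtain ⟨mi, hmi⟩ := hi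
        obtain ⟨mj, hmj⟩ := hj
        have hwc : a ^ i * b ^ j * c ^ k = c ^ (mi + mj + k) := by
          rw [hmi, hmj, show mi + mi = 2 * mi by ring, show mj + mj = 2 * mj by ring,
            zpow_mul, zpow_mul, haz, hbz, ← zpow_add, ← zpow_add]
        rcases Int.even_or_odd (mi + mj + k) with ⟨t, ht⟩ | hodd
        · exfalso
          apply hw1
          rw [hwc, ht, show t + t = 2 * t by ring, zpow_mul, hcz2, one_zpow]
        · rw [hwc, hcodd _ hodd]
          exact Subgroup.mem_zpowers _
      · -- i odd : conjugate by b
        have hstep : b⁻¹ * (a ^ i * b ^ j * c ^ k) * b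
            = (b⁻¹ * a ^ i * b) * (b ^ j) * (b⁻¹ * c ^ k * b) := by group
        have hconjw : b⁻¹ * (a ^ i * b ^ j * c ^ k) * b
            = (a ^ i * b ^ j * c ^ k) * c ^ i := by
          rw [hstep, hconj_aj i, hconjc b k hcomm_bc]
          calc (a ^ i * c ^ i) * b ^ j * c ^ k
              = a ^ i * (c ^ i * b ^ j) * c ^ k := by group
            _ = a ^ i * (b ^ j * c ^ i) * c ^ k := by
                rw [((hcomm_bc.zpow_left j).zpow_right i).symm.eq]
            _ = (a ^ i * b ^ j * c ^ k) * c ^ i := by group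
        have hmemconj : b⁻¹ * (a ^ i * b ^ j * c ^ k) * b
            ∈ Subgroup.zpowers (a ^ i * b ^ j * c ^ k) := by
          have := (hded (Subgroup.zpowers (a ^ i * b ^ j * c ^ k))).conj_mem _
            (Subgroup.mem_zpowers _) b⁻¹
          simpa using this
        have hci : c ^ i ∈ Subgroup.zpowers (a ^ i * b ^ j * c ^ k) := by
          have h3 : c ^ i = (a ^ i * b ^ j * c ^ k)⁻¹
              * (b⁻¹ * (a ^ i * b ^ j * c ^ k) * b) := by
            rw [hconjw]; group
          rw [h3]
          exact Subgroup.mul_mem _ (Subgroup.inv_mem _ (Subgroup.mem_zpowers _)) hmemconj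
        rwa [hcodd i hi] at hci
    · -- j odd : conjugate by a
      have hstep : a⁻¹ * (a ^ i * b ^ j * c ^ k) * a
          = (a ^ i) * (a⁻¹ * b ^ j * a) * (a⁻¹ * c ^ k * a) := by group
      have hconjw : a⁻¹ * (a ^ i * b ^ j * c ^ k) * a
          = (a ^ i * b ^ j * c ^ k) * c ^ (-j) := by
        rw [hstep, hconj_bj j, hconjc a k hcomm_ac]
        group
      have hmemconj : a⁻¹ * (a ^ i * b ^ j * c ^ k) * a
          ∈ Subgroup.zpowers (a ^ i * b ^ j * c ^ k) := by
        have := (hded (Subgroup.zpowers (a ^ i * b ^ j * c ^ k))).conj_mem _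
          (Subgroup.mem_zpowers _) a⁻¹
        simpa using this
      have hci : c ^ (-j) ∈ Subgroup.zpowers (a ^ i * b ^ j * c ^ k) := by
        have h3 : c ^ (-j) = (a ^ i * b ^ j * c ^ k)⁻¹
            * (a⁻¹ * (a ^ i * b ^ j * c ^ k) * a) := by
          rw [hconjw]; group
        rw [h3]
        exact Subgroup.mul_mem _ (Subgroup.inv_mem _ (Subgroup.mem_zpowers _)) hmemconj
      rwa [hcodd (-j) hj.neg] at hci
  have hamem : a ∈ Subgroup.closure ({a, b} : Set Q) := Subgroup.subset_closure (by simp)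
  have hbmem : b ∈ Subgroup.closure ({a, b} : Set Q) := Subgroup.subset_closure (by simp)
  refine ⟨a, b, c, hab, hc1, ?_, hkey⟩
  rw [hc]
  exact Subgroup.mul_mem _ (Subgroup.mul_mem _ (Subgroup.mul_mem _
    (Subgroup.inv_mem _ hamem) (Subgroup.inv_mem _ hbmem)) hamem) hbmem

end Dedekind

/-- The condition (*): every hamiltonian quotient of `G` (a nonabelian quotient all of
whose subgroups are normal) is a `p`-group for some prime `p`. -/
def CondStar (G : Type*) [Group G] : Prop :=
  ∀ (N : Subgroup G) [N.Normal],
    ((∀ H : Subgroup (G ⧸ N), H.Normal) ∧ ¬ (∀ a b : G ⧸ N, a * b = b * a)) →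
      ∃ p : ℕ, p.Prime ∧ IsPGroup p (G ⧸ N)

section Main

open scoped commutatorElement

lemma aux_normal_of_commutator_le {G : Type*} [Group G] {H : Subgroup G}
    (h : commutator G ≤ H) : H.Normal := by
  constructor
  intro n hn g
  have hcom : ⁅g, n⁆ ∈ H := by
    apply h
    rw [commutator_def]
    exact Subgroup.commutator_mem_commutator (Subgroup.mem_top g) (Subgroup.mem_top n)
  have heq : g * n * g⁻¹ = ⁅g, n⁆ * n := by
    rw [commutatorElement_def]; group
  rw [heq]
  exact H.mul_mem hcom hn

/-- Proposition 3 (2.2): if `f : L(G₁) → L(G₂)` is an ℰL-isomorphism and `G₂` satisfies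
the condition (*), then `f(D(G₁)) ⊇ D(G₂)`, where `D` denotes the derived subgroup. -/
theorem commutator_le_eliso_commutator {G₁ G₂ : Type*} [Group G₁] [Group G₂]
    (f : Subgroup G₁ → Subgroup G₂) (hf : IsELIso f) (hstar : CondStar G₂) :
    commutator G₂ ≤ f (commutator G₁) := by
  obtain ⟨⟨hinj, hsurj⟩, hcore, hinfp, hsup⟩ := hf
  -- basic transport lemmas
  have hnorm_map : ∀ N : Subgroup G₁, N.Normal → (f N).Normal := by
    intro N hN
    have h1 : f N.normalCore = (f N).normalCore := hcore N
    rw [@Subgroup.normalCore_eq_self _ _ N hN] at h1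
    rw [h1]
    exact Subgroup.normalCore_normal _
  have hsurj_norm : ∀ M : Subgroup G₂, M.Normal → ∃ N : Subgroup G₁, N.Normal ∧ f N = M := by
    intro M hM
    obtain ⟨H, hH⟩ := hsurj M
    refine ⟨H.normalCore, Subgroup.normalCore_normal H, ?_⟩
    rw [hcore H, hH, @Subgroup.normalCore_eq_self _ _ M hM]
  have hle_iff : ∀ (N H : Subgroup G₁), N.Normal → (N ≤ H ↔ f N ≤ f H) := by
    intro N H hN
    haveI := hN
    haveI := hnorm_map N hN
    have h3 := hsup N H
    rw [Subgroup.normalCore_eq_self N, Subgroup.normalCore_eq_self (f N)] at h3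
    -- h3 : f (N ⊔ H.normalCore) = f N ⊔ (f H).normalCore
    constructor
    · intro hNH
      have h1 : N ≤ H.normalCore := Subgroup.normal_le_normalCore.mpr hNH
      have h2 : N ⊔ H.normalCore = H.normalCore := sup_eq_right.mpr h1
      rw [h2, hcore H] at h3
      have h4 : f N ≤ (f H).normalCore := by
        calc f N ≤ f N ⊔ (f H).normalCore := le_sup_left
          _ = (f H).normalCore := h3.symm
      exact h4.trans (Subgroup.normalCore_le _)
    · intro hfNH
      have h1 : f N ≤ (f H).normalCore := Subgroup.normal_le_normalCore.mpr hfNH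
      have h2 : f N ⊔ (f H).normalCore = (f H).normalCore := sup_eq_right.mpr h1
      rw [← h3, ← hcore H] at h2
      have h4 := hinj h2
      calc N ≤ N ⊔ H.normalCore := le_sup_left
        _ = H.normalCore := h4
        _ ≤ H := Subgroup.normalCore_le H
  -- suppose not
  by_contra hcon
  have hMnorm : (f (commutator G₁)).Normal := hnorm_map _ inferInstance
  haveI := hMnorm
  have hP4 : ∀ K : Subgroup G₂, f (commutator G₁) ≤ K → K.Normal := by
    intro K hMK
    obtain ⟨H, hH⟩ := hsurj K
    have h1 : commutator G₁ ≤ H := by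
      rw [hle_iff _ _ inferInstance, hH]
      exact hMK
    rw [← hH]
    exact hnorm_map H (aux_normal_of_commutator_le h1)
  set π := QuotientGroup.mk' (f (commutator G₁)) with hπ
  have hπsurj : Function.Surjective π := QuotientGroup.mk'_surjective _
  have hkerπ : MonoidHom.ker π = f (commutator G₁) := QuotientGroup.ker_mk' _
  have hker_le : ∀ S : Subgroup (G₂ ⧸ f (commutator G₁)),
      f (commutator G₁) ≤ Subgroup.comap π S := by
    intro S x hx
    have h1 : π x = 1 := by
      rw [← MonoidHom.mem_ker, hkerπ]; exact hx
    show π x ∈ S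
    rw [h1]; exact S.one_mem
  have hded : ∀ S : Subgroup (G₂ ⧸ f (commutator G₁)), S.Normal := by
    intro S
    have h2 : (Subgroup.comap π S).Normal := hP4 _ (hker_le S)
    have h3 : Subgroup.map π (Subgroup.comap π S) = S :=
      Subgroup.map_comap_eq_self_of_surjective hπsurj S
    rw [← h3]
    exact Subgroup.Normal.map h2 π hπsurj
  have hnab : ¬ ∀ x y : G₂ ⧸ f (commutator G₁), x * y = y * x := by
    intro hcomm2
    apply hcon
    rw [commutator_def, Subgroup.commutator_le]
    intro g _ h _
    have h1 : π ⁅g, h⁆ = 1 := by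
      rw [map_commutatorElement]
      exact commutatorElement_eq_one_iff_commute.mpr (hcomm2 (π g) (π h))
    rw [← hkerπ]
    exact h1
  obtain ⟨p, hp, hpQ⟩ := hstar (f (commutator G₁)) ⟨hded, hnab⟩
  obtain ⟨x, y, hxy⟩ : ∃ x y : G₂ ⧸ f (commutator G₁), x * y ≠ y * x := by
    by_contra hh
    push_neg at hh
    exact hnab hh
  obtain ⟨aq, bq, zq, habq, hzq1, hzqmem, hkey⟩ := aux_dedekind_config hded hp hpQ hxy
  -- G₁-side preimages
  have hmk : ∀ S : Subgroup (G₂ ⧸ f (commutator G₁)),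
      ∃ N : Subgroup G₁, N.Normal ∧ f N = Subgroup.comap π S :=
    fun S => hsurj_norm _ (hP4 _ (hker_le S))
  obtain ⟨T₁, hT₁n, hT₁⟩ := hmk (Subgroup.closure {aq, bq})
  obtain ⟨X₁, hX₁n, hX₁⟩ := hmk (Subgroup.zpowers aq)
  obtain ⟨Y₁, hY₁n, hY₁⟩ := hmk (Subgroup.zpowers bq)
  obtain ⟨Z₁, hZ₁n, hZ₁⟩ := hmk (Subgroup.zpowers zq)
  have hmapcomap : ∀ S : Subgroup (G₂ ⧸ f (commutator G₁)),
      Subgroup.map π (Subgroup.comap π S) = S :=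
    Subgroup.map_comap_eq_self_of_surjective hπsurj
  have hDle : ∀ (N : Subgroup G₁) (S : Subgroup (G₂ ⧸ f (commutator G₁))),
      N.Normal → f N = Subgroup.comap π S → commutator G₁ ≤ N := by
    intro N S hN hfN
    rw [hle_iff _ _ inferInstance, hfN]
    exact hker_le S
  have hDT := hDle T₁ _ hT₁n hT₁
  have hDX := hDle X₁ _ hX₁n hX₁
  have hDY := hDle Y₁ _ hY₁n hY₁
  have hDZ := hDle Z₁ _ hZ₁n hZ₁
  have haqT : Subgroup.zpowers aq ≤ Subgroup.closure {aq, bq} :=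
    Subgroup.zpowers_le.mpr (Subgroup.subset_closure (by simp))
  have hbqT : Subgroup.zpowers bq ≤ Subgroup.closure {aq, bq} :=
    Subgroup.zpowers_le.mpr (Subgroup.subset_closure (by simp))
  have hzqT : Subgroup.zpowers zq ≤ Subgroup.closure {aq, bq} :=
    Subgroup.zpowers_le.mpr hzqmem
  have hXT : X₁ ≤ T₁ := by
    rw [hle_iff _ _ hX₁n, hX₁, hT₁]; exact Subgroup.comap_mono haqT
  have hYT : Y₁ ≤ T₁ := by
    rw [hle_iff _ _ hY₁n, hY₁, hT₁]; exact Subgroup.comap_mono hbqT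
  have hZT : Z₁ ≤ T₁ := by
    rw [hle_iff _ _ hZ₁n, hZ₁, hT₁]; exact Subgroup.comap_mono hzqT
  have hmap_z : ∀ g : G₂ ⧸ f (commutator G₁),
      Subgroup.map π (Subgroup.comap π (Subgroup.zpowers g)) = Subgroup.zpowers g :=
    fun g => hmapcomap _
  have hnXY : ¬ X₁ ≤ Y₁ := by
    intro hle
    rw [hle_iff _ _ hX₁n, hX₁, hY₁] at hle
    have h1 : Subgroup.zpowers aq ≤ Subgroup.zpowers bq := by
      rw [← hmap_z aq, ← hmap_z bq]
      exact Subgroup.map_mono hle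
    obtain ⟨k, hk⟩ := Subgroup.mem_zpowers_iff.mp (h1 (Subgroup.mem_zpowers aq))
    apply habq
    rw [← hk]
    exact ((Commute.refl bq).zpow_left k).eq
  have hnYX : ¬ Y₁ ≤ X₁ := by
    intro hle
    rw [hle_iff _ _ hY₁n, hY₁, hX₁] at hle
    have h1 : Subgroup.zpowers bq ≤ Subgroup.zpowers aq := by
      rw [← hmap_z aq, ← hmap_z bq]
      exact Subgroup.map_mono hle
    obtain ⟨k, hk⟩ := Subgroup.mem_zpowers_iff.mp (h1 (Subgroup.mem_zpowers bq))
    apply habq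
    rw [← hk]
    exact ((Commute.refl aq).zpow_right k).eq
  have hZne : Z₁ ≠ commutator G₁ := by
    intro heq
    have h1 : f Z₁ = f (commutator G₁) := by rw [heq]
    rw [hZ₁] at h1
    obtain ⟨g, hg⟩ := hπsurj zq
    have hgZ : g ∈ Subgroup.comap π (Subgroup.zpowers zq) :=
      Subgroup.mem_comap.mpr (by rw [hg]; exact Subgroup.mem_zpowers zq)
    rw [h1] at hgZ
    have h2 : π g = 1 := by rw [← MonoidHom.mem_ker, hkerπ]; exact hgZ
    rw [hg] at h2
    exact hzq1 h2
  -- the interval property on the G₁ side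
  have hintv : ∀ W : Subgroup G₁, commutator G₁ ≤ W → W ≤ T₁ →
      (W = commutator G₁ ∨ Z₁ ≤ W) := by
    intro W hDW hWT
    have hWn : W.Normal := aux_normal_of_commutator_le hDW
    have hMfW : f (commutator G₁) ≤ f W := by
      rw [← hle_iff _ _ inferInstance]; exact hDW
    have hfWT : f W ≤ Subgroup.comap π (Subgroup.closure {aq, bq}) := by
      rw [← hT₁, ← hle_iff _ _ hWn]; exact hWT
    have hcomapWq : Subgroup.comap π (Subgroup.map π (f W)) = f W := by
      rw [Subgroup.comap_map_eq, hkerπ]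
      exact sup_eq_left.mpr hMfW
    have hWqT : Subgroup.map π (f W) ≤ Subgroup.closure {aq, bq} := by
      rw [← hmapcomap (Subgroup.closure {aq, bq})]
      exact Subgroup.map_mono hfWT
    by_cases hWqbot : Subgroup.map π (f W) = ⊥
    · left
      apply hinj
      rw [← hcomapWq, hWqbot, MonoidHom.comap_bot, hkerπ]
    · right
      rw [Subgroup.eq_bot_iff_forall] at hWqbot
      push_neg at hWqbot
      obtain ⟨w, hwW, hw1⟩ := hWqbot
      have hzw : zq ∈ Subgroup.zpowers w := hkey w (hWqT hwW) hw1
      have h2 : Subgroup.zpowers zq ≤ Subgroup.map π (f W) :=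
        Subgroup.zpowers_le.mpr ((Subgroup.zpowers_le.mpr hwW) hzw)
      rw [hle_iff _ _ hZ₁n, hZ₁, ← hcomapWq]
      exact Subgroup.comap_mono h2
  -- pass to the abelian quotient G₁ ⧸ commutator G₁
  set π₁ := QuotientGroup.mk' (commutator G₁) with hπ₁
  have hπ₁surj : Function.Surjective π₁ := QuotientGroup.mk'_surjective _
  have hkerπ₁ : MonoidHom.ker π₁ = commutator G₁ := QuotientGroup.ker_mk' _
  have hcomm1 : ∀ u v : G₁ ⧸ commutator G₁, u * v = v * u := by
    intro u v
    obtain ⟨g, rfl⟩ := hπ₁surj u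
    obtain ⟨h, rfl⟩ := hπ₁surj v
    have h1 : π₁ ⁅g, h⁆ = 1 := by
      rw [← MonoidHom.mem_ker, hkerπ₁, commutator_def]
      exact Subgroup.commutator_mem_commutator (Subgroup.mem_top g) (Subgroup.mem_top h)
    rw [map_commutatorElement] at h1
    exact (commutatorElement_eq_one_iff_commute.mp h1).eq
  have hcomap_map : ∀ W : Subgroup G₁, commutator G₁ ≤ W →
      Subgroup.comap π₁ (Subgroup.map π₁ W) = W := by
    intro W hW
    rw [Subgroup.comap_map_eq, hkerπ₁]
    exact sup_eq_left.mpr hW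
  have hZnle : ¬ Z₁ ≤ commutator G₁ := fun h => hZne (le_antisymm h hDZ)
  obtain ⟨z₀, hz₀Z, hz₀D⟩ := SetLike.not_le_iff_exists.mp hZnle
  have hz1 : π₁ z₀ ≠ 1 := by
    intro h
    apply hz₀D
    rw [← hkerπ₁]
    rwa [MonoidHom.mem_ker]
  have hzS : π₁ z₀ ∈ Subgroup.map π₁ T₁ := ⟨z₀, hZT hz₀Z, rfl⟩
  have hzprop : ∀ w ∈ Subgroup.map π₁ T₁, w ≠ 1 → π₁ z₀ ∈ Subgroup.zpowers w := by
    intro w hwT hw1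
    have hWle : Subgroup.zpowers w ≤ Subgroup.map π₁ T₁ := Subgroup.zpowers_le.mpr hwT
    have hW1 : Subgroup.comap π₁ (Subgroup.zpowers w) ≤ T₁ := by
      rw [← hcomap_map T₁ hDT]
      exact Subgroup.comap_mono hWle
    have hDW : commutator G₁ ≤ Subgroup.comap π₁ (Subgroup.zpowers w) := by
      intro x hx
      have h2 : π₁ x = 1 := by rw [← MonoidHom.mem_ker, hkerπ₁]; exact hx
      exact Subgroup.mem_comap.mpr (by rw [h2]; exact Subgroup.one_mem _)
    rcases hintv _ hDW hW1 with heq | hZle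
    · exfalso
      apply hw1
      have h1 : Subgroup.map π₁ (Subgroup.comap π₁ (Subgroup.zpowers w))
          = Subgroup.zpowers w := Subgroup.map_comap_eq_self_of_surjective hπ₁surj _
      rw [heq] at h1
      have h2 : Subgroup.map π₁ (commutator G₁) = ⊥ := by
        rw [Subgroup.eq_bot_iff_forall]
        rintro x ⟨g, hg, rfl⟩
        rw [← MonoidHom.mem_ker, hkerπ₁]
        exact hg
      rw [h2] at h1
      have h3 : w ∈ (⊥ : Subgroup (G₁ ⧸ commutator G₁)) := by
        rw [h1]; exact Subgroup.mem_zpowers w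
      exact Subgroup.mem_bot.mp h3
    · have h1 : Subgroup.map π₁ Z₁
          ≤ Subgroup.map π₁ (Subgroup.comap π₁ (Subgroup.zpowers w)) :=
        Subgroup.map_mono hZle
      rw [Subgroup.map_comap_eq_self_of_surjective hπ₁surj] at h1
      exact h1 ⟨z₀, hz₀Z, rfl⟩
  obtain ⟨x₀, hx₀X, hx₀Y⟩ := SetLike.not_le_iff_exists.mp hnXY
  obtain ⟨y₀, hy₀Y, hy₀X⟩ := SetLike.not_le_iff_exists.mp hnYX
  have hxT : π₁ x₀ ∈ Subgroup.map π₁ T₁ := ⟨x₀, hXT hx₀X, rfl⟩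
  have hyT : π₁ y₀ ∈ Subgroup.map π₁ T₁ := ⟨y₀, hYT hy₀Y, rfl⟩
  have hmem_of_map : ∀ (W : Subgroup G₁) (g : G₁), commutator G₁ ≤ W →
      π₁ g ∈ Subgroup.map π₁ W → g ∈ W := by
    intro W g hDW hg
    obtain ⟨w', hw'W, hw'⟩ := hg
    have h1 : w'⁻¹ * g ∈ MonoidHom.ker π₁ := by
      rw [MonoidHom.mem_ker, map_mul, map_inv, hw']
      group
    rw [hkerπ₁] at h1
    have h2 : g = w' * (w'⁻¹ * g) := by group
    rw [h2]
    exact W.mul_mem hw'W (hDW h1)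
  rcases aux_abelian_comparable hcomm1 (Subgroup.map π₁ T₁) hzS hz1 hzprop
      (π₁ x₀) hxT (π₁ y₀) hyT with hcase | hcase
  · apply hx₀Y
    apply hmem_of_map Y₁ x₀ hDY
    have h1 : Subgroup.zpowers (π₁ y₀) ≤ Subgroup.map π₁ Y₁ :=
      Subgroup.zpowers_le.mpr ⟨y₀, hy₀Y, rfl⟩
    exact h1 hcase
  · apply hy₀X
    apply hmem_of_map X₁ y₀ hDX
    have h1 : Subgroup.zpowers (π₁ x₀) ≤ Subgroup.map π₁ X₁ :=
      Subgroup.zpowers_le.mpr ⟨x₀, hx₀X, rfl⟩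
    exact h1 hcase

end Main
end

section
/- Let G be a group satisfying the condition (*): for every normal subgroup N of G, if the quotient G/N is hamiltonian, then G/N is a p-group for some prime p. Let D(G) be the derived subgroup of G and f : L(G) → L(G) an ℰL-automorphism of G. Then f(D(G)) = D(G). -/
open scoped commutatorElement

section Aux

variable {M : Type*} [Group M]

lemma sc_pow_right {u v d : M} (h : v * u = d * (u * v)) (hdv : Commute d v) :
    ∀ n : ℕ, v ^ n * u = d ^ n * (u * v ^ n) := by
  intro n
  induction n with
  | zero => simp
  | succ n ih =>
    calc v ^ (n+1) * u = v ^ n * (v * u) := by rw [pow_succ, mul_assoc]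
      _ = v ^ n * (d * (u * v)) := by rw [h]
      _ = (v ^ n * d) * u * v := by group
      _ = (d * v ^ n) * u * v := by rw [(hdv.pow_right n).symm.eq]
      _ = d * (v ^ n * u) * v := by group
      _ = d * (d ^ n * (u * v ^ n)) * v := by rw [ih]
      _ = d ^ (n+1) * (u * v ^ (n+1)) := by rw [pow_succ, pow_succ]; group

lemma sc_pow_left {u v d : M} (h : v * u = d * (u * v)) (hdu : Commute d u) :
    ∀ n : ℕ, v * u ^ n = d ^ n * (u ^ n * v) := by
  intro n
  induction n with
  | zero => simp
  | succ n ih =>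
    calc v * u ^ (n+1) = (v * u ^ n) * u := by rw [pow_succ, mul_assoc]
      _ = d ^ n * (u ^ n * (v * u)) := by rw [ih]; group
      _ = d ^ n * (u ^ n * (d * (u * v))) := by rw [h]
      _ = d ^ n * ((u ^ n * d) * (u * v)) := by group
      _ = d ^ n * ((d * u ^ n) * (u * v)) := by rw [(hdu.pow_right n).symm.eq]
      _ = d ^ (n+1) * (u ^ (n+1) * v) := by rw [pow_succ, pow_succ]; group

lemma prod_pow_aux {u v d : M} (h : v * u = d * (u * v)) (hdu : Commute d u)
    (hdv : Commute d v) : ∀ n : ℕ, (u * v) ^ n = d ^ (n.choose 2) * (u ^ n * v ^ n) := by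
  intro n
  induction n with
  | zero => simp
  | succ n ih =>
    have h1 : v ^ n * u = d ^ n * (u * v ^ n) := sc_pow_right h hdv n
    calc (u * v) ^ (n+1) = (u * v) ^ n * (u * v) := by rw [pow_succ]
      _ = d ^ (n.choose 2) * (u ^ n * (v ^ n * u) * v) := by rw [ih]; group
      _ = d ^ (n.choose 2) * (u ^ n * (d ^ n * (u * v ^ n)) * v) := by rw [h1]
      _ = d ^ (n.choose 2) * ((u ^ n * d ^ n) * u * v ^ n * v) := by group
      _ = d ^ (n.choose 2) * ((d ^ n * u ^ n) * u * v ^ n * v) := by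
          rw [(hdu.pow_pow n n).symm.eq]
      _ = (d ^ (n.choose 2) * d ^ n) * ((u ^ n * u) * (v ^ n * v)) := by group
      _ = d ^ ((n+1).choose 2) * (u ^ (n+1) * v ^ (n+1)) := by
          rw [← pow_add, pow_succ, pow_succ, Nat.choose_succ_succ, Nat.choose_one_right,
            Nat.add_comm n (n.choose 2)]

/-- An element of `zpowers w` commutes with `w`. -/
lemma commute_of_mem_zpowers {w b : M} (h : b ∈ Subgroup.zpowers w) : Commute w b := by
  obtain ⟨k, rfl⟩ := h; exact (Commute.refl w).zpow_right k

/-- modular inverse -/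
lemma exists_mul_modEq_one {p s : ℕ} (hp : p.Prime) (h : ¬ p ∣ s) :
    ∃ t, 0 < t ∧ s * t ≡ 1 [MOD p] := by
  haveI := Fact.mk hp
  haveI : NeZero p := ⟨hp.pos.ne'⟩
  have h0 : (s : ZMod p) ≠ 0 := by simpa [ZMod.natCast_eq_zero_iff] using h
  have hinv : ((s : ZMod p)⁻¹ : ZMod p) ≠ 0 := inv_ne_zero h0
  refine ⟨((s : ZMod p)⁻¹).val, ?_, ?_⟩
  · exact Nat.pos_of_ne_zero (fun hv => hinv ((ZMod.val_eq_zero _).mp hv))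
  · have : ((s * ((s:ZMod p)⁻¹).val : ℕ) : ZMod p) = ((1:ℕ) : ZMod p) := by
      push_cast
      rw [ZMod.natCast_val, ZMod.cast_id]
      field_simp
    exact (ZMod.natCast_eq_natCast_iff _ _ _).mp this

/-- convert zpowers membership to a natural power, bounded by the order -/
lemma exists_pow_eq_of_mem_zpowers {w b : M} (hw : 0 < orderOf w)
    (h : b ∈ Subgroup.zpowers w) : ∃ m : ℕ, m < orderOf w ∧ w ^ m = b := by
  obtain ⟨k, rfl⟩ := h
  refine ⟨(k % (orderOf w : ℤ)).toNat, ?_, ?_⟩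
  · have h1 : k % (orderOf w : ℤ) < (orderOf w : ℤ) :=
      Int.emod_lt_of_pos k (by exact_mod_cast hw)
    omega
  · have h0 : 0 ≤ k % (orderOf w : ℤ) := Int.emod_nonneg k (by positivity)
    rw [← zpow_natCast, Int.toNat_of_nonneg h0, zpow_mod_orderOf]

/-- if `s * t ≡ 1 [MOD p]` then `w ^ (e * (s * t)) = w ^ e` whenever `w ^ (e * p) = 1`. -/
lemma pow_mul_modEq_one {w : M} {p s t e : ℕ} (hp : 1 < p) (h : s * t ≡ 1 [MOD p])
    (hw : w ^ (e * p) = 1) : w ^ (e * (s * t)) = w ^ e := by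
  have h1 : s * t % p = 1 := by
    have h' := h
    rwa [Nat.ModEq, Nat.mod_eq_of_lt hp] at h'
  have h2 : e * (s * t) = e * (s * t % p) + (e * p) * (s * t / p) := by
    conv_lhs => rw [← Nat.div_add_mod (s * t) p]
    ring
  rw [h2, pow_add, pow_mul w (e*p), hw, one_pow, mul_one, h1, mul_one]

end Aux

section Abelian

variable {A : Type*} [Group A]

lemma orderOf_pow_div_prime {a : A} {n r : ℕ} (hn : orderOf a = n) (hn0 : n ≠ 0)
    (hr : r.Prime) (hdvd : r ∣ n) : orderOf (a ^ (n / r)) = r := by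
  have hq : n / r ≠ 0 := by
    intro h0
    apply hn0
    rw [← Nat.div_mul_cancel hdvd, h0, zero_mul]
  rw [orderOf_pow' a hq, hn, Nat.gcd_eq_right (Nat.div_dvd_of_dvd hdvd),
    Nat.div_div_self hdvd hn0]

lemma cyc_step (W : Subgroup A) (hA : ∀ u v : A, u ∈ W → v ∈ W → u * v = v * u)
    {q : ℕ} (hq : q.Prime)
    {z : A} (hzord : orderOf z = q)
    (HW : ∀ w : A, w ∈ W → w ≠ 1 → z ∈ Subgroup.zpowers w)
    {b : A} (hbW : b ∈ W) {β : ℕ} (hbord : orderOf b = q ^ β) :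
    ∀ α : ℕ, α ≤ β → ∀ a : A, a ∈ W → orderOf a = q ^ α → a ∈ Subgroup.zpowers b := by
  intro α
  induction α using Nat.strong_induction_on with
  | _ α IH =>
    cases α with
    | zero =>
      intro _ a _ haord
      have : a = 1 := by rwa [pow_zero, orderOf_eq_one_iff] at haord
      rw [this]; exact Subgroup.one_mem _
    | succ α' =>
      intro hαβ a haW haord
      have hq0 : 0 < q := hq.pos
      have hq1 : 1 < q := hq.one_lt
      set u := a ^ (q ^ α') with hu_def
      have hu_ord : orderOf u = q := by
        rw [hu_def, orderOf_pow' a (pow_ne_zero α' (by omega)), haord,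
          Nat.gcd_eq_right (pow_dvd_pow q (Nat.le_succ α')), pow_succ,
          Nat.mul_div_cancel_left _ (pow_pos hq0 α')]
      have hu1 : u ≠ 1 := by
        intro h; rw [h, orderOf_one] at hu_ord; omega
      have huW : u ∈ W := W.pow_mem haW _
      have hz_u : z ∈ Subgroup.zpowers u := HW u huW hu1
      obtain ⟨k', hk'lt, hk'⟩ := exists_pow_eq_of_mem_zpowers (by omega) hz_u
      have hk'0 : ¬ q ∣ k' := by
        intro hdvd
        obtain ⟨e, rfl⟩ := hdvd
        have : z = 1 := by
          rw [← hk', pow_mul, ← hu_ord, pow_orderOf_eq_one, one_pow]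
        rw [this, orderOf_one] at hzord; omega
      obtain ⟨k'', hk''0, hk''⟩ := exists_mul_modEq_one hq hk'0
      have hu_z : u = z ^ k'' := by
        have h1 : u ^ (1 * (k' * k'')) = u ^ 1 :=
          pow_mul_modEq_one hq1 hk'' (by rw [one_mul, ← hu_ord, pow_orderOf_eq_one])
        rw [one_mul, pow_one] at h1
        rw [← hk', ← pow_mul, h1]
      have hβ1 : 1 ≤ β := le_trans (Nat.succ_le_succ (Nat.zero_le _)) hαβ
      have hb1 : b ≠ 1 := by
        intro h; rw [h, orderOf_one] at hbord
        have : q ≤ q ^ β := Nat.le_self_pow (by omega) q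
        omega
      have hbord0 : 0 < orderOf b := by rw [hbord]; positivity
      obtain ⟨j, hjlt, hj⟩ := exists_pow_eq_of_mem_zpowers hbord0 (HW b hbW hb1)
      have hj0 : j ≠ 0 := by
        intro h; rw [h, pow_zero] at hj
        rw [← hj, orderOf_one] at hzord; omega
      have hgcd : Nat.gcd (q ^ β) j = q ^ (β - 1) := by
        have h1 : q ^ β / Nat.gcd (q ^ β) j = q := by
          have h' := orderOf_pow' b hj0
          rw [hj, hzord, hbord] at h'
          exact h'.symm
        have h2 : Nat.gcd (q ^ β) j ∣ q ^ β := Nat.gcd_dvd_left _ _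
        have h3 : q ^ β = Nat.gcd (q ^ β) j * q := Nat.eq_mul_of_div_eq_right h2 h1
        have h4 : q ^ β = q ^ (β - 1) * q := by
          rw [← pow_succ]; congr 1; omega
        exact Nat.eq_of_mul_eq_mul_right hq0 (h3.symm.trans h4)
      have hdvdj : q ^ α' ∣ j :=
        dvd_trans (pow_dvd_pow q (by omega)) (hgcd ▸ Nat.gcd_dvd_right (q ^ β) j)
      set v := b ^ ((j / q ^ α') * k'') with hv_def
      have hvW : v ∈ W := W.pow_mem hbW _
      have hv_pow : v ^ (q ^ α') = u := by
        rw [hv_def, ← pow_mul]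
        have he : j / q ^ α' * k'' * q ^ α' = j * k'' := by
          rw [mul_comm (j / q ^ α') k'', mul_assoc, Nat.div_mul_cancel hdvdj]
          ring
        rw [he, pow_mul, hj, ← hu_z]
      set a₁ := a * v⁻¹ with ha₁_def
      have hcomm : Commute a v⁻¹ := (show Commute a v from hA a v haW hvW).inv_right
      have ha₁pow : a₁ ^ (q ^ α') = 1 := by
        rw [ha₁_def, hcomm.mul_pow, inv_pow, hv_pow, hu_def, mul_inv_cancel]
      obtain ⟨α₁, hα₁le, hα₁⟩ :=
        (Nat.dvd_prime_pow hq).mp (orderOf_dvd_of_pow_eq_one ha₁pow)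
      have ha₁W : a₁ ∈ W := W.mul_mem haW (W.inv_mem hvW)
      have ha₁mem : a₁ ∈ Subgroup.zpowers b := IH α₁ (by omega) (by omega) a₁ ha₁W hα₁
      have hav : a = a₁ * v := by rw [ha₁_def]; group
      rw [hav]
      exact Subgroup.mul_mem _ ha₁mem (Subgroup.pow_mem _ (Subgroup.mem_zpowers b) _)

/-- every nontrivial element of `W` (all of whose nontrivial elements have `z` among
their powers) has finite order. -/
lemma isOfFinOrder_of_unique_min (W : Subgroup A) {z : A} (hz1 : z ≠ 1)
    (HW : ∀ w : A, w ∈ W → w ≠ 1 → z ∈ Subgroup.zpowers w)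
    {a : A} (haW : a ∈ W) (ha1 : a ≠ 1) : IsOfFinOrder a := by
  by_contra hfin
  have hord0 : orderOf a = 0 := orderOf_eq_zero hfin
  obtain ⟨m, hm⟩ := HW a haW ha1
  have hm0 : m ≠ 0 := by rintro rfl; exact hz1 (by simpa using hm.symm)
  set K : ℕ := m.natAbs + 1 with hK
  have haK1 : a ^ K ≠ 1 := by
    intro h
    exact hfin (isOfFinOrder_iff_pow_eq_one.mpr ⟨K, by omega, h⟩)
  obtain ⟨m', hm'⟩ := HW (a ^ K) (W.pow_mem haW K) haK1
  have hm2 : a ^ m = z := hm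
  have hm'2 : (a ^ K) ^ m' = z := hm'
  have h1 : a ^ ((K : ℤ) * m') = z := by
    rw [zpow_mul, zpow_natCast]; exact hm'2
  have h2 : a ^ ((K : ℤ) * m' - m) = 1 := by
    rw [zpow_sub, h1, hm2, mul_inv_cancel]
  have h3 : (K : ℤ) * m' - m = 0 := by
    have := (orderOf_dvd_iff_zpow_eq_one).mpr h2
    rwa [hord0, Int.natCast_zero, zero_dvd_iff] at this
  have h4 : m = (K : ℤ) * m' := by omega
  have hm'0 : m' ≠ 0 := by rintro rfl; simp at h4; exact hm0 (by exact_mod_cast h4)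
  have hKm : m.natAbs = K * m'.natAbs := by
    rw [h4, Int.natAbs_mul]; simp
  have h5 : 1 ≤ m'.natAbs := Nat.one_le_iff_ne_zero.mpr (fun h => hm'0 (Int.natAbs_eq_zero.mp h))
  have : K ≤ m.natAbs := by
    calc K = K * 1 := (mul_one K).symm
      _ ≤ K * m'.natAbs := Nat.mul_le_mul_left K h5
      _ = m.natAbs := hKm.symm
  omega

/-- orders in `W` are powers of `q`. -/
lemma orderOf_eq_prime_pow_of_unique_min (W : Subgroup A) {q : ℕ} (hq : q.Prime)
    {z : A} (hzord : orderOf z = q)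
    (HW : ∀ w : A, w ∈ W → w ≠ 1 → z ∈ Subgroup.zpowers w)
    {a : A} (haW : a ∈ W) (ha1 : a ≠ 1) (hfin : IsOfFinOrder a) :
    ∃ α : ℕ, orderOf a = q ^ α := by
  have hz1 : z ≠ 1 := by
    intro h; rw [h, orderOf_one] at hzord; exact hq.one_lt.ne hzord
  have hn0 : orderOf a ≠ 0 := hfin.orderOf_pos.ne'
  have key : ∀ {d : ℕ}, d.Prime → d ∣ orderOf a → d = q := by
    intro r hr hdvd
    set u := a ^ (orderOf a / r) with hu_def
    have hu_ord : orderOf u = r := orderOf_pow_div_prime rfl hn0 hr hdvd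
    have hu1 : u ≠ 1 := by
      intro h
      rw [h, orderOf_one] at hu_ord
      have := hr.one_lt
      omega
    obtain ⟨k, hk⟩ := HW u (W.pow_mem haW _) hu1
    have hzr : z ^ r = 1 := by
      rw [← hk, ← zpow_natCast, ← zpow_mul, mul_comm, zpow_mul, zpow_natCast,
        ← hu_ord, pow_orderOf_eq_one, one_zpow]
    have : q ∣ r := by
      rw [← hzord]; exact orderOf_dvd_of_pow_eq_one hzr
    exact ((Nat.prime_dvd_prime_iff_eq hq hr).mp this).symm
  have := Nat.eq_prime_pow_of_unique_prime_dvd hn0 key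
  exact ⟨_, this⟩

/-- The abelian-side contradiction. -/
lemma abelian_contra (hA : ∀ u v : A, u * v = v * u)
    (Z X Y W : Subgroup A) (hZ : Z ≠ ⊥) (hXW : X ≤ W) (hYW : Y ≤ W)
    (hXY : ¬ X ≤ Y) (hYX : ¬ Y ≤ X)
    (hS : ∀ S : Subgroup A, S ≤ W → S = ⊥ ∨ Z ≤ S) : False := by
  obtain ⟨a, haX, haY⟩ := SetLike.not_le_iff_exists.mp hXY
  obtain ⟨b, hbY, hbX⟩ := SetLike.not_le_iff_exists.mp hYX
  have haW : a ∈ W := hXW haX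
  have hbW : b ∈ W := hYW hbY
  have ha1 : a ≠ 1 := fun h => haY (h ▸ Y.one_mem)
  have hb1 : b ≠ 1 := fun h => hbX (h ▸ X.one_mem)
  have hab : a ∉ Subgroup.zpowers b := fun h => haY (Subgroup.zpowers_le.mpr hbY h)
  have hba : b ∉ Subgroup.zpowers a := fun h => hbX (Subgroup.zpowers_le.mpr haX h)
  -- get z₀
  obtain ⟨z₀, hz₀Z, hz₀1⟩ : ∃ z₀ ∈ Z, z₀ ≠ 1 := by
    obtain ⟨⟨z₀, hz₀⟩, h1⟩ := Subgroup.ne_bot_iff_exists_ne_one.mp hZ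
    exact ⟨z₀, hz₀, by simpa using h1⟩
  have HW₀ : ∀ w : A, w ∈ W → w ≠ 1 → z₀ ∈ Subgroup.zpowers w := by
    intro w hwW hw1
    have h1 : Subgroup.zpowers w ≤ W := Subgroup.zpowers_le.mpr hwW
    rcases hS (Subgroup.zpowers w) h1 with h | h
    · exact absurd (Subgroup.zpowers_eq_bot.mp h) hw1
    · exact h hz₀Z
  -- finite orders
  have hafin : IsOfFinOrder a := isOfFinOrder_of_unique_min W hz₀1 HW₀ haW ha1
  have hbfin : IsOfFinOrder b := isOfFinOrder_of_unique_min W hz₀1 HW₀ hbW hb1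
  have hz₀fin : IsOfFinOrder z₀ := by
    obtain ⟨k, hk⟩ := HW₀ a haW ha1
    rw [← hk]; exact hafin.zpow
  -- replace z₀ by an element of prime order q
  set n := orderOf z₀ with hn_def
  have hn0 : n ≠ 0 := hz₀fin.orderOf_pos.ne'
  have hn1 : n ≠ 1 := fun h => hz₀1 (orderOf_eq_one_iff.mp h)
  set q := n.minFac with hq_def
  have hq : q.Prime := Nat.minFac_prime hn1
  set z := z₀ ^ (n / q) with hz_def
  have hzord : orderOf z = q := orderOf_pow_div_prime rfl hn0 hq (Nat.minFac_dvd n)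
  have HW : ∀ w : A, w ∈ W → w ≠ 1 → z ∈ Subgroup.zpowers w := by
    intro w hwW hw1
    exact Subgroup.pow_mem _ (HW₀ w hwW hw1) _
  -- orders of a, b are powers of q
  obtain ⟨α, hα⟩ := orderOf_eq_prime_pow_of_unique_min W hq hzord HW haW ha1 hafin
  obtain ⟨β, hβ⟩ := orderOf_eq_prime_pow_of_unique_min W hq hzord HW hbW hb1 hbfin
  have hA' : ∀ u v : A, u ∈ W → v ∈ W → u * v = v * u := fun u v _ _ => hA u v
  rcases le_total α β with h | h
  · exact hab (cyc_step W hA' hq hzord HW hbW hβ α h a haW hα)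
  · exact hba (cyc_step W hA' hq hzord HW haW hα β h b hbW hβ)

end Abelian

section Dedekind

variable {Q : Type*} [Group Q]

/-- decomposition of a prime-order element of a cyclic `p`-group -/
lemma root_decomp {x c : Q} {p a : ℕ} (hp : p.Prime)
    (hxa : orderOf x = p ^ a) (ha : 1 ≤ a) (hc : c ∈ Subgroup.zpowers x)
    (hc1 : c ≠ 1) (hcp : orderOf c = p) :
    ∃ s s' : ℕ, ¬ p ∣ s ∧ 0 < s' ∧ s * s' ≡ 1 [MOD p] ∧
      x ^ (p ^ (a-1) * s) = c ∧ c ^ s' = x ^ (p ^ (a-1)) := by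
  have hp1 : 1 < p := hp.one_lt
  have hxord : 0 < orderOf x := by rw [hxa]; positivity
  obtain ⟨m, hmlt, hm⟩ := exists_pow_eq_of_mem_zpowers hxord hc
  rw [hxa] at hmlt
  have hm0 : m ≠ 0 := fun h => hc1 (by rw [← hm, h, pow_zero])
  have hxpa1 : x ^ (p ^ a) = 1 := by rw [← hxa]; exact pow_orderOf_eq_one x
  have hpow : p ^ (a-1) * p = p ^ a := by rw [← pow_succ]; congr 1; omega
  have h1 : x ^ (m * p) = 1 := by rw [pow_mul, hm, ← hcp, pow_orderOf_eq_one]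
  have h2 : p ^ (a-1) * p ∣ m * p := by
    rw [hpow, ← hxa]; exact orderOf_dvd_iff_pow_eq_one.mpr h1
  have hdvd : p ^ (a-1) ∣ m := (Nat.mul_dvd_mul_iff_right hp.pos).mp h2
  set s := m / p ^ (a-1) with hs_def
  have hms : p ^ (a-1) * s = m := Nat.mul_div_cancel' hdvd
  have hps : ¬ p ∣ s := by
    rintro ⟨s₂, hs₂⟩
    have heq : m = p ^ a * s₂ := by
      rw [← hms, hs₂, ← mul_assoc, hpow]
    have hs₂0 : s₂ ≠ 0 := by rintro rfl; rw [mul_zero] at heq; exact hm0 heq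
    have : p ^ a ≤ m := heq ▸ Nat.le_mul_of_pos_right _ (Nat.pos_of_ne_zero hs₂0)
    omega
  obtain ⟨s', hs'0, hss'⟩ := exists_mul_modEq_one hp hps
  refine ⟨s, s', hps, hs'0, hss', by rw [hms, hm], ?_⟩
  have hw : x ^ (p ^ (a-1) * p) = 1 := by rw [hpow]; exact hxpa1
  calc c ^ s' = x ^ (m * s') := by rw [← hm, pow_mul]
    _ = x ^ (p ^ (a-1) * (s * s')) := by rw [← hms, mul_assoc]
    _ = x ^ (p ^ (a-1)) := pow_mul_modEq_one hp1 hss' hw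

/-- `p ∣ (p^j).choose 2` when `j ≥ 1` and moreover `j ≥ 2` if `p = 2`. -/
lemma p_dvd_choose_two {p j : ℕ} (hp : p.Prime) (hj : 1 ≤ j) (hj2 : p = 2 → 2 ≤ j) :
    p ∣ (p ^ j).choose 2 := by
  rw [Nat.choose_two_right]
  rcases eq_or_ne p 2 with h2 | h2
  · subst h2
    have hj' := hj2 rfl
    have h3 : 2 ^ j = 2 * 2 ^ (j - 1) := by rw [← pow_succ']; congr 1; omega
    rw [h3, mul_assoc, Nat.mul_div_cancel_left _ (by norm_num : 0 < 2)]
    exact Dvd.dvd.mul_right (dvd_pow_self 2 (by omega)) _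
  · have hodd : Odd (p ^ j) := (hp.odd_of_ne_two h2).pow
    obtain ⟨r, hr⟩ := hodd
    have h4 : 2 ∣ p ^ j - 1 := by omega
    rw [Nat.mul_div_assoc _ h4]
    exact Dvd.dvd.mul_right (dvd_pow_self p (by omega)) _

end Dedekind

section Dedekind2

variable {Q : Type*} [Group Q]

set_option maxHeartbeats 2000000 in
lemma dedekind_pgroup_config (hQ : ∀ S : Subgroup Q, S.Normal)
    {p : ℕ} (hp : p.Prime) (hpg : IsPGroup p Q) {x0 y0 : Q}
    (hxy0 : x0 * y0 ≠ y0 * x0) :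
    ∃ Z X Y W : Subgroup Q, Z ≠ ⊥ ∧ X ≤ W ∧ Y ≤ W ∧ ¬ X ≤ Y ∧ ¬ Y ≤ X ∧
      ∀ S : Subgroup Q, S ≤ W → S = ⊥ ∨ Z ≤ S := by
  have hp1 : 1 < p := hp.one_lt
  -- orders are powers of p
  have hord : ∀ g : Q, ∃ k : ℕ, orderOf g = p ^ k := by
    intro g
    obtain ⟨k, hk⟩ := hpg g
    obtain ⟨j, _, hj⟩ := (Nat.dvd_prime_pow hp).mp (orderOf_dvd_of_pow_eq_one hk)
    exact ⟨j, hj⟩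
  have hpos : ∀ g : Q, 0 < orderOf g := by
    intro g; obtain ⟨k, hk⟩ := hord g; rw [hk]; positivity
  -- minimal noncommuting pair
  have hPex : ∃ n, ∃ u v : Q, u * v ≠ v * u ∧ orderOf u + orderOf v = n :=
    ⟨_, x0, y0, hxy0, rfl⟩
  classical
  set n₀ := Nat.find hPex with hn₀
  obtain ⟨u₀, v₀, huv₀, hsum₀⟩ := Nat.find_spec hPex
  have hminsum : ∀ u v : Q, u * v ≠ v * u → n₀ ≤ orderOf u + orderOf v := by
    intro u v h
    by_contra hlt
    exact Nat.find_min hPex (by omega : orderOf u + orderOf v < n₀) ⟨u, v, h, rfl⟩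
  -- wlog orderOf y ≤ orderOf x
  obtain ⟨x, y, hxy, hyx_ord, hsum⟩ :
      ∃ x y : Q, x * y ≠ y * x ∧ orderOf y ≤ orderOf x ∧ orderOf x + orderOf y = n₀ := by
    rcases le_total (orderOf v₀) (orderOf u₀) with h | h
    · exact ⟨u₀, v₀, huv₀, h, hsum₀⟩
    · exact ⟨v₀, u₀, fun hcomm => huv₀ hcomm.symm, h, by omega⟩
  clear hsum₀ huv₀
  -- basics
  have hx1 : x ≠ 1 := by rintro rfl; exact hxy (by group)
  have hy1 : y ≠ 1 := by rintro rfl; exact hxy (by group)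
  set c := ⁅x, y⁆ with hc_def
  have hc1 : c ≠ 1 := fun h => hxy (commutatorElement_eq_one_iff_mul_comm.mp h)
  have hcx : c ∈ Subgroup.zpowers x := by
    have h1 : y * x⁻¹ * y⁻¹ ∈ Subgroup.zpowers x :=
      (hQ _).conj_mem x⁻¹ ((Subgroup.zpowers x).inv_mem (Subgroup.mem_zpowers x)) y
    have h2 : c = x * (y * x⁻¹ * y⁻¹) := by rw [hc_def, commutatorElement_def]; group
    rw [h2]; exact (Subgroup.zpowers x).mul_mem (Subgroup.mem_zpowers x) h1
  have hcy : c ∈ Subgroup.zpowers y := by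
    have h1 : x * y * x⁻¹ ∈ Subgroup.zpowers y :=
      (hQ _).conj_mem y (Subgroup.mem_zpowers y) x
    have h2 : c = (x * y * x⁻¹) * y⁻¹ := by rw [hc_def, commutatorElement_def]
    rw [h2]; exact (Subgroup.zpowers y).mul_mem h1 ((Subgroup.zpowers y).inv_mem (Subgroup.mem_zpowers y))
  have hCx : Commute c x := (commute_of_mem_zpowers hcx).symm
  have hCy : Commute c y := (commute_of_mem_zpowers hcy).symm
  have hrel : y * x = c⁻¹ * (x * y) := by rw [hc_def, commutatorElement_def]; group
  have hrel2 : x * y = c * (y * x) := by rw [hc_def, commutatorElement_def]; group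
  -- power relations (natural exponents)
  have hxny : ∀ E : ℕ, x ^ E * y = c ^ E * (y * x ^ E) := fun E =>
    sc_pow_right hrel2 hCx E
  have hynx : ∀ F : ℕ, y ^ F * x = (c⁻¹) ^ F * (x * y ^ F) := fun F =>
    sc_pow_right hrel (hCy.inv_left) F
  -- orders
  obtain ⟨a, hxa⟩ := hord x
  obtain ⟨b, hyb⟩ := hord y
  have ha1 : 1 ≤ a := by
    by_contra h
    have : a = 0 := by omega
    rw [this, pow_zero, orderOf_eq_one_iff] at hxa
    exact hx1 hxa
  have hb1 : 1 ≤ b := by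
    by_contra h
    have : b = 0 := by omega
    rw [this, pow_zero, orderOf_eq_one_iff] at hyb
    exact hy1 hyb
  have hba : b ≤ a := by
    rw [hxa, hyb] at hyx_ord
    exact (Nat.pow_le_pow_iff_right hp1).mp hyx_ord
  -- noncommutation of modified pairs
  have hnc_left : ∀ E : ℕ, (x ^ E * y) * x ≠ x * (x ^ E * y) := by
    intro E h
    apply hxy
    have h1 : x ^ E * (y * x) = x ^ E * (x * y) := by
      calc x ^ E * (y * x) = (x ^ E * y) * x := by group
        _ = x * (x ^ E * y) := h
        _ = (x * x ^ E) * y := by group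
        _ = (x ^ E * x) * y := by rw [(Commute.refl x).pow_left E]
        _ = x ^ E * (x * y) := by group
    exact (mul_left_cancel h1).symm
  have hnc_right : ∀ F : ℕ, (x * y ^ F) * y ≠ y * (x * y ^ F) := by
    intro F h
    apply hxy
    have h1 : (x * y) * y ^ F = (y * x) * y ^ F := by
      calc (x * y) * y ^ F = x * (y * y ^ F) := by group
        _ = x * (y ^ F * y) := by rw [((Commute.refl y).pow_right F).eq]
        _ = (x * y ^ F) * y := by group
        _ = y * (x * y ^ F) := h
        _ = (y * x) * y ^ F := by group
    exact mul_right_cancel h1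
  -- order of c is exactly p
  have hcp' : c ^ p = 1 := by
    by_contra hcpne
    have hnc : (x ^ p * y) * x ≠ x * (x ^ p * y) := hnc_left p
    have hnc' : x ^ p * y ≠ y * x ^ p := by
      intro h
      apply hcpne
      have h1 := hxny p
      rw [← h] at h1
      exact (mul_eq_right.mp h1.symm)
    have hxpord : orderOf (x ^ p) = p ^ (a-1) := by
      rw [orderOf_pow' x hp.pos.ne', hxa,
        Nat.gcd_eq_right (dvd_pow_self p (by omega : a ≠ 0))]
      have hpow : p ^ a = p ^ (a-1) * p := by rw [← pow_succ]; congr 1; omega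
      rw [hpow, Nat.mul_div_cancel _ hp.pos]
    have hmin := hminsum (x ^ p) y hnc'
    rw [hxpord, hyb] at hmin
    rw [hxa, hyb] at hsum
    have hlt : p ^ (a-1) < p ^ a := (Nat.pow_lt_pow_iff_right hp1).mpr (by omega)
    omega
  have hcp : orderOf c = p := by
    have h1 : orderOf c ∣ p := orderOf_dvd_iff_pow_eq_one.mpr hcp'
    rcases hp.eq_one_or_self_of_dvd _ h1 with h | h
    · exact absurd (orderOf_eq_one_iff.mp h) hc1
    · exact h
  -- root decompositions
  obtain ⟨s, s', hps, hs'0, hss', hxs, hcs'⟩ := root_decomp hp hxa ha1 hcx hc1 hcp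
  obtain ⟨t, t', hpt, ht'0, htt', hyt, hct'⟩ := root_decomp hp hyb hb1 hcy hc1 hcp
  -- a ≥ 2 and b ≥ 2
  have ha2 : 2 ≤ a := by
    have h1 := hxny (p ^ (a-1) * s)
    rw [hxs] at h1
    have h2 : y * c = c * y := hCy.symm.eq
    rw [h2] at h1
    have h3 : c ^ (p ^ (a-1) * s) = 1 := mul_eq_right.mp h1.symm
    have h4 : orderOf c ∣ p ^ (a-1) * s := orderOf_dvd_of_pow_eq_one h3
    rw [hcp] at h4
    rcases (Nat.Prime.dvd_mul hp).mp h4 with h | h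
    · rcases Nat.lt_or_ge a 2 with ha | ha
      · have ha' : a - 1 = 0 := by omega
        rw [ha', pow_zero, Nat.dvd_one] at h
        omega
      · exact ha
    · exact absurd h hps
  have hb2 : 2 ≤ b := by
    have h1 := hynx (p ^ (b-1) * t)
    rw [hyt] at h1
    have h2 : x * c = c * x := hCx.symm.eq
    rw [h2] at h1
    have h3 : (c⁻¹) ^ (p ^ (b-1) * t) = 1 := mul_eq_right.mp h1.symm
    have h3' : c ^ (p ^ (b-1) * t) = 1 := by rwa [inv_pow, inv_eq_one] at h3
    have h4 : orderOf c ∣ p ^ (b-1) * t := orderOf_dvd_of_pow_eq_one h3'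
    rw [hcp] at h4
    rcases (Nat.Prime.dvd_mul hp).mp h4 with h | h
    · rcases Nat.lt_or_ge b 2 with hb | hb
      · have hb' : b - 1 = 0 := by omega
        rw [hb', pow_zero, Nat.dvd_one] at h
        omega
      · exact hb
    · exact absurd h hpt
  -- helper for ZMod computations
  haveI := Fact.mk hp
  have hss2 : ((s : ZMod p)) * ((s' : ZMod p)) = 1 := by
    have := (ZMod.natCast_eq_natCast_iff _ _ _).mpr hss'
    push_cast at this
    simpa using this
  have htt2 : ((t : ZMod p)) * ((t' : ZMod p)) = 1 := by
    have := (ZMod.natCast_eq_natCast_iff _ _ _).mpr htt'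
    push_cast at this
    simpa using this
  -- b = 2
  have hbeq2 : b = 2 := by
    by_contra hne
    have hb3 : 3 ≤ b := by omega
    set lam := t' * s with hlam
    set mu := lam % p ^ b with hmu
    have hmult : mu < p ^ b := Nat.mod_lt _ (by positivity)
    set E := p ^ a - mu * p ^ (a - b) with hE
    have hP1 : p ^ (a-b) * p ^ (b-1) = p ^ (a-1) := by rw [← pow_add]; congr 1; omega
    have hP2 : p ^ a * p ^ (b-1) = p ^ (a-1) * p ^ b := by
      rw [← pow_add, ← pow_add]; congr 1; omega
    have hEn : E * p ^ (b-1) = (p ^ b - mu) * p ^ (a-1) := by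
      calc E * p ^ (b-1) = p ^ a * p ^ (b-1) - mu * p ^ (a-b) * p ^ (b-1) := by
            rw [hE, Nat.sub_mul]
        _ = p ^ (a-1) * p ^ b - mu * p ^ (a-1) := by rw [hP2, mul_assoc, hP1]
        _ = (p ^ b - mu) * p ^ (a-1) := by
            rw [Nat.sub_mul, mul_comm (p ^ (a-1)) (p ^ b)]
    have hduv : x ^ E * y = c ^ E * (y * x ^ E) := hxny E
    have hdu : Commute (c ^ E) y := hCy.pow_left E
    have hdv : Commute (c ^ E) (x ^ E) := (hCx.pow_left E).pow_right E
    have hpowy₁ := prod_pow_aux hduv hdu hdv (p ^ (b-1))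
    have hxEn : (x ^ E) ^ (p ^ (b-1)) = c ^ (s' * (p ^ b - mu)) := by
      rw [← pow_mul, hEn, mul_comm (p ^ b - mu) (p ^ (a-1)), pow_mul, ← hcs', ← pow_mul,
        mul_comm s' (p ^ b - mu), pow_mul, ← pow_mul, mul_comm (p ^ b - mu) s']
    have hy₁pow : (y * x ^ E) ^ (p ^ (b-1)) =
        c ^ (E * ((p ^ (b-1)).choose 2) + (t' + s' * (p ^ b - mu))) := by
      rw [hpowy₁, ← pow_mul, ← hct', hxEn, ← pow_add, ← pow_add]
    have hdvdE : p ∣ E * ((p ^ (b-1)).choose 2) + (t' + s' * (p ^ b - mu)) := by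
      have h1 : p ∣ (p ^ (b-1)).choose 2 :=
        p_dvd_choose_two hp (by omega) (fun _ => by omega)
      have h2 : p ∣ t' + s' * (p ^ b - mu) := by
        have hcast : ((t' + s' * (p ^ b - mu) : ℕ) : ZMod p) = 0 := by
          push_cast [Nat.cast_sub (le_of_lt hmult)]
          rw [ZMod.natCast_self]
          rw [zero_pow (by omega : b ≠ 0)]
          have hmu2 : ((mu : ℕ) : ZMod p) = ((t' : ZMod p)) * ((s : ZMod p)) := by
            have h3 : ((mu : ℕ) : ZMod p) = ((lam : ℕ) : ZMod p) := by
              rw [ZMod.natCast_eq_natCast_iff]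
              exact Nat.mod_mod_of_dvd lam (dvd_pow_self p (by omega))
            rw [h3, hlam]
            push_cast
            ring
          rw [zero_sub, hmu2]
          ring_nf
          linear_combination (-(t' : ZMod p)) * hss2
        exact (ZMod.natCast_eq_zero_iff _ _).mp hcast
      exact dvd_add (Dvd.dvd.mul_left h1 E) h2
    have hy₁p : (y * x ^ E) ^ (p ^ (b-1)) = 1 := by
      rw [hy₁pow]
      exact orderOf_dvd_iff_pow_eq_one.mp (by rw [hcp]; exact hdvdE)
    have hy₁ord : orderOf (y * x ^ E) ≤ p ^ (b-1) :=
      Nat.le_of_dvd (by positivity) (orderOf_dvd_iff_pow_eq_one.mpr hy₁p)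
    have hnc : x * (y * x ^ E) ≠ (y * x ^ E) * x := by
      intro h
      apply hxy
      have h1 : (x * y) * x ^ E = (y * x) * x ^ E := by
        calc (x * y) * x ^ E = x * (y * x ^ E) := by group
          _ = (y * x ^ E) * x := h
          _ = y * (x ^ E * x) := by group
          _ = y * (x * x ^ E) := by rw [((Commute.refl x).pow_left E).eq]
          _ = (y * x) * x ^ E := by group
      exact mul_right_cancel h1
    have hmin := hminsum x (y * x ^ E) hnc
    rw [hxa] at hmin
    rw [hxa, hyb] at hsum
    have hlt : p ^ (b-1) < p ^ b := (Nat.pow_lt_pow_iff_right hp1).mpr (by omega)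
    omega
  subst hbeq2
  have hypc : c ^ t' = y ^ p := by
    have h1 : p ^ (2 - 1) = p := by norm_num
    rw [hct', h1]
  -- a = 2
  have haeq2 : a = 2 := by
    by_contra hne
    have ha3 : 3 ≤ a := by omega
    set nu := (t' * s) % p ^ 2 with hnu
    have hnult : nu < p ^ 2 := Nat.mod_lt _ (by positivity)
    set E := p ^ a - nu * p ^ (a - 2) with hE
    have hQ1 : p ^ (a-2) * p = p ^ (a-1) := by rw [← pow_succ]; congr 1; omega
    have hQ2 : p ^ a * p = p ^ (a-1) * p ^ 2 := by
      rw [← pow_succ, ← pow_add]; congr 1; omega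
    have hEn : E * p = (p ^ 2 - nu) * p ^ (a-1) := by
      calc E * p = p ^ a * p - nu * p ^ (a-2) * p := by rw [hE, Nat.sub_mul]
        _ = p ^ (a-1) * p ^ 2 - nu * p ^ (a-1) := by rw [hQ2, mul_assoc, hQ1]
        _ = (p ^ 2 - nu) * p ^ (a-1) := by
            rw [Nat.sub_mul, mul_comm (p ^ (a-1)) (p ^ 2)]
    have hduv : y * x ^ E = (c ^ E)⁻¹ * (x ^ E * y) := by
      rw [hxny E]; group
    have hdu : Commute ((c ^ E)⁻¹) (x ^ E) := ((hCx.pow_left E).pow_right E).inv_left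
    have hdv : Commute ((c ^ E)⁻¹) y := (hCy.pow_left E).inv_left
    have hpowu := prod_pow_aux hduv hdu hdv p
    have hxEp : (x ^ E) ^ p = c ^ (s' * (p ^ 2 - nu)) := by
      rw [← pow_mul, hEn, mul_comm (p ^ 2 - nu) (p ^ (a-1)), pow_mul, ← hcs', ← pow_mul,
        mul_comm s' (p ^ 2 - nu), pow_mul, ← pow_mul, mul_comm (p ^ 2 - nu) s']
    have hkey : c ^ (s' * (p ^ 2 - nu) + t') = c ^ (E * p.choose 2) := by
      rw [pow_eq_pow_iff_modEq, hcp]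
      have h1 : p ∣ s' * (p ^ 2 - nu) + t' := by
        have hcast : ((s' * (p ^ 2 - nu) + t' : ℕ) : ZMod p) = 0 := by
          push_cast [Nat.cast_sub (le_of_lt hnult)]
          rw [ZMod.natCast_self, zero_pow (by omega : 2 ≠ 0)]
          have hnu2 : ((nu : ℕ) : ZMod p) = ((t' : ZMod p)) * ((s : ZMod p)) := by
            have h3 : ((nu : ℕ) : ZMod p) = ((t' * s : ℕ) : ZMod p) := by
              rw [ZMod.natCast_eq_natCast_iff]
              exact Nat.mod_mod_of_dvd _ (dvd_pow_self p (by omega))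
            rw [h3]; push_cast; ring
          rw [zero_sub, hnu2]
          ring_nf
          linear_combination (-(t' : ZMod p)) * hss2
        exact (ZMod.natCast_eq_zero_iff _ _).mp hcast
      have h2 : p ∣ E * p.choose 2 := by
        rcases eq_or_ne p 2 with hp2 | hp2
        · have hE2 : 2 ∣ E := by
            rw [hE, hp2]
            exact Nat.dvd_sub (dvd_pow_self 2 (by omega))
              (Dvd.dvd.mul_left (dvd_pow_self 2 (by omega)) nu)
          rw [hp2]
          exact Dvd.dvd.mul_right hE2 _
        · have : p ∣ p.choose 2 := by
            have := p_dvd_choose_two (p := p) (j := 1) hp le_rfl (fun h => absurd h hp2)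
            rwa [pow_one] at this
          exact Dvd.dvd.mul_left this E
      calc s' * (p ^ 2 - nu) + t' ≡ 0 [MOD p] := (Nat.modEq_zero_iff_dvd).mpr h1
        _ ≡ E * p.choose 2 [MOD p] := ((Nat.modEq_zero_iff_dvd).mpr h2).symm
    have hu₁p : (x ^ E * y) ^ p = 1 := by
      calc (x ^ E * y) ^ p = ((c ^ E)⁻¹) ^ p.choose 2 * ((x ^ E) ^ p * y ^ p) := hpowu
        _ = (c ^ (E * p.choose 2))⁻¹ * (c ^ (s' * (p ^ 2 - nu)) * c ^ t') := by
            rw [inv_pow, ← pow_mul, hxEp, ← hypc]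
        _ = (c ^ (E * p.choose 2))⁻¹ * c ^ (s' * (p ^ 2 - nu) + t') := by rw [← pow_add]
        _ = 1 := by rw [hkey, inv_mul_cancel]
    have hu₁ord : orderOf (x ^ E * y) ≤ p :=
      Nat.le_of_dvd hp.pos (orderOf_dvd_iff_pow_eq_one.mpr hu₁p)
    have hnc : (x ^ E * y) * x ≠ x * (x ^ E * y) := hnc_left E
    have hmin := hminsum (x ^ E * y) x hnc
    rw [hxa] at hmin
    rw [hxa, hyb] at hsum
    have hlt : p < p ^ 2 := by nlinarith
    have hlt2 : p ^ 2 < p ^ a := (Nat.pow_lt_pow_iff_right hp1).mpr (by omega)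
    omega
  subst haeq2
  have hxpc : c ^ s' = x ^ p := by
    have h1 : p ^ (2 - 1) = p := by norm_num
    rw [hcs', h1]
  -- p = 2
  have hpeq2 : p = 2 := by
    by_contra hne
    set nu := (s' * t) % p ^ 2 with hnu
    have hnult : nu < p ^ 2 := Nat.mod_lt _ (by positivity)
    set F := p ^ 2 - nu with hF
    have hduv : y ^ F * x = (c⁻¹) ^ F * (x * y ^ F) := hynx F
    have hdu : Commute ((c⁻¹) ^ F) x := (hCx.inv_left).pow_left F
    have hdv : Commute ((c⁻¹) ^ F) (y ^ F) := ((hCy.inv_left).pow_left F).pow_right F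
    have hpoww := prod_pow_aux hduv hdu hdv p
    have hyFp : (y ^ F) ^ p = c ^ (t' * (p ^ 2 - nu)) := by
      rw [← pow_mul, hF, mul_comm (p ^ 2 - nu) p, pow_mul, ← hypc, ← pow_mul,
        mul_comm t' (p ^ 2 - nu), pow_mul, ← pow_mul, mul_comm (p ^ 2 - nu) t']
    have hkey : c ^ (s' + t' * (p ^ 2 - nu)) = c ^ (F * p.choose 2) := by
      rw [pow_eq_pow_iff_modEq, hcp]
      have h1 : p ∣ s' + t' * (p ^ 2 - nu) := by
        have hcast : ((s' + t' * (p ^ 2 - nu) : ℕ) : ZMod p) = 0 := by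
          push_cast [Nat.cast_sub (le_of_lt hnult)]
          rw [ZMod.natCast_self, zero_pow (by omega : 2 ≠ 0)]
          have hnu2 : ((nu : ℕ) : ZMod p) = ((s' : ZMod p)) * ((t : ZMod p)) := by
            have h3 : ((nu : ℕ) : ZMod p) = ((s' * t : ℕ) : ZMod p) := by
              rw [ZMod.natCast_eq_natCast_iff]
              exact Nat.mod_mod_of_dvd _ (dvd_pow_self p (by omega))
            rw [h3]; push_cast; ring
          rw [zero_sub, hnu2]
          ring_nf
          linear_combination (-(s' : ZMod p)) * htt2
        exact (ZMod.natCast_eq_zero_iff _ _).mp hcast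
      have h2 : p ∣ F * p.choose 2 := by
        have : p ∣ p.choose 2 := by
          have := p_dvd_choose_two (p := p) (j := 1) hp le_rfl (fun h => absurd h hne)
          rwa [pow_one] at this
        exact Dvd.dvd.mul_left this F
      calc s' + t' * (p ^ 2 - nu) ≡ 0 [MOD p] := (Nat.modEq_zero_iff_dvd).mpr h1
        _ ≡ F * p.choose 2 [MOD p] := ((Nat.modEq_zero_iff_dvd).mpr h2).symm
    have hwp : (x * y ^ F) ^ p = 1 := by
      calc (x * y ^ F) ^ p = ((c⁻¹) ^ F) ^ p.choose 2 * (x ^ p * (y ^ F) ^ p) := hpoww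
        _ = (c ^ (F * p.choose 2))⁻¹ * (c ^ s' * c ^ (t' * (p ^ 2 - nu))) := by
            rw [inv_pow, inv_pow, ← pow_mul, hyFp, ← hxpc]
        _ = (c ^ (F * p.choose 2))⁻¹ * c ^ (s' + t' * (p ^ 2 - nu)) := by rw [← pow_add]
        _ = 1 := by rw [hkey, inv_mul_cancel]
    have hword : orderOf (x * y ^ F) ≤ p :=
      Nat.le_of_dvd hp.pos (orderOf_dvd_iff_pow_eq_one.mpr hwp)
    have hnc : (x * y ^ F) * y ≠ y * (x * y ^ F) := hnc_right F
    have hmin := hminsum (x * y ^ F) y hnc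
    rw [hyb] at hmin
    rw [hxa, hyb] at hsum
    have hlt : p < p ^ 2 := by nlinarith
    omega
  subst hpeq2
  -- endgame: x, y have order 4, x² = y² = c, yxy⁻¹ = x⁻¹ : quaternion structure
  have hx4 : x ^ (4:ℕ) = 1 := by
    have h1 := pow_orderOf_eq_one x
    rw [hxa] at h1
    norm_num at h1
    exact h1
  have hy4 : y ^ (4:ℕ) = 1 := by
    have h1 := pow_orderOf_eq_one y
    rw [hyb] at h1
    norm_num at h1
    exact h1
  have hxs' : x ^ (2 * s) = c := by
    have h21 : (2:ℕ) ^ (2-1) = 2 := by norm_num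
    rwa [h21] at hxs
  have hyt' : y ^ (2 * t) = c := by
    have h21 : (2:ℕ) ^ (2-1) = 2 := by norm_num
    rwa [h21] at hyt
  have hxc : x ^ (2:ℕ) = c := by
    obtain ⟨r, hr⟩ : ∃ r, s = 2 * r + 1 := ⟨s / 2, by omega⟩
    calc x ^ (2:ℕ) = (x ^ (4:ℕ)) ^ r * x ^ (2:ℕ) := by rw [hx4, one_pow, one_mul]
      _ = x ^ (4 * r + 2) := by rw [pow_add, pow_mul]
      _ = x ^ (2 * s) := by congr 1; omega
      _ = c := hxs'
  have hyc : y ^ (2:ℕ) = c := by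
    obtain ⟨r, hr⟩ : ∃ r, t = 2 * r + 1 := ⟨t / 2, by omega⟩
    calc y ^ (2:ℕ) = (y ^ (4:ℕ)) ^ r * y ^ (2:ℕ) := by rw [hy4, one_pow, one_mul]
      _ = y ^ (4 * r + 2) := by rw [pow_add, pow_mul]
      _ = y ^ (2 * t) := by congr 1; omega
      _ = c := hyt'
  have REL : y * x = x⁻¹ * y := by
    rw [hrel, ← hxc]; group
  have sj : SemiconjBy y x x⁻¹ := REL
  have SWAP1 : ∀ k : ℤ, y * x ^ k = (x ^ k)⁻¹ * y := by
    intro k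
    have h1 := sj.zpow_right k
    rwa [inv_zpow] at h1
  have hx2z : x ^ (2:ℤ) = c := by
    rw [show (2:ℤ) = ((2:ℕ):ℤ) by norm_num, zpow_natCast, hxc]
  have hy2z : y ^ (2:ℤ) = c := by
    rw [show (2:ℤ) = ((2:ℕ):ℤ) by norm_num, zpow_natCast, hyc]
  have hc2 : c ^ (2:ℤ) = 1 := by
    rw [show (2:ℤ) = ((2:ℕ):ℤ) by norm_num, zpow_natCast, ← hxc, ← pow_mul]
    norm_num
    exact hx4
  have hceven : ∀ r : ℤ, c ^ (2 * r) = 1 := fun r => by rw [zpow_mul, hc2, one_zpow]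
  have hcodd : ∀ r : ℤ, c ^ (2 * r + 1) = c := fun r => by
    rw [zpow_add, hceven, one_mul, zpow_one]
  have hyev : ∀ r : ℤ, y ^ (2 * r) = c ^ r := fun r => by rw [zpow_mul, hy2z]
  have hxev : ∀ r : ℤ, x ^ (2 * r) = c ^ r := fun r => by rw [zpow_mul, hx2z]
  have hswap_even : ∀ (j k : ℤ), Even j → y ^ j * x ^ k = x ^ k * y ^ j := by
    rintro j k ⟨r, hr⟩
    have hj : j = 2 * r := by omega
    rw [hj, hyev r]
    exact (hCx.zpow_zpow r k).eq
  have hswap_odd : ∀ (j k : ℤ), Odd j → y ^ j * x ^ k = (x ^ k)⁻¹ * y ^ j := by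
    rintro j k ⟨r, hr⟩
    have hcomm : c ^ r * (x ^ k)⁻¹ = (x ^ k)⁻¹ * c ^ r :=
      ((hCx.zpow_zpow r k).inv_right).eq
    rw [hr, zpow_add, zpow_one, hyev r]
    calc c ^ r * y * x ^ k = c ^ r * (y * x ^ k) := by group
      _ = c ^ r * ((x ^ k)⁻¹ * y) := by rw [SWAP1 k]
      _ = (c ^ r * (x ^ k)⁻¹) * y := by group
      _ = ((x ^ k)⁻¹ * c ^ r) * y := by rw [hcomm]
      _ = (x ^ k)⁻¹ * (c ^ r * y) := by group
  -- normal form for elements of ⟨x, y⟩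
  have hform : ∀ w ∈ Subgroup.closure ({x, y} : Set Q), ∃ i j : ℤ, w = x ^ i * y ^ j := by
    intro w hw
    induction hw using Subgroup.closure_induction with
    | mem g hg =>
      rcases hg with h | h
      · exact ⟨1, 0, by simp [h]⟩
      · rw [Set.mem_singleton_iff] at h
        exact ⟨0, 1, by simp [h]⟩
    | one => exact ⟨0, 0, by simp⟩
    | mul g h hg hh ihg ihh =>
      obtain ⟨i, j, rfl⟩ := ihg
      obtain ⟨k, l, rfl⟩ := ihh
      rcases Int.even_or_odd j with hj | hj
      · have h1 : y ^ j * x ^ k = x ^ k * y ^ j := hswap_even j k hj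
        refine ⟨i + k, j + l, ?_⟩
        rw [zpow_add, zpow_add]
        calc x ^ i * y ^ j * (x ^ k * y ^ l) = x ^ i * (y ^ j * x ^ k) * y ^ l := by group
          _ = x ^ i * (x ^ k * y ^ j) * y ^ l := by rw [h1]
          _ = x ^ i * x ^ k * (y ^ j * y ^ l) := by group
      · have h1 : y ^ j * x ^ k = (x ^ k)⁻¹ * y ^ j := hswap_odd j k hj
        refine ⟨i - k, j + l, ?_⟩
        rw [zpow_sub, zpow_add]
        calc x ^ i * y ^ j * (x ^ k * y ^ l) = x ^ i * (y ^ j * x ^ k) * y ^ l := by group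
          _ = x ^ i * ((x ^ k)⁻¹ * y ^ j) * y ^ l := by rw [h1]
          _ = x ^ i * (x ^ k)⁻¹ * (y ^ j * y ^ l) := by group
    | inv g hg ihg =>
      obtain ⟨i, j, rfl⟩ := ihg
      rcases Int.even_or_odd j with hj | hj
      · have h1 : y ^ (-j) * x ^ (-i) = x ^ (-i) * y ^ (-j) := hswap_even _ _ hj.neg
        refine ⟨-i, -j, ?_⟩
        rw [mul_inv_rev, ← zpow_neg, ← zpow_neg, h1]
      · have h1 : y ^ (-j) * x ^ (-i) = (x ^ (-i))⁻¹ * y ^ (-j) := hswap_odd _ _ hj.neg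
        refine ⟨i, -j, ?_⟩
        rw [mul_inv_rev, ← zpow_neg, ← zpow_neg, h1, zpow_neg, inv_inv]
  -- every nontrivial element of ⟨x,y⟩ has c among its powers
  have hkey : ∀ w ∈ Subgroup.closure ({x, y} : Set Q),
      w = 1 ∨ c ∈ Subgroup.zpowers w := by
    intro w hw
    obtain ⟨i, j, rfl⟩ := hform w hw
    rcases Int.even_or_odd j with hj | hj
    · obtain ⟨r, hr⟩ := hj
      have hj2 : j = 2 * r := by omega
      have hw2 : x ^ i * y ^ j = x ^ (i + 2 * r) := by
        rw [hj2, hyev r, ← hxev r, ← zpow_add]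
      set e := i + 2 * r with he
      rcases Int.even_or_odd e with he2 | he2
      · obtain ⟨r2, hr2⟩ := he2
        have her : e = 2 * r2 := by omega
        have hwc : x ^ i * y ^ j = c ^ r2 := by rw [hw2, her, hxev]
        rcases Int.even_or_odd r2 with hr3 | hr3
        · left
          obtain ⟨r3, hr3'⟩ := hr3
          rw [hwc, show r2 = 2 * r3 by omega, hceven]
        · right
          obtain ⟨r3, hr3'⟩ := hr3
          rw [hwc, show r2 = 2 * r3 + 1 from hr3', hcodd]
          exact Subgroup.mem_zpowers c
      · right
        obtain ⟨r2, hr2⟩ := he2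
        have h2 : (x ^ i * y ^ j) ^ (2:ℤ) = c := by
          rw [hw2, ← zpow_mul, mul_comm e 2, hxev e, hr2, hcodd]
        exact Subgroup.mem_zpowers_iff.mpr ⟨2, h2⟩
    · right
      have h1 : y ^ j * x ^ i = (x ^ i)⁻¹ * y ^ j := hswap_odd j i hj
      obtain ⟨r, hr⟩ := hj
      have h2 : (x ^ i * y ^ j) ^ (2:ℤ) = c := by
        have h3 : (x ^ i * y ^ j) * (x ^ i * y ^ j) = y ^ (2 * j) := by
          calc (x ^ i * y ^ j) * (x ^ i * y ^ j)
              = x ^ i * (y ^ j * x ^ i) * y ^ j := by group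
            _ = x ^ i * ((x ^ i)⁻¹ * y ^ j) * y ^ j := by rw [h1]
            _ = y ^ j * y ^ j := by group
            _ = y ^ (2 * j) := by rw [← zpow_add]; congr 1; ring
        rw [show (2:ℤ) = 1 + 1 by norm_num, zpow_add, zpow_one, h3, hyev j, hr, hcodd]
      exact Subgroup.mem_zpowers_iff.mpr ⟨2, h2⟩
  -- assemble the configuration
  refine ⟨Subgroup.zpowers c, Subgroup.zpowers x, Subgroup.zpowers y,
    Subgroup.closure ({x, y} : Set Q), ?_, ?_, ?_, ?_, ?_, ?_⟩
  · simpa [Subgroup.zpowers_eq_bot] using hc1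
  · exact Subgroup.zpowers_le.mpr (Subgroup.subset_closure (by simp))
  · exact Subgroup.zpowers_le.mpr (Subgroup.subset_closure (by simp))
  · intro h
    exact hxy ((commute_of_mem_zpowers (h (Subgroup.mem_zpowers x))).eq).symm
  · intro h
    exact hxy (commute_of_mem_zpowers (h (Subgroup.mem_zpowers y))).eq
  · intro S hS
    rcases eq_or_ne S ⊥ with h | h
    · exact Or.inl h
    · refine Or.inr ?_
      obtain ⟨g, hgS, hg1⟩ : ∃ g ∈ S, g ≠ 1 := by
        obtain ⟨⟨g, hg⟩, h1⟩ := Subgroup.ne_bot_iff_exists_ne_one.mp h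
        exact ⟨g, hg, by simpa using h1⟩
      rcases hkey g (hS hgS) with h1 | h1
      · exact absurd h1 hg1
      · have hcS : c ∈ S := (Subgroup.zpowers_le.mpr hgS) h1
        exact Subgroup.zpowers_le.mpr hcS

end Dedekind2

section Main

variable {G : Type*} [Group G]

/-- Subgroups containing the commutator subgroup are normal. -/
lemma normal_of_commutator_le' {H : Subgroup G} (hH : commutator G ≤ H) : H.Normal := by
  constructor
  intro n hn g
  have h1 : ⁅g, n⁆ ∈ commutator G :=
    Subgroup.commutator_mem_commutator (Subgroup.mem_top g) (Subgroup.mem_top n)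
  have h2 : g * n * g⁻¹ = ⁅g, n⁆ * n := by rw [commutatorElement_def]; group
  rw [h2]
  exact H.mul_mem (hH h1) hn

lemma eliso_norm (f : Subgroup G → Subgroup G) (hf : IsELIso f) :
    ∀ H : Subgroup G, H.Normal → (f H).Normal := by
  intro H hH
  haveI := hH
  have h1 : f H.normalCore = (f H).normalCore := hf.2.1 H
  rw [Subgroup.normalCore_eq_self] at h1
  rw [h1]
  exact Subgroup.normalCore_normal _

lemma eliso_norm_rev (f : Subgroup G → Subgroup G) (hf : IsELIso f) :
    ∀ H : Subgroup G, (f H).Normal → H.Normal := by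
  intro H hfH
  haveI := hfH
  have h1 := hf.2.1 H
  rw [Subgroup.normalCore_eq_self (f H)] at h1
  have h2 := hf.1.1 h1
  rw [← h2]
  exact Subgroup.normalCore_normal H

lemma eliso_mono (f : Subgroup G → Subgroup G) (hf : IsELIso f) :
    ∀ H K : Subgroup G, H.Normal → (H ≤ K ↔ f H ≤ f K) := by
  intro H K hH
  haveI := hH
  constructor
  · intro hHK
    have h1 : H ≤ K.normalCore := Subgroup.normal_le_normalCore.mpr hHK
    have h2 : H.normalCore ⊓ K.normalCore = H := by
      rw [Subgroup.normalCore_eq_self]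
      exact inf_eq_left.mpr h1
    have h3 := hf.2.2.1 H K
    rw [h2] at h3
    calc f H = (f H).normalCore ⊓ (f K).normalCore := h3
      _ ≤ (f K).normalCore := inf_le_right
      _ ≤ f K := Subgroup.normalCore_le _
  · intro hfHK
    haveI hfH : (f H).Normal := eliso_norm f hf H hH
    have h1 : f H ≤ (f K).normalCore := Subgroup.normal_le_normalCore.mpr hfHK
    have h2 : (f H).normalCore ⊓ (f K).normalCore = f H := by
      rw [Subgroup.normalCore_eq_self]
      exact inf_eq_left.mpr h1
    have h3 := hf.2.2.1 H K
    rw [h2] at h3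
    have h4 := hf.1.1 h3
    rw [Subgroup.normalCore_eq_self] at h4
    calc H = H ⊓ K.normalCore := h4.symm
      _ ≤ K.normalCore := inf_le_right
      _ ≤ K := Subgroup.normalCore_le K

lemma eliso_symm (f : Subgroup G → Subgroup G) (hf : IsELIso f) :
    IsELIso (⇑(Equiv.ofBijective f hf.1).symm) := by
  obtain ⟨hbij, hcore, hinf, hsup⟩ := hf
  set e := Equiv.ofBijective f hbij with he
  refine ⟨e.symm.bijective, ?_, ?_, ?_⟩
  · intro H
    have hfK : f (e.symm H) = H := e.apply_symm_apply H
    have h1 := hcore (e.symm H)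
    rw [hfK] at h1
    calc e.symm H.normalCore = e.symm (f ((e.symm H).normalCore)) := by rw [h1]
      _ = (e.symm H).normalCore := e.symm_apply_apply _
  · intro H K
    have hH : f (e.symm H) = H := e.apply_symm_apply H
    have hK : f (e.symm K) = K := e.apply_symm_apply K
    have h1 := hinf (e.symm H) (e.symm K)
    rw [hH, hK] at h1
    calc e.symm (H.normalCore ⊓ K.normalCore)
        = e.symm (f ((e.symm H).normalCore ⊓ (e.symm K).normalCore)) := by rw [h1]
      _ = (e.symm H).normalCore ⊓ (e.symm K).normalCore := e.symm_apply_apply _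
  · intro H K
    have hH : f (e.symm H) = H := e.apply_symm_apply H
    have hK : f (e.symm K) = K := e.apply_symm_apply K
    have h1 := hsup (e.symm H) (e.symm K)
    rw [hH, hK] at h1
    calc e.symm (H.normalCore ⊔ K.normalCore)
        = e.symm (f ((e.symm H).normalCore ⊔ (e.symm K).normalCore)) := by rw [h1]
      _ = (e.symm H).normalCore ⊔ (e.symm K).normalCore := e.symm_apply_apply _

set_option maxHeartbeats 1000000 in
lemma eliso_le (hstar : CondStar G) (f : Subgroup G → Subgroup G) (hf : IsELIso f) :
    commutator G ≤ f (commutator G) := by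
  obtain ⟨hbij, hcore, hinf, hsup⟩ := id hf
  haveI hDnorm : (commutator G).Normal := normal_of_commutator_le' le_rfl
  set e := Equiv.ofBijective f hbij with he
  set N := f (commutator G) with hN
  haveI hNnorm : N.Normal := eliso_norm f hf _ hDnorm
  have hNded : ∀ K : Subgroup G, N ≤ K → K.Normal := by
    intro K hNK
    obtain ⟨H, rfl⟩ := hbij.2 K
    have hDH : commutator G ≤ H := (eliso_mono f hf _ _ hDnorm).mpr hNK
    exact eliso_norm f hf H (normal_of_commutator_le' hDH)
  set π := QuotientGroup.mk' N with hπ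
  have hπsurj : Function.Surjective π := QuotientGroup.mk'_surjective N
  have hNle : ∀ S : Subgroup (G ⧸ N), N ≤ S.comap π := by
    intro S g hg
    have h1 : π g = 1 := by
      have h2 : g ∈ π.ker := by rw [hπ, QuotientGroup.ker_mk']; exact hg
      exact h2
    show π g ∈ S
    rw [h1]
    exact S.one_mem
  have hQded : ∀ S : Subgroup (G ⧸ N), S.Normal := by
    intro S
    have h2 : (S.comap π).Normal := hNded _ (hNle S)
    have h3 : S = (S.comap π).map π := (Subgroup.map_comap_eq_self_of_surjective hπsurj S).symm
    rw [h3]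
    exact h2.map π hπsurj
  by_cases hcomm : ∀ g h : G, ⁅g, h⁆ ∈ N
  · rw [commutator_def]
    exact Subgroup.commutator_le.mpr (fun g _ h _ => hcomm g h)
  exfalso
  push_neg at hcomm
  obtain ⟨g, h, hgh⟩ := hcomm
  have hnc : (π g) * (π h) ≠ (π h) * (π g) := by
    intro hc
    apply hgh
    have h1 : ⁅π g, π h⁆ = 1 := commutatorElement_eq_one_iff_mul_comm.mpr hc
    rw [← map_commutatorElement] at h1
    exact (QuotientGroup.eq_one_iff _).mp h1
  obtain ⟨p, hp, hpg⟩ := hstar N ⟨hQded, fun hall => hnc (hall _ _)⟩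
  obtain ⟨Z, X, Y, W, hZ, hXW, hYW, hXY, hYX, hS⟩ :=
    dedekind_pgroup_config hQded hp hpg hnc
  set ρ := QuotientGroup.mk' (commutator G) with hρ
  have hρsurj : Function.Surjective ρ := QuotientGroup.mk'_surjective _
  set T : Subgroup (G ⧸ N) → Subgroup (G ⧸ commutator G) :=
    fun S => Subgroup.map ρ (e.symm (S.comap π)) with hT
  have hcomap_iff : ∀ S₁ S₂ : Subgroup (G ⧸ N), S₁ ≤ S₂ ↔ S₁.comap π ≤ S₂.comap π := by
    intro S₁ S₂
    constructor
    · exact fun h1 => Subgroup.comap_mono h1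
    · intro h1
      calc S₁ = (S₁.comap π).map π := (Subgroup.map_comap_eq_self_of_surjective hπsurj S₁).symm
        _ ≤ (S₂.comap π).map π := Subgroup.map_mono h1
        _ = S₂ := Subgroup.map_comap_eq_self_of_surjective hπsurj S₂
  have hesymm_facts : ∀ K : Subgroup G, N ≤ K →
      (commutator G ≤ e.symm K ∧ (e.symm K).Normal) := by
    intro K hNK
    have hfK : f (e.symm K) = K := e.apply_symm_apply K
    constructor
    · apply (eliso_mono f hf (commutator G) (e.symm K) hDnorm).mpr
      rw [hfK]
      exact hNK
    · exact eliso_norm_rev f hf _ (by rw [hfK]; exact hNded K hNK)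
  have hesymm_iff : ∀ K₁ K₂ : Subgroup G, N ≤ K₁ → N ≤ K₂ →
      (K₁ ≤ K₂ ↔ e.symm K₁ ≤ e.symm K₂) := by
    intro K₁ K₂ h1 h2
    have hfK₁ : f (e.symm K₁) = K₁ := e.apply_symm_apply K₁
    have hfK₂ : f (e.symm K₂) = K₂ := e.apply_symm_apply K₂
    have h3 := eliso_mono f hf (e.symm K₁) (e.symm K₂) (hesymm_facts K₁ h1).2
    rw [hfK₁, hfK₂] at h3
    exact h3.symm
  have hmap_iff : ∀ H₁ H₂ : Subgroup G, commutator G ≤ H₁ → commutator G ≤ H₂ →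
      (H₁ ≤ H₂ ↔ H₁.map ρ ≤ H₂.map ρ) := by
    intro H₁ H₂ hD1 hD2
    constructor
    · exact fun h1 => Subgroup.map_mono h1
    · intro h1
      have hker1 : ρ.ker ≤ H₁ := by rw [hρ, QuotientGroup.ker_mk']; exact hD1
      have hker2 : ρ.ker ≤ H₂ := by rw [hρ, QuotientGroup.ker_mk']; exact hD2
      calc H₁ = (H₁.map ρ).comap ρ := (Subgroup.comap_map_eq_self hker1).symm
        _ ≤ (H₂.map ρ).comap ρ := Subgroup.comap_mono h1
        _ = H₂ := Subgroup.comap_map_eq_self hker2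
  have hT_le : ∀ S₁ S₂ : Subgroup (G ⧸ N), S₁ ≤ S₂ ↔ T S₁ ≤ T S₂ := by
    intro S₁ S₂
    rw [hcomap_iff, hesymm_iff _ _ (hNle S₁) (hNle S₂),
      hmap_iff _ _ (hesymm_facts _ (hNle S₁)).1 (hesymm_facts _ (hNle S₂)).1]
  have hT_bot : T ⊥ = ⊥ := by
    show Subgroup.map ρ (e.symm ((⊥ : Subgroup (G ⧸ N)).comap π)) = ⊥
    have h1 : (⊥ : Subgroup (G ⧸ N)).comap π = N := by
      rw [π.comap_bot, hπ, QuotientGroup.ker_mk']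
    rw [h1]
    have h2 : e.symm N = commutator G := by
      rw [hN]
      exact e.symm_apply_apply (commutator G)
    rw [h2, Subgroup.map_eq_bot_iff, hρ, QuotientGroup.ker_mk']
  have hT_surj : ∀ S' : Subgroup (G ⧸ commutator G), ∃ S, T S = S' := by
    intro S'
    set H := S'.comap ρ with hH
    have hDH : commutator G ≤ H := by
      intro z hz
      have h1 : ρ z = 1 := by
        have h2 : z ∈ ρ.ker := by rw [hρ, QuotientGroup.ker_mk']; exact hz
        exact h2
      show ρ z ∈ S'
      rw [h1]
      exact S'.one_mem
    have hNfH : N ≤ f H := (eliso_mono f hf _ _ hDnorm).mp hDH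
    refine ⟨(f H).map π, ?_⟩
    show Subgroup.map ρ (e.symm (((f H).map π).comap π)) = S'
    have h1 : ((f H).map π).comap π = f H := by
      apply Subgroup.comap_map_eq_self
      rw [hπ, QuotientGroup.ker_mk']
      exact hNfH
    rw [h1]
    have h2 : e.symm (f H) = H := e.symm_apply_apply H
    rw [h2]
    exact Subgroup.map_comap_eq_self_of_surjective hρsurj S'
  have hA : ∀ u v : G ⧸ commutator G, u * v = v * u := by
    intro u v
    obtain ⟨g1, rfl⟩ := hρsurj u
    obtain ⟨g2, rfl⟩ := hρsurj v
    have h1 : ⁅ρ g1, ρ g2⁆ = 1 := by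
      rw [← map_commutatorElement]
      exact (QuotientGroup.eq_one_iff _).mpr
        (Subgroup.commutator_mem_commutator (Subgroup.mem_top g1) (Subgroup.mem_top g2))
    exact commutatorElement_eq_one_iff_mul_comm.mp h1
  apply abelian_contra hA (T Z) (T X) (T Y) (T W)
  · intro hTZ
    apply hZ
    have h1 : Z ≤ ⊥ := (hT_le Z ⊥).mpr (by rw [hT_bot]; exact le_of_eq hTZ)
    exact le_bot_iff.mp h1
  · exact (hT_le X W).mp hXW
  · exact (hT_le Y W).mp hYW
  · intro hc; exact hXY ((hT_le X Y).mpr hc)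
  · intro hc; exact hYX ((hT_le Y X).mpr hc)
  · intro S' hS'le
    obtain ⟨S, rfl⟩ := hT_surj S'
    have hSW : S ≤ W := (hT_le S W).mpr hS'le
    rcases hS S hSW with h1 | h1
    · left; rw [h1, hT_bot]
    · right; exact (hT_le Z S).mp h1

theorem eliso_fixes_commutator' {G : Type*} [Group G] (hstar : CondStar G)
    (f : Subgroup G → Subgroup G) (hf : IsELIso f) :
    f (commutator G) = commutator G := by
  haveI hDnorm : (commutator G).Normal := normal_of_commutator_le' le_rfl
  have h1 := eliso_le hstar f hf
  set e := Equiv.ofBijective f hf.1 with he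
  have h2 := eliso_le hstar _ (eliso_symm f hf)
  have h3 : f (commutator G) ≤ f (e.symm (commutator G)) :=
    (eliso_mono f hf _ _ hDnorm).mp h2
  have h4 : f (e.symm (commutator G)) = commutator G := e.apply_symm_apply _
  rw [h4] at h3
  exact le_antisymm h3 h1

end Main


/-- Corollary (2.2): if `G` satisfies the condition (*) and `f` is an ℰL-automorphism of
`G`, then the derived subgroup `D(G)` is a fixed point of `f`. -/
theorem eliso_fixes_commutator {G : Type*} [Group G] (hstar : CondStar G)
    (f : Subgroup G → Subgroup G) (hf : IsELIso f) :
    f (commutator G) = commutator G := by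
  exact eliso_fixes_commutator' hstar f hf
end
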